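/- arXiv:1805.07564 — 6 statements merged into one kernel-verified Lean document; each statement's English description precedes it below -/
import Mathlib

section
/- For every prime number n ≥ 3 there exist a proper edge-colouring of the complete graph K_n using n colours and a partition of the edge set of K_n into (n−1)/2 rainbow Hamiltonian cycles. -/
theorem key_lemma (p : ℕ) (hp : p.Prime) (h3 : 3 ≤ p) [NeZero p] :
    ∃ (c : Sym2 (ZMod p) → ZMod p) (σ : Fin ((p - 1) / 2) → Equiv.Perm (ZMod p)),
      (∀ e f : Sym2 (ZMod p), ¬e.IsDiag → ¬f.IsDiag → e ≠ f →
        (∃ v, v ∈ e ∧ v ∈ f) → c e ≠ c f) ∧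
      (∀ k, (σ k).IsCycle ∧ (σ k).support = Finset.univ) ∧
      (∀ k, Function.Injective (fun i => c s(i, σ k i))) ∧
      (∀ e : Sym2 (ZMod p), ¬e.IsDiag → ∃! k, ∃ i, s(i, σ k i) = e) := by
  haveI : Fact p.Prime := ⟨hp⟩
  have hodd : p % 2 = 1 := by
    rcases Nat.Prime.eq_two_or_odd hp with h | h
    · omega
    · exact h
  -- the difference used by cycle `k`
  set d : Fin ((p - 1) / 2) → ZMod p := fun k => ((k : ℕ) + 1 : ℕ) with hd
  have hdval : ∀ k, (d k).val = (k : ℕ) + 1 := by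
    intro k
    have hk := k.2
    exact ZMod.val_natCast_of_lt (by omega)
  have hdne : ∀ k, d k ≠ 0 := by
    intro k h
    have := (ZMod.natCast_eq_zero_iff _ _).mp h
    have := Nat.le_of_dvd (by omega) this
    have hk := k.2
    omega
  set c : Sym2 (ZMod p) → ZMod p :=
    Sym2.lift ⟨fun i j => i + j, fun i j => add_comm i j⟩ with hc
  have hcmk : ∀ i j : ZMod p, c s(i, j) = i + j := fun i j => rfl
  set σ : Fin ((p - 1) / 2) → Equiv.Perm (ZMod p) :=
    fun k => Equiv.addRight (d k) with hσ
  have hσa : ∀ k x, σ k x = x + d k := fun k x => rfl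
  have h2 : (2 : ZMod p) ≠ 0 := by
    have : ((2 : ℕ) : ZMod p) ≠ 0 := by
      intro h
      have := (ZMod.natCast_eq_zero_iff _ _).mp h
      have := Nat.le_of_dvd (by omega) this
      omega
    simpa using this
  refine ⟨c, σ, ?_, ?_, ?_, ?_⟩
  · -- proper colouring
    intro e f he hf hef ⟨v, hve, hvf⟩ hcc
    have h1 : s(v, Sym2.Mem.other hve) = e := Sym2.other_spec hve
    have h2' : s(v, Sym2.Mem.other hvf) = f := Sym2.other_spec hvf
    rw [← h1, ← h2', hcmk, hcmk] at hcc
    have : Sym2.Mem.other hve = Sym2.Mem.other hvf := by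
      exact add_left_cancel hcc
    exact hef (h1 ▸ h2' ▸ (by rw [this]))
  · -- Hamiltonian cycles
    intro k
    constructor
    · refine ⟨0, ?_, ?_⟩
      · simp only [hσa]
        simpa using hdne k
      · intro y hy
        refine ⟨((y * (d k)⁻¹).val : ℤ), ?_⟩
        have : (σ k) ^ ((y * (d k)⁻¹).val : ℤ) = Equiv.addRight (((y * (d k)⁻¹).val : ℤ) • d k) := by
          simp [hσ]
        rw [this]
        show 0 + ((y * (d k)⁻¹).val : ℤ) • d k = y
        rw [zero_add, zsmul_eq_mul]
        push_cast
        rw [ZMod.natCast_val, ZMod.cast_id]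
        rw [mul_assoc, inv_mul_cancel₀ (hdne k), mul_one]
    · apply Finset.eq_univ_iff_forall.mpr
      intro x
      simp only [Equiv.Perm.mem_support, hσa]
      intro h
      exact hdne k (by simpa using h)
  · -- rainbow
    intro k a b hab
    simp only [hcmk, hσa] at hab
    have : 2 * a = 2 * b := by ring_nf; ring_nf at hab; linear_combination hab
    exact mul_left_cancel₀ h2 this
  · -- decomposition
    intro e he
    induction e with
    | _ a b =>
      have hab : a ≠ b := fun h => he (Sym2.mk_isDiag_iff.mpr h)
      have hdiff : b - a ≠ 0 := sub_ne_zero_of_ne (Ne.symm hab)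
      set u := (b - a).val with hu
      have hu0 : u ≠ 0 := fun h => hdiff (by rwa [← ZMod.val_eq_zero])
      have hup : u < p := ZMod.val_lt _
      have hcast : ((u : ℕ) : ZMod p) = b - a := by
        rw [hu]; exact ZMod.natCast_rightInverse _
      have hcast' : ((p - u : ℕ) : ZMod p) = a - b := by
        push_cast [Nat.cast_sub (le_of_lt hup)]
        simp [hcast, ZMod.natCast_self]
      -- membership characterization
      have hmem : ∀ (k : Fin ((p-1)/2)) (i : ZMod p), s(i, σ k i) = s(a, b) →
          d k = b - a ∨ d k = a - b := by
        intro k i h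
        rw [hσa, Sym2.mk_eq_mk_iff (p := (i, i + d k)) (q := (a, b))] at h
        rcases h with h | h
        · left
          have h1 : i = a := (Prod.mk.injEq _ _ _ _ ▸ h).1
          have h2 : i + d k = b := (Prod.mk.injEq _ _ _ _ ▸ h).2
          rw [h1] at h2; linear_combination h2
        · right
          have h1 : i = b := (Prod.mk.injEq _ _ _ _ ▸ h).1
          have h2 : i + d k = a := (Prod.mk.injEq _ _ _ _ ▸ h).2
          rw [h1] at h2; linear_combination h2
      have huniq : ∀ k1 k2 : Fin ((p-1)/2),
          (d k1 = b - a ∨ d k1 = a - b) → (d k2 = b - a ∨ d k2 = a - b) → k1 = k2 := by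
        intro k1 k2 h1 h2
        have hk1 := k1.2
        have hk2 := k2.2
        have same : ∀ kx ky : Fin ((p-1)/2), d kx = d ky → kx = ky := by
          intro kx ky h
          have : (d kx).val = (d ky).val := by rw [h]
          rw [hdval, hdval] at this
          exact Fin.ext (by omega)
        have opp : ∀ kx ky : Fin ((p-1)/2), d kx = - d ky → False := by
          intro kx ky h
          have hs : d kx + d ky = 0 := by rw [h]; ring
          have : ((((kx:ℕ)+1) + ((ky:ℕ)+1) : ℕ) : ZMod p) = 0 := by
            push_cast
            simpa [hd] using hs
          have hdvd := (ZMod.natCast_eq_zero_iff _ _).mp this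
          have := Nat.le_of_dvd (by omega) hdvd
          have hkx := kx.2
          have hky := ky.2
          omega
        rcases h1 with h1 | h1 <;> rcases h2 with h2 | h2
        · exact same _ _ (by rw [h1, h2])
        · exact (opp k1 k2 (by rw [h1, h2]; ring)).elim
        · exact (opp k1 k2 (by rw [h1, h2]; ring)).elim
        · exact same _ _ (by rw [h1, h2])
      by_cases hcase : u ≤ (p - 1) / 2
      · refine ⟨⟨u - 1, by omega⟩, ⟨a, ?_⟩, ?_⟩
        · rw [hσa]
          have : d ⟨u - 1, by omega⟩ = b - a := by
            rw [hd]; simp only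
            rw [show (u - 1) + 1 = u by omega, hcast]
          rw [this]
          congr 1
          ring
        · intro k' ⟨i, hi⟩
          exact huniq k' _ (hmem k' i hi) (Or.inl (by
            rw [hd]; simp only
            rw [show (u - 1) + 1 = u by omega, hcast]))
      · refine ⟨⟨p - u - 1, by omega⟩, ⟨b, ?_⟩, ?_⟩
        · rw [hσa]
          have : d ⟨p - u - 1, by omega⟩ = a - b := by
            rw [hd]; simp only
            rw [show (p - u - 1) + 1 = p - u by omega, hcast']
          rw [this, Sym2.eq_swap]
          congr 1
          ring
        · intro k' ⟨i, hi⟩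
          exact huniq k' _ (hmem k' i hi) (Or.inr (by
            rw [hd]; simp only
            rw [show (p - u - 1) + 1 = p - u by omega, hcast']))

/-- For every prime `n ≥ 3` there is a proper edge-colouring of `K_n` with `n`
colours and a decomposition of the edge set of `K_n` into `(n-1)/2` rainbow Hamiltonian cycles
(encoded as `n`-cycle permutations; every non-loop edge lies on exactly one of the cycles). -/
theorem statement_8 :
    ∀ n : ℕ, n.Prime → 3 ≤ n →
      ∃ (c : Sym2 (Fin n) → Fin n) (σ : Fin ((n - 1) / 2) → Equiv.Perm (Fin n)),
        (∀ e f : Sym2 (Fin n), ¬e.IsDiag → ¬f.IsDiag → e ≠ f →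
          (∃ v, v ∈ e ∧ v ∈ f) → c e ≠ c f) ∧
        (∀ k, (σ k).IsCycle ∧ (σ k).support = Finset.univ) ∧
        (∀ k, Function.Injective (fun i => c s(i, σ k i))) ∧
        (∀ e : Sym2 (Fin n), ¬e.IsDiag → ∃! k, ∃ i, s(i, σ k i) = e) := by
  intro n hp hn
  obtain ⟨m, rfl⟩ : ∃ m, n = m + 1 := ⟨n - 1, by omega⟩
  exact key_lemma (m + 1) hp hn
end

section
/- Let n, t be positive integers and p a real number with t ≥ pn, pt ≥ 1 and 0 < p ≤ 1/2. Let G be a properly edge-coloured balanced bipartite graph on 2n vertices (both parts of size n) with minimum degree δ(G) ≥ t, and let M_1, …, M_t be pairwise edge-disjoint rainbow matchings in G with e(M_i) ≥ (1−p³)n for every i. Then G contains pairwise edge-disjoint rainbow matchings M′_1, …, M′_m with m = ⌊(1−p)t⌋, such that e(M′_i) ≥ (1−10p)n for every i and the union M′_1 ∪ ⋯ ∪ M′_m has minimum degree at least (1−101p)t. -/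
/-- Degree of a vertex `x` of the first part in a bipartite graph given as a set of pairs. -/
def bdegX {n : ℕ} (G : Finset (Fin n × Fin n)) (x : Fin n) : ℕ :=
  (G.filter (fun e => e.1 = x)).card

/-- Degree of a vertex `y` of the second part in a bipartite graph given as a set of pairs. -/
def bdegY {n : ℕ} (G : Finset (Fin n × Fin n)) (y : Fin n) : ℕ :=
  (G.filter (fun e => e.2 = y)).card

/-- A set of pairs is a matching if distinct edges share no endpoint. -/
def IsBipMatching {n : ℕ} (M : Finset (Fin n × Fin n)) : Prop :=
  ∀ e ∈ M, ∀ f ∈ M, e ≠ f → e.1 ≠ f.1 ∧ e.2 ≠ f.2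

/-- A colouring is proper on `G` if edges of `G` sharing an endpoint get distinct colours. -/
def ProperBipColouring {n : ℕ} (G : Finset (Fin n × Fin n)) (c : Fin n × Fin n → ℕ) : Prop :=
  ∀ e ∈ G, ∀ f ∈ G, e ≠ f → e.1 = f.1 ∨ e.2 = f.2 → c e ≠ c f

namespace S9

open Finset

variable {n : ℕ}

/-- `v` (left side) is missed by `M`. -/
abbrev missX (M : Finset (Fin n × Fin n)) (v : Fin n) : Prop := ∀ e ∈ M, e.1 ≠ v
abbrev missY (M : Finset (Fin n × Fin n)) (v : Fin n) : Prop := ∀ e ∈ M, e.2 ≠ v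

/-- conflict set: edges of `Mi` clashing (vertex or colour) with some edge of `Ai`. -/
def Cset (c : Fin n × Fin n → ℕ) (Mi Ai : Finset (Fin n × Fin n)) : Finset (Fin n × Fin n) :=
  Mi.filter (fun f => ∃ a ∈ Ai, f.1 = a.1 ∨ f.2 = a.2 ∨ c f = c a)

lemma Cset_subset (c : Fin n × Fin n → ℕ) (Mi Ai : Finset (Fin n × Fin n)) :
    Cset c Mi Ai ⊆ Mi := filter_subset _ _

lemma Cset_insert (c : Fin n × Fin n → ℕ) (Mi Ai : Finset (Fin n × Fin n)) (a : Fin n × Fin n) :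
    Cset c Mi (insert a Ai) =
      Cset c Mi Ai ∪ Mi.filter (fun f => f.1 = a.1 ∨ f.2 = a.2 ∨ c f = c a) := by
  ext f
  simp only [Cset, mem_filter, mem_union, mem_insert]
  constructor
  · rintro ⟨hf, b, (rfl | hb), h⟩
    · exact Or.inr ⟨hf, h⟩
    · exact Or.inl ⟨hf, b, hb, h⟩
  · rintro (⟨hf, b, hb, h⟩ | ⟨hf, h⟩)
    · exact ⟨hf, b, Or.inr hb, h⟩
    · exact ⟨hf, a, Or.inl rfl, h⟩

section ctx

variable {m : ℕ} (c : Fin n × Fin n → ℕ) (Mk : Fin m → Finset (Fin n × Fin n))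

/-- number of (kept) matchings in which `v` gets harmed by the modification `A`. -/
def dX (A : Fin m → Finset (Fin n × Fin n)) (v : Fin n) : ℕ :=
  (Finset.univ.filter (fun i => ∃ f ∈ Cset c (Mk i) (A i), f.1 = v)).card

def dY (A : Fin m → Finset (Fin n × Fin n)) (v : Fin n) : ℕ :=
  (Finset.univ.filter (fun i => ∃ f ∈ Cset c (Mk i) (A i), f.2 = v)).card

/-- number of kept matchings missing `v`. -/
def uncX (v : Fin n) : ℕ := (Finset.univ.filter (fun i => missX (Mk i) v)).card
def uncY (v : Fin n) : ℕ := (Finset.univ.filter (fun i => missY (Mk i) v)).card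

end ctx

/-- a matching has at most one edge at a left vertex. -/
lemma card_filter_fst_le_one {M : Finset (Fin n × Fin n)} (hM : IsBipMatching M) (v : Fin n) :
    (M.filter (fun e => e.1 = v)).card ≤ 1 := by
  refine card_le_one.2 ?_
  intro e he f hf
  simp only [mem_filter] at he hf
  by_contra hne
  exact ((hM e he.1 f hf.1 hne).1 (he.2.trans hf.2.symm)).elim

lemma card_filter_snd_le_one {M : Finset (Fin n × Fin n)} (hM : IsBipMatching M) (v : Fin n) :
    (M.filter (fun e => e.2 = v)).card ≤ 1 := by
  refine card_le_one.2 ?_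
  intro e he f hf
  simp only [mem_filter] at he hf
  by_contra hne
  exact ((hM e he.1 f hf.1 hne).2 (he.2.trans hf.2.symm)).elim

lemma card_filter_colour_le_one {M : Finset (Fin n × Fin n)} {c : Fin n × Fin n → ℕ}
    (hM : Set.InjOn c ↑M) (k : ℕ) : (M.filter (fun e => c e = k)).card ≤ 1 := by
  refine card_le_one.2 ?_
  intro e he f hf
  simp only [mem_filter] at he hf
  exact hM he.1 hf.1 (he.2.trans hf.2.symm)

/-- the number of left vertices covered by a matching equals its size. -/
lemma matching_card_covered {M : Finset (Fin n × Fin n)} (hM : IsBipMatching M) :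
    (Finset.univ.filter (fun v : Fin n => ¬ missX M v)).card = M.card := by
  have h1 : Finset.univ.filter (fun v : Fin n => ¬ missX M v) = M.image Prod.fst := by
    ext v
    simp only [mem_filter, mem_univ, true_and, mem_image, missX, not_forall]
    constructor
    · rintro ⟨e, he, hne⟩; exact ⟨e, he, by simpa using hne⟩
    · rintro ⟨e, he, rfl⟩; exact ⟨e, he, by simp⟩
  rw [h1, card_image_of_injOn (fun e he f hf hne => by
    by_contra h; exact (hM e he f hf h).1 hne)]

lemma matching_card_covered_snd {M : Finset (Fin n × Fin n)} (hM : IsBipMatching M) :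
    (Finset.univ.filter (fun v : Fin n => ¬ missY M v)).card = M.card := by
  have h1 : Finset.univ.filter (fun v : Fin n => ¬ missY M v) = M.image Prod.snd := by
    ext v
    simp only [mem_filter, mem_univ, true_and, mem_image, missY, not_forall]
    constructor
    · rintro ⟨e, he, hne⟩; exact ⟨e, he, by simpa using hne⟩
    · rintro ⟨e, he, rfl⟩; exact ⟨e, he, by simp⟩
  rw [h1, card_image_of_injOn (fun e he f hf hne => by
    by_contra h; exact (hM e he f hf h).2 hne)]


/-! ### Context -/

structure Ctx (n m t : ℕ) (p : ℝ) (G : Finset (Fin n × Fin n)) (c : Fin n × Fin n → ℕ)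
    (Mk : Fin m → Finset (Fin n × Fin n)) : Prop where
  hn : 0 < n
  ht : 0 < t
  hpn : p * n ≤ (t : ℝ)
  hpt : 1 ≤ p * t
  hp0 : 0 < p
  hp2 : p ≤ 1 / 2
  proper : ProperBipColouring G c
  degX : ∀ x, t ≤ bdegX G x
  degY : ∀ y, t ≤ bdegY G y
  sub : ∀ i, Mk i ⊆ G
  matching : ∀ i, IsBipMatching (Mk i)
  rainbow : ∀ i, Set.InjOn c ↑(Mk i)
  disj : ∀ i j, i ≠ j → Disjoint (Mk i) (Mk j)
  size : ∀ i, (1 - p ^ 3) * n ≤ ((Mk i).card : ℝ)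
  hmt : (m : ℝ) ≤ (1 - p) * t
  hm2 : (1 - p) * (t : ℝ) - 1 ≤ m

variable {m t : ℕ} {p : ℝ} {G : Finset (Fin n × Fin n)} {c : Fin n × Fin n → ℕ}
  {Mk : Fin m → Finset (Fin n × Fin n)}

lemma bdegX_le_n (G : Finset (Fin n × Fin n)) (x : Fin n) : bdegX G x ≤ n := by
  have : (G.filter (fun e => e.1 = x)).card = ((G.filter (fun e => e.1 = x)).image Prod.snd).card := by
    rw [card_image_of_injOn]
    intro e he f hf h2
    simp only [coe_filter, Set.mem_setOf_eq] at he hf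
    exact Prod.ext (he.2.trans hf.2.symm) h2
  rw [bdegX, this]
  have h2 := card_le_card (subset_univ ((G.filter (fun e => e.1 = x)).image Prod.snd))
  simpa using h2

lemma Ctx.htn (h : Ctx n m t p G c Mk) : (t : ℝ) ≤ n := by
  have := h.degX ⟨0, h.hn⟩
  have h2 := bdegX_le_n (n := n) G ⟨0, h.hn⟩
  exact_mod_cast this.trans h2

lemma Ctx.hmt' (h : Ctx n m t p G c Mk) : (m : ℝ) ≤ t := by
  nlinarith [h.hmt, h.hp0, h.hpt, h.ht]

/-- the set of bad left vertices. -/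
noncomputable def BXs (Mk : Fin m → Finset (Fin n × Fin n)) (p : ℝ) (t : ℕ) : Finset (Fin n) :=
  Finset.univ.filter (fun v => (30 * p * t : ℝ) < (uncX Mk v : ℝ))

noncomputable def BYs (Mk : Fin m → Finset (Fin n × Fin n)) (p : ℝ) (t : ℕ) : Finset (Fin n) :=
  Finset.univ.filter (fun v => (30 * p * t : ℝ) < (uncY Mk v : ℝ))

lemma sum_uncX_le (h : Ctx n m t p G c Mk) :
    (∑ v : Fin n, (uncX Mk v : ℝ)) ≤ p ^ 2 * t ^ 2 := by
  have key : ∀ i : Fin m,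
      ((Finset.univ.filter (fun v : Fin n => missX (Mk i) v)).card : ℝ) ≤ p ^ 3 * n := by
    intro i
    have h1 := matching_card_covered (h.matching i)
    have h2 : (Finset.univ.filter (fun v : Fin n => missX (Mk i) v)).card
        + (Finset.univ.filter (fun v : Fin n => ¬ missX (Mk i) v)).card = n := by
      rw [Finset.card_filter_add_card_filter_not]
      simp
    rw [h1] at h2
    have h3 := h.size i
    have h4 : ((Finset.univ.filter (fun v : Fin n => missX (Mk i) v)).card : ℝ)
        = (n : ℝ) - (Mk i).card := by
      have := congrArg (fun k : ℕ => (k : ℝ)) h2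
      push_cast at this
      linarith
    rw [h4]; nlinarith [h3]
  have swap : (∑ v : Fin n, (uncX Mk v : ℝ))
      = ∑ i : Fin m, ((Finset.univ.filter (fun v : Fin n => missX (Mk i) v)).card : ℝ) := by
    simp only [uncX, card_filter]
    push_cast
    rw [Finset.sum_comm]
  rw [swap]
  have : (∑ i : Fin m, ((Finset.univ.filter (fun v : Fin n => missX (Mk i) v)).card : ℝ))
      ≤ ∑ _i : Fin m, p ^ 3 * n := Finset.sum_le_sum (fun i _ => key i)
  simp only [Finset.sum_const, card_univ, Fintype.card_fin, nsmul_eq_mul] at this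
  have hmn : (m : ℝ) ≤ t := h.hmt'
  have h3n : p ^ 3 * n ≤ p ^ 2 * t := by nlinarith [h.hpn, h.hp0]
  have hnn : (0:ℝ) ≤ p ^ 3 * n := mul_nonneg (pow_nonneg h.hp0.le 3) (Nat.cast_nonneg n)
  nlinarith [h.hp0, (Nat.cast_nonneg t : (0:ℝ) ≤ t)]

lemma sum_uncY_le (h : Ctx n m t p G c Mk) :
    (∑ v : Fin n, (uncY Mk v : ℝ)) ≤ p ^ 2 * t ^ 2 := by
  have key : ∀ i : Fin m,
      ((Finset.univ.filter (fun v : Fin n => missY (Mk i) v)).card : ℝ) ≤ p ^ 3 * n := by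
    intro i
    have h1 := matching_card_covered_snd (h.matching i)
    have h2 : (Finset.univ.filter (fun v : Fin n => missY (Mk i) v)).card
        + (Finset.univ.filter (fun v : Fin n => ¬ missY (Mk i) v)).card = n := by
      rw [Finset.card_filter_add_card_filter_not]
      simp
    rw [h1] at h2
    have h3 := h.size i
    have h4 : ((Finset.univ.filter (fun v : Fin n => missY (Mk i) v)).card : ℝ)
        = (n : ℝ) - (Mk i).card := by
      have := congrArg (fun k : ℕ => (k : ℝ)) h2
      push_cast at this
      linarith
    rw [h4]; nlinarith [h3]
  have swap : (∑ v : Fin n, (uncY Mk v : ℝ))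
      = ∑ i : Fin m, ((Finset.univ.filter (fun v : Fin n => missY (Mk i) v)).card : ℝ) := by
    simp only [uncY, card_filter]
    push_cast
    rw [Finset.sum_comm]
  rw [swap]
  have : (∑ i : Fin m, ((Finset.univ.filter (fun v : Fin n => missY (Mk i) v)).card : ℝ))
      ≤ ∑ _i : Fin m, p ^ 3 * n := Finset.sum_le_sum (fun i _ => key i)
  simp only [Finset.sum_const, card_univ, Fintype.card_fin, nsmul_eq_mul] at this
  have hmn : (m : ℝ) ≤ t := h.hmt'
  have h3n : p ^ 3 * n ≤ p ^ 2 * t := by nlinarith [h.hpn, h.hp0]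
  have hnn : (0:ℝ) ≤ p ^ 3 * n := mul_nonneg (pow_nonneg h.hp0.le 3) (Nat.cast_nonneg n)
  nlinarith [h.hp0, (Nat.cast_nonneg t : (0:ℝ) ≤ t)]

lemma card_BXs (h : Ctx n m t p G c Mk) :
    ((BXs Mk p t).card : ℝ) * (30 * p * t) ≤ p ^ 2 * t ^ 2 := by
  have h1 : ((BXs Mk p t).card : ℝ) * (30 * p * t) ≤ ∑ v ∈ BXs Mk p t, (uncX Mk v : ℝ) := by
    have h0 : ∑ _v ∈ BXs Mk p t, (30 * p * t : ℝ) ≤ ∑ v ∈ BXs Mk p t, (uncX Mk v : ℝ) := by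
      refine Finset.sum_le_sum (fun v hv => ?_)
      simp only [BXs, mem_filter] at hv
      exact le_of_lt hv.2
    simpa [Finset.sum_const, nsmul_eq_mul] using h0
  have h2 : ∑ v ∈ BXs Mk p t, (uncX Mk v : ℝ) ≤ ∑ v : Fin n, (uncX Mk v : ℝ) :=
    Finset.sum_le_sum_of_subset_of_nonneg (subset_univ _) (fun v _ _ => by positivity)
  linarith [sum_uncX_le h]

lemma card_BYs (h : Ctx n m t p G c Mk) :
    ((BYs Mk p t).card : ℝ) * (30 * p * t) ≤ p ^ 2 * t ^ 2 := by
  have h1 : ((BYs Mk p t).card : ℝ) * (30 * p * t) ≤ ∑ v ∈ BYs Mk p t, (uncY Mk v : ℝ) := by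
    have h0 : ∑ _v ∈ BYs Mk p t, (30 * p * t : ℝ) ≤ ∑ v ∈ BYs Mk p t, (uncY Mk v : ℝ) := by
      refine Finset.sum_le_sum (fun v hv => ?_)
      simp only [BYs, mem_filter] at hv
      exact le_of_lt hv.2
    simpa [Finset.sum_const, nsmul_eq_mul] using h0
  have h2 : ∑ v ∈ BYs Mk p t, (uncY Mk v : ℝ) ≤ ∑ v : Fin n, (uncY Mk v : ℝ) :=
    Finset.sum_le_sum_of_subset_of_nonneg (subset_univ _) (fun v _ _ => by positivity)
  linarith [sum_uncY_le h]


/-! ### The invariant for the greedy construction -/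

structure Inv (G : Finset (Fin n × Fin n)) (c : Fin n × Fin n → ℕ)
    (Mk : Fin m → Finset (Fin n × Fin n)) (p : ℝ) (t : ℕ)
    (A : Fin m → Finset (Fin n × Fin n)) : Prop where
  sub : ∀ i, A i ⊆ G
  notM : ∀ i j, ∀ a ∈ A i, a ∉ Mk j
  matching : ∀ i, IsBipMatching (A i)
  rainbow : ∀ i, Set.InjOn c ↑(A i)
  disj : ∀ i j, i ≠ j → Disjoint (A i) (A j)
  typ : ∀ i, ∀ a ∈ A i,
      (a.1 ∈ BXs Mk p t ∧ missX (Mk i) a.1 ∧ a.2 ∉ BYs Mk p t) ∨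
      (a.2 ∈ BYs Mk p t ∧ missY (Mk i) a.2 ∧ a.1 ∉ BXs Mk p t)
  confGood : ∀ i, ∀ f ∈ Cset c (Mk i) (A i), f.1 ∉ BXs Mk p t ∧ f.2 ∉ BYs Mk p t
  hdX : ∀ v, (dX c Mk A v : ℝ) ≤ 50 * p * t
  hdY : ∀ v, (dY c Mk A v : ℝ) ≤ 50 * p * t

variable {A : Fin m → Finset (Fin n × Fin n)}

lemma Inv.cardA_X (hI : Inv G c Mk p t A) (i : Fin m) :
    ((A i).filter (fun a => a.1 ∈ BXs Mk p t)).card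
      ≤ ((BXs Mk p t).filter (fun v => missX (Mk i) v)).card := by
  have hinj : Set.InjOn (Prod.fst : Fin n × Fin n → Fin n) ↑((A i).filter (fun a => a.1 ∈ BXs Mk p t)) := by
    intro e he f hf hef
    simp only [coe_filter, Set.mem_setOf_eq] at he hf
    by_contra hne
    exact (hI.matching i e he.1 f hf.1 hne).1 hef
  rw [← card_image_of_injOn hinj]
  refine card_le_card (fun v hv => ?_)
  simp only [mem_image, mem_filter] at hv ⊢
  obtain ⟨a, ⟨ha, hab⟩, rfl⟩ := hv
  rcases hI.typ i a ha with ⟨h1, h2, _⟩ | ⟨_, _, h3⟩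
  · exact ⟨hab, h2⟩
  · exact absurd hab h3

lemma Inv.cardA_Y (hI : Inv G c Mk p t A) (i : Fin m) :
    ((A i).filter (fun a => a.1 ∉ BXs Mk p t)).card
      ≤ ((BYs Mk p t).filter (fun v => missY (Mk i) v)).card := by
  have hinj : Set.InjOn (Prod.snd : Fin n × Fin n → Fin n) ↑((A i).filter (fun a => a.1 ∉ BXs Mk p t)) := by
    intro e he f hf hef
    simp only [coe_filter, Set.mem_setOf_eq] at he hf
    by_contra hne
    exact (hI.matching i e he.1 f hf.1 hne).2 hef
  rw [← card_image_of_injOn hinj]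
  refine card_le_card (fun v hv => ?_)
  simp only [mem_image, mem_filter] at hv ⊢
  obtain ⟨a, ⟨ha, hab⟩, rfl⟩ := hv
  rcases hI.typ i a ha with ⟨h1, _, _⟩ | ⟨h1, h2, _⟩
  · exact absurd h1 hab
  · exact ⟨h1, h2⟩

lemma Inv.cardA (hI : Inv G c Mk p t A) (i : Fin m) :
    (A i).card ≤ (BXs Mk p t).card + (BYs Mk p t).card := by
  have h0 : ((A i).filter (fun a => a.1 ∈ BXs Mk p t)).card
      + ((A i).filter (fun a => a.1 ∉ BXs Mk p t)).card = (A i).card := by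
    simpa using Finset.card_filter_add_card_filter_not
      (s := A i) (p := fun a => a.1 ∈ BXs Mk p t)
  have h1 := hI.cardA_X i
  have h2 := hI.cardA_Y i
  have b1 : ((BXs Mk p t).filter (fun v => missX (Mk i) v)).card ≤ (BXs Mk p t).card :=
    card_filter_le _ _
  have b2 : ((BYs Mk p t).filter (fun v => missY (Mk i) v)).card ≤ (BYs Mk p t).card :=
    card_filter_le _ _
  omega

lemma Inv.sumA (h : Ctx n m t p G c Mk) (hI : Inv G c Mk p t A) :
    (∑ i : Fin m, ((A i).card : ℝ)) ≤ 2 * p ^ 2 * t ^ 2 := by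
  have swapX : (∑ i : Fin m, (((BXs Mk p t).filter (fun v => missX (Mk i) v)).card : ℝ))
      = ∑ v ∈ BXs Mk p t, (uncX Mk v : ℝ) := by
    simp only [card_filter, uncX]
    push_cast
    rw [Finset.sum_comm]
  have swapY : (∑ i : Fin m, (((BYs Mk p t).filter (fun v => missY (Mk i) v)).card : ℝ))
      = ∑ v ∈ BYs Mk p t, (uncY Mk v : ℝ) := by
    simp only [card_filter, uncY]
    push_cast
    rw [Finset.sum_comm]
  have hX2 : ∑ v ∈ BXs Mk p t, (uncX Mk v : ℝ) ≤ ∑ v : Fin n, (uncX Mk v : ℝ) :=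
    Finset.sum_le_sum_of_subset_of_nonneg (subset_univ _) (fun v _ _ => by positivity)
  have hY2 : ∑ v ∈ BYs Mk p t, (uncY Mk v : ℝ) ≤ ∑ v : Fin n, (uncY Mk v : ℝ) :=
    Finset.sum_le_sum_of_subset_of_nonneg (subset_univ _) (fun v _ _ => by positivity)
  have split : ∀ i : Fin m, ((A i).card : ℝ)
      = (((A i).filter (fun a => a.1 ∈ BXs Mk p t)).card : ℝ)
        + (((A i).filter (fun a => a.1 ∉ BXs Mk p t)).card : ℝ) := by
    intro i
    have h0 : ((A i).filter (fun a => a.1 ∈ BXs Mk p t)).card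
        + ((A i).filter (fun a => a.1 ∉ BXs Mk p t)).card = (A i).card := by
      simpa using Finset.card_filter_add_card_filter_not
        (s := A i) (p := fun a => a.1 ∈ BXs Mk p t)
    rw [← h0]
    push_cast
    ring
  calc (∑ i : Fin m, ((A i).card : ℝ))
      = (∑ i : Fin m, (((A i).filter (fun a => a.1 ∈ BXs Mk p t)).card : ℝ))
        + (∑ i : Fin m, (((A i).filter (fun a => a.1 ∉ BXs Mk p t)).card : ℝ)) := by
        rw [← Finset.sum_add_distrib]; exact Finset.sum_congr rfl (fun i _ => split i)
    _ ≤ (∑ i : Fin m, (((BXs Mk p t).filter (fun v => missX (Mk i) v)).card : ℝ))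
        + (∑ i : Fin m, (((BYs Mk p t).filter (fun v => missY (Mk i) v)).card : ℝ)) := by
        gcongr with i _ i _
        · exact_mod_cast hI.cardA_X i
        · exact_mod_cast hI.cardA_Y i
    _ ≤ p ^ 2 * t ^ 2 + p ^ 2 * t ^ 2 := by
        rw [swapX, swapY]
        have hA := sum_uncX_le h
        have hB := sum_uncY_le h
        exact add_le_add (hX2.trans hA) (hY2.trans hB)
    _ = 2 * p ^ 2 * t ^ 2 := by ring

lemma Inv.cardCset (h : Ctx n m t p G c Mk) (hI : Inv G c Mk p t A) (i : Fin m) :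
    (Cset c (Mk i) (A i)).card ≤ 2 * (A i).card := by
  have hbi : Cset c (Mk i) (A i)
      = (A i).biUnion (fun a => (Mk i).filter (fun f => f.1 = a.1 ∨ f.2 = a.2 ∨ c f = c a)) := by
    ext f
    simp only [Cset, mem_filter, mem_biUnion]
    constructor
    · rintro ⟨hf, a, ha, hor⟩; exact ⟨a, ha, hf, hor⟩
    · rintro ⟨a, ha, hf, hor⟩; exact ⟨hf, a, ha, hor⟩
  rw [hbi]
  refine card_biUnion_le.trans ?_
  have per : ∀ a ∈ A i,
      ((Mk i).filter (fun f => f.1 = a.1 ∨ f.2 = a.2 ∨ c f = c a)).card ≤ 2 := by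
    intro a ha
    rcases hI.typ i a ha with ⟨_, hmiss, _⟩ | ⟨_, hmiss, _⟩
    · have hsub : (Mk i).filter (fun f => f.1 = a.1 ∨ f.2 = a.2 ∨ c f = c a)
          ⊆ (Mk i).filter (fun f => f.2 = a.2) ∪ (Mk i).filter (fun f => c f = c a) := by
        intro f hf
        simp only [mem_filter, mem_union] at hf ⊢
        rcases hf.2 with h1 | h2 | h3
        · exact absurd h1 (hmiss f hf.1)
        · exact Or.inl ⟨hf.1, h2⟩
        · exact Or.inr ⟨hf.1, h3⟩
      refine (card_le_card hsub).trans ((card_union_le _ _).trans ?_)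
      have := card_filter_snd_le_one (h.matching i) a.2
      have := card_filter_colour_le_one (h.rainbow i) (c a)
      omega
    · have hsub : (Mk i).filter (fun f => f.1 = a.1 ∨ f.2 = a.2 ∨ c f = c a)
          ⊆ (Mk i).filter (fun f => f.1 = a.1) ∪ (Mk i).filter (fun f => c f = c a) := by
        intro f hf
        simp only [mem_filter, mem_union] at hf ⊢
        rcases hf.2 with h1 | h2 | h3
        · exact Or.inl ⟨hf.1, h1⟩
        · exact absurd h2 (hmiss f hf.1)
        · exact Or.inr ⟨hf.1, h3⟩
      refine (card_le_card hsub).trans ((card_union_le _ _).trans ?_)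
      have := card_filter_fst_le_one (h.matching i) a.1
      have := card_filter_colour_le_one (h.rainbow i) (c a)
      omega
  calc ∑ a ∈ A i, ((Mk i).filter (fun f => f.1 = a.1 ∨ f.2 = a.2 ∨ c f = c a)).card
      ≤ ∑ _a ∈ A i, 2 := Finset.sum_le_sum per
    _ = 2 * (A i).card := by rw [Finset.sum_const, smul_eq_mul, Nat.mul_comm]

lemma sum_dX_le (h : Ctx n m t p G c Mk) (hI : Inv G c Mk p t A) :
    (∑ v : Fin n, (dX c Mk A v : ℝ)) ≤ 4 * p ^ 2 * t ^ 2 := by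
  have swap : (∑ v : Fin n, (dX c Mk A v : ℝ))
      = ∑ i : Fin m,
        ((Finset.univ.filter (fun v : Fin n => ∃ f ∈ Cset c (Mk i) (A i), f.1 = v)).card : ℝ) := by
    simp only [dX, card_filter]
    push_cast
    rw [Finset.sum_comm]
  have per : ∀ i : Fin m,
      ((Finset.univ.filter (fun v : Fin n => ∃ f ∈ Cset c (Mk i) (A i), f.1 = v)).card : ℝ)
        ≤ 2 * (A i).card := by
    intro i
    have heq : Finset.univ.filter (fun v : Fin n => ∃ f ∈ Cset c (Mk i) (A i), f.1 = v)
        = (Cset c (Mk i) (A i)).image Prod.fst := by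
      ext v
      simp only [mem_filter, mem_univ, true_and, mem_image]
    rw [heq]
    have h1 := (card_image_le (s := Cset c (Mk i) (A i)) (f := Prod.fst)).trans
      (hI.cardCset h i)
    exact_mod_cast h1
  rw [swap]
  have h2 : (∑ i : Fin m,
      ((Finset.univ.filter (fun v : Fin n => ∃ f ∈ Cset c (Mk i) (A i), f.1 = v)).card : ℝ))
      ≤ ∑ i : Fin m, 2 * ((A i).card : ℝ) := Finset.sum_le_sum (fun i _ => per i)
  have h3 := hI.sumA h
  rw [← Finset.mul_sum] at h2
  nlinarith [h3]

lemma sum_dY_le (h : Ctx n m t p G c Mk) (hI : Inv G c Mk p t A) :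
    (∑ v : Fin n, (dY c Mk A v : ℝ)) ≤ 4 * p ^ 2 * t ^ 2 := by
  have swap : (∑ v : Fin n, (dY c Mk A v : ℝ))
      = ∑ i : Fin m,
        ((Finset.univ.filter (fun v : Fin n => ∃ f ∈ Cset c (Mk i) (A i), f.2 = v)).card : ℝ) := by
    simp only [dY, card_filter]
    push_cast
    rw [Finset.sum_comm]
  have per : ∀ i : Fin m,
      ((Finset.univ.filter (fun v : Fin n => ∃ f ∈ Cset c (Mk i) (A i), f.2 = v)).card : ℝ)
        ≤ 2 * (A i).card := by
    intro i
    have heq : Finset.univ.filter (fun v : Fin n => ∃ f ∈ Cset c (Mk i) (A i), f.2 = v)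
        = (Cset c (Mk i) (A i)).image Prod.snd := by
      ext v
      simp only [mem_filter, mem_univ, true_and, mem_image]
    rw [heq]
    have h1 := (card_image_le (s := Cset c (Mk i) (A i)) (f := Prod.snd)).trans
      (hI.cardCset h i)
    exact_mod_cast h1
  rw [swap]
  have h2 : (∑ i : Fin m,
      ((Finset.univ.filter (fun v : Fin n => ∃ f ∈ Cset c (Mk i) (A i), f.2 = v)).card : ℝ))
      ≤ ∑ i : Fin m, 2 * ((A i).card : ℝ) := Finset.sum_le_sum (fun i _ => per i)
  have h3 := hI.sumA h
  rw [← Finset.mul_sum] at h2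
  nlinarith [h3]

/-- vertices close to the harm cap. -/
lemma card_HX (h : Ctx n m t p G c Mk) (hI : Inv G c Mk p t A) :
    ((Finset.univ.filter (fun v : Fin n => (50 * p * t : ℝ) < (dX c Mk A v : ℝ) + 1)).card : ℝ)
      * (49 * p * t) ≤ 4 * p ^ 2 * t ^ 2 := by
  set HX := Finset.univ.filter (fun v : Fin n => (50 * p * t : ℝ) < (dX c Mk A v : ℝ) + 1) with hHX
  have h1 : ∀ v ∈ HX, (49 * p * t : ℝ) ≤ (dX c Mk A v : ℝ) := by
    intro v hv
    rw [hHX, mem_filter] at hv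
    have := hv.2
    nlinarith [h.hpt]
  have h2 : (HX.card : ℝ) * (49 * p * t) ≤ ∑ v ∈ HX, (dX c Mk A v : ℝ) := by
    have h0 : ∑ _v ∈ HX, (49 * p * t : ℝ) ≤ ∑ v ∈ HX, (dX c Mk A v : ℝ) :=
      Finset.sum_le_sum h1
    simpa [Finset.sum_const, nsmul_eq_mul] using h0
  have h3 : ∑ v ∈ HX, (dX c Mk A v : ℝ) ≤ ∑ v : Fin n, (dX c Mk A v : ℝ) :=
    Finset.sum_le_sum_of_subset_of_nonneg (subset_univ _) (fun v _ _ => by positivity)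
  linarith [sum_dX_le h hI]

lemma card_HY (h : Ctx n m t p G c Mk) (hI : Inv G c Mk p t A) :
    ((Finset.univ.filter (fun v : Fin n => (50 * p * t : ℝ) < (dY c Mk A v : ℝ) + 1)).card : ℝ)
      * (49 * p * t) ≤ 4 * p ^ 2 * t ^ 2 := by
  set HY := Finset.univ.filter (fun v : Fin n => (50 * p * t : ℝ) < (dY c Mk A v : ℝ) + 1) with hHY
  have h1 : ∀ v ∈ HY, (49 * p * t : ℝ) ≤ (dY c Mk A v : ℝ) := by
    intro v hv
    rw [hHY, mem_filter] at hv
    have := hv.2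
    nlinarith [h.hpt]
  have h2 : (HY.card : ℝ) * (49 * p * t) ≤ ∑ v ∈ HY, (dY c Mk A v : ℝ) := by
    have h0 : ∑ _v ∈ HY, (49 * p * t : ℝ) ≤ ∑ v ∈ HY, (dY c Mk A v : ℝ) :=
      Finset.sum_le_sum h1
    simpa [Finset.sum_const, nsmul_eq_mul] using h0
  have h3 : ∑ v ∈ HY, (dY c Mk A v : ℝ) ≤ ∑ v : Fin n, (dY c Mk A v : ℝ) :=
    Finset.sum_le_sum_of_subset_of_nonneg (subset_univ _) (fun v _ _ => by positivity)
  linarith [sum_dY_le h hI]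


/-! ### helpers for the greedy step -/

lemma card_nbrX (G : Finset (Fin n × Fin n)) (v : Fin n) :
    (Finset.univ.filter (fun y => (v, y) ∈ G)).card = bdegX G v := by
  rw [bdegX]
  have h1 : Finset.univ.filter (fun y => (v, y) ∈ G)
      = (G.filter (fun e => e.1 = v)).image Prod.snd := by
    ext y
    simp only [mem_filter, mem_univ, true_and, mem_image]
    constructor
    · intro hy; exact ⟨(v, y), ⟨hy, rfl⟩, rfl⟩
    · rintro ⟨e, ⟨he, h1⟩, rfl⟩
      have : e = (v, e.2) := by rw [← h1]
      rwa [← this]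
  rw [h1, card_image_of_injOn]
  intro e he f hf h2
  simp only [coe_filter, Set.mem_setOf_eq] at he hf
  exact Prod.ext (he.2.trans hf.2.symm) h2

lemma card_nbrY (G : Finset (Fin n × Fin n)) (v : Fin n) :
    (Finset.univ.filter (fun x => (x, v) ∈ G)).card = bdegY G v := by
  rw [bdegY]
  have h1 : Finset.univ.filter (fun x => (x, v) ∈ G)
      = (G.filter (fun e => e.2 = v)).image Prod.fst := by
    ext x
    simp only [mem_filter, mem_univ, true_and, mem_image]
    constructor
    · intro hx; exact ⟨(x, v), ⟨hx, rfl⟩, rfl⟩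
    · rintro ⟨e, ⟨he, h1⟩, rfl⟩
      have : e = (e.1, v) := by rw [← h1]
      rwa [← this]
  rw [h1, card_image_of_injOn]
  intro e he f hf h2
  simp only [coe_filter, Set.mem_setOf_eq] at he hf
  exact Prod.ext h2 (he.2.trans hf.2.symm)

lemma card_filter_fst_mem {M : Finset (Fin n × Fin n)} (hM : IsBipMatching M)
    (S : Finset (Fin n)) : (M.filter (fun f => f.1 ∈ S)).card ≤ S.card := by
  have hinj : Set.InjOn (Prod.fst : Fin n × Fin n → Fin n) ↑(M.filter (fun f => f.1 ∈ S)) := by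
    intro e he f hf hef
    simp only [coe_filter, Set.mem_setOf_eq] at he hf
    by_contra hne
    exact (hM e he.1 f hf.1 hne).1 hef
  rw [← card_image_of_injOn hinj]
  refine card_le_card (fun x hx => ?_)
  simp only [mem_image, mem_filter] at hx
  obtain ⟨e, ⟨_, h2⟩, rfl⟩ := hx
  exact h2

lemma card_filter_snd_mem {M : Finset (Fin n × Fin n)} (hM : IsBipMatching M)
    (S : Finset (Fin n)) : (M.filter (fun f => f.2 ∈ S)).card ≤ S.card := by
  have hinj : Set.InjOn (Prod.snd : Fin n × Fin n → Fin n) ↑(M.filter (fun f => f.2 ∈ S)) := by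
    intro e he f hf hef
    simp only [coe_filter, Set.mem_setOf_eq] at he hf
    by_contra hne
    exact (hM e he.1 f hf.1 hne).2 hef
  rw [← card_image_of_injOn hinj]
  refine card_le_card (fun x hx => ?_)
  simp only [mem_image, mem_filter] at hx
  obtain ⟨e, ⟨_, h2⟩, rfl⟩ := hx
  exact h2

lemma card_filter_fst_pred {M : Finset (Fin n × Fin n)} (hM : IsBipMatching M)
    (P : Fin n → Prop) [DecidablePred P] :
    (M.filter (fun f => P f.1)).card ≤ (Finset.univ.filter P).card := by
  have hinj : Set.InjOn (Prod.fst : Fin n × Fin n → Fin n) ↑(M.filter (fun f => P f.1)) := by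
    intro e he f hf hef
    simp only [coe_filter, Set.mem_setOf_eq] at he hf
    by_contra hne
    exact (hM e he.1 f hf.1 hne).1 hef
  rw [← card_image_of_injOn hinj]
  refine card_le_card (fun x hx => ?_)
  simp only [mem_image, mem_filter, mem_univ, true_and] at hx ⊢
  obtain ⟨e, ⟨_, h2⟩, rfl⟩ := hx
  exact h2

lemma card_filter_snd_pred {M : Finset (Fin n × Fin n)} (hM : IsBipMatching M)
    (P : Fin n → Prop) [DecidablePred P] :
    (M.filter (fun f => P f.2)).card ≤ (Finset.univ.filter P).card := by
  have hinj : Set.InjOn (Prod.snd : Fin n × Fin n → Fin n) ↑(M.filter (fun f => P f.2)) := by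
    intro e he f hf hef
    simp only [coe_filter, Set.mem_setOf_eq] at he hf
    by_contra hne
    exact (hM e he.1 f hf.1 hne).2 hef
  rw [← card_image_of_injOn hinj]
  refine card_le_card (fun x hx => ?_)
  simp only [mem_image, mem_filter, mem_univ, true_and] at hx ⊢
  obtain ⟨e, ⟨_, h2⟩, rfl⟩ := hx
  exact h2


/-! ### the greedy step, X side -/

set_option maxHeartbeats 1600000 in
lemma stepX (h : Ctx n m t p G c Mk) (hI : Inv G c Mk p t A)
    (i : Fin m) (v : Fin n) (hv : v ∈ BXs Mk p t) (hmiss : missX (Mk i) v)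
    (hnoA : ∀ a ∈ A i, a.1 ≠ v) :
    ∃ A' : Fin m → Finset (Fin n × Fin n), Inv G c Mk p t A' ∧ (∀ j, A j ⊆ A' j) ∧
      (∃ a ∈ A' i, a.1 = v) := by
  classical
  set BX := BXs Mk p t with hBX
  set BY := BYs Mk p t with hBY
  set HX := Finset.univ.filter (fun x : Fin n => (50 * p * t : ℝ) < (dX c Mk A x : ℝ) + 1)
    with hHX
  set HY := Finset.univ.filter (fun x : Fin n => (50 * p * t : ℝ) < (dY c Mk A x : ℝ) + 1)
    with hHY
  set Ng := Finset.univ.filter (fun y : Fin n => (v, y) ∈ G) with hNg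
  set E1 := Finset.univ.filter (fun y : Fin n => ∃ j : Fin m, (v, y) ∈ Mk j ∨ (v, y) ∈ A j)
    with hE1
  set E3 := Finset.univ.filter (fun y : Fin n => ∃ a ∈ A i, a.2 = y) with hE3
  set E4 := Finset.univ.filter (fun y : Fin n => ∃ f ∈ Mk i, f.2 = y ∧
      (f.1 ∈ BX ∨ (50 * p * t : ℝ) < (dX c Mk A f.1 : ℝ) + 1)) with hE4
  set E5 := Finset.univ.filter (fun y : Fin n => (v, y) ∈ G ∧ ∃ f ∈ Mk i, c f = c (v, y) ∧
      (f.1 ∈ BX ∨ f.2 ∈ BY ∨ (50 * p * t : ℝ) < (dX c Mk A f.1 : ℝ) + 1 ∨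
        (50 * p * t : ℝ) < (dY c Mk A f.2 : ℝ) + 1)) with hE5
  set E6 := Finset.univ.filter (fun y : Fin n => (v, y) ∈ G ∧ ∃ a ∈ A i, c a = c (v, y))
    with hE6
  -- cardinality bounds
  have hpt0 : (0:ℝ) < p * t := lt_of_lt_of_le one_pos h.hpt
  have ht0 : (0:ℝ) < t := by
    have := h.ht; exact_mod_cast Nat.cast_pos.2 this
  have hcNg : (t : ℝ) ≤ (Ng.card : ℝ) := by
    rw [hNg, card_nbrX]
    exact_mod_cast h.degX v
  have hm1 : 1 ≤ m := i.pos
  have hcE1 : (E1.card : ℝ) ≤ (m : ℝ) - 1 := by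
    have hsub : E1 ⊆ Finset.univ.biUnion (fun j : Fin m =>
        Finset.univ.filter (fun y : Fin n => (v, y) ∈ Mk j ∨ (v, y) ∈ A j)) := by
      intro y hy
      rw [hE1, mem_filter] at hy
      obtain ⟨_, j, hj⟩ := hy
      exact mem_biUnion.2 ⟨j, mem_univ j, mem_filter.2 ⟨mem_univ y, hj⟩⟩
    have hFi : Finset.univ.filter (fun y : Fin n => (v, y) ∈ Mk i ∨ (v, y) ∈ A i) = ∅ := by
      refine Finset.filter_eq_empty_iff.2 (fun y _ => ?_)
      rintro (hy | hy)
      · exact hmiss _ hy rfl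
      · exact hnoA _ hy rfl
    have hFj : ∀ j : Fin m,
        (Finset.univ.filter (fun y : Fin n => (v, y) ∈ Mk j ∨ (v, y) ∈ A j)).card ≤ 1 := by
      intro j
      refine card_le_one.2 (fun y hy z hz => ?_)
      rw [mem_filter] at hy hz
      have key : ∀ w₁ w₂ : Fin n, (v, w₁) ∈ Mk j → (v, w₂) ∈ A j → False := by
        intro w₁ w₂ hw1 hw2
        rcases hI.typ j _ hw2 with ⟨_, hmj, _⟩ | ⟨_, _, hnb⟩
        · exact hmj _ hw1 rfl
        · exact hnb hv
      rcases hy.2 with hy2 | hy2 <;> rcases hz.2 with hz2 | hz2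
      · by_contra hne
        exact ((h.matching j) _ hy2 _ hz2 (by simp [hne]) ).1 rfl
      · exact absurd hz2 (fun hz2 => key _ _ hy2 hz2)
      · exact absurd hy2 (fun hy2 => key _ _ hz2 hy2)
      · by_contra hne
        exact ((hI.matching j) _ hy2 _ hz2 (by simp [hne])).1 rfl
    have h1 : E1.card ≤ ∑ j : Fin m,
        (Finset.univ.filter (fun y : Fin n => (v, y) ∈ Mk j ∨ (v, y) ∈ A j)).card :=
      (card_le_card hsub).trans card_biUnion_le
    have h2 : ∑ j : Fin m,
        (Finset.univ.filter (fun y : Fin n => (v, y) ∈ Mk j ∨ (v, y) ∈ A j)).card ≤ m - 1 := by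
      rw [← Finset.sum_erase_add _ _ (mem_univ i), hFi]
      simp only [card_empty, add_zero]
      calc ∑ j ∈ Finset.univ.erase i, (Finset.univ.filter
            (fun y : Fin n => (v, y) ∈ Mk j ∨ (v, y) ∈ A j)).card
          ≤ ∑ _j ∈ Finset.univ.erase i, 1 := Finset.sum_le_sum (fun j _ => hFj j)
        _ = m - 1 := by simp [Finset.card_erase_of_mem]
    have h3 : E1.card ≤ m - 1 := h1.trans h2
    have : (E1.card : ℝ) ≤ ((m - 1 : ℕ) : ℝ) := Nat.cast_le.2 h3
    rwa [Nat.cast_sub hm1, Nat.cast_one] at this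
  have hcBX : (BX.card : ℝ) ≤ p * t / 30 := by
    have := card_BXs h
    rw [← hBX] at this
    rw [div_eq_inv_mul]
    nlinarith
  have hcBY : (BY.card : ℝ) ≤ p * t / 30 := by
    have := card_BYs h
    rw [← hBY] at this
    rw [div_eq_inv_mul]
    nlinarith
  have hcHX : (HX.card : ℝ) ≤ 4 / 49 * (p * t) := by
    have := card_HX h hI
    rw [← hHX] at this
    nlinarith
  have hcHY : (HY.card : ℝ) ≤ 4 / 49 * (p * t) := by
    have := card_HY h hI
    rw [← hHY] at this
    nlinarith
  have hcE3 : (E3.card : ℝ) ≤ (BX.card : ℝ) + BY.card := by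
    have heq : E3 = (A i).image Prod.snd := by
      ext y
      rw [hE3]
      simp only [mem_filter, mem_univ, true_and, mem_image]
    have h1 : E3.card ≤ (A i).card := heq ▸ card_image_le
    have h2 := hI.cardA i
    rw [← hBX, ← hBY] at h2
    exact_mod_cast h1.trans h2
  have hcE4 : (E4.card : ℝ) ≤ (BX.card : ℝ) + HX.card := by
    have heq : E4 = ((Mk i).filter (fun f => f.1 ∈ BX ∨
        (50 * p * t : ℝ) < (dX c Mk A f.1 : ℝ) + 1)).image Prod.snd := by
      ext y
      rw [hE4]
      simp only [mem_filter, mem_univ, true_and, mem_image]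
      constructor
      · rintro ⟨f, hf, rfl, hor⟩; exact ⟨f, ⟨hf, hor⟩, rfl⟩
      · rintro ⟨f, ⟨hf, hor⟩, rfl⟩; exact ⟨f, hf, rfl, hor⟩
    have h1 : E4.card ≤ ((Mk i).filter (fun f => f.1 ∈ BX ∨
        (50 * p * t : ℝ) < (dX c Mk A f.1 : ℝ) + 1)).card := heq ▸ card_image_le
    have hsub : (Mk i).filter (fun f => f.1 ∈ BX ∨
          (50 * p * t : ℝ) < (dX c Mk A f.1 : ℝ) + 1)
        ⊆ (Mk i).filter (fun f => f.1 ∈ BX) ∪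
          (Mk i).filter (fun f => (50 * p * t : ℝ) < (dX c Mk A f.1 : ℝ) + 1) := by
      intro f hf
      rw [mem_filter] at hf
      rcases hf.2 with h2 | h2
      · exact mem_union_left _ (mem_filter.2 ⟨hf.1, h2⟩)
      · exact mem_union_right _ (mem_filter.2 ⟨hf.1, h2⟩)
    have h2 := card_filter_fst_mem (h.matching i) BX
    have h3 := card_filter_fst_pred (h.matching i)
      (fun x : Fin n => (50 * p * t : ℝ) < (dX c Mk A x : ℝ) + 1)
    rw [← hHX] at h3
    have h4 := ((card_le_card hsub).trans (card_union_le _ _))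
    have : E4.card ≤ BX.card + HX.card := by omega
    exact_mod_cast this
  have hcE5 : (E5.card : ℝ) ≤ (BX.card : ℝ) + BY.card + HX.card + HY.card := by
    set S5 := (Mk i).filter (fun f => f.1 ∈ BX ∨ f.2 ∈ BY ∨
        (50 * p * t : ℝ) < (dX c Mk A f.1 : ℝ) + 1 ∨
        (50 * p * t : ℝ) < (dY c Mk A f.2 : ℝ) + 1) with hS5
    have hch : ∀ y : Fin n, y ∈ E5 → ∃ f, f ∈ S5 ∧ c f = c (v, y) := by
      intro y hy
      rw [hE5, mem_filter] at hy
      obtain ⟨hG, f, hf, hc, hor⟩ := hy.2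
      exact ⟨f, mem_filter.2 ⟨hf, hor⟩, hc⟩
    choose! g hg using hch
    have hinj : Set.InjOn g ↑E5 := by
      intro y hy z hz hgyz
      simp only [mem_coe] at hy hz
      have h1 := hg y hy
      have h2 := hg z hz
      have hcc : c (v, y) = c (v, z) := by rw [← h1.2, hgyz, h2.2]
      rw [hE5, mem_filter] at hy hz
      by_contra hne
      have hne2 : (v, y) ≠ (v, z) := by simp [hne]
      exact h.proper _ hy.2.1 _ hz.2.1 hne2 (Or.inl rfl) hcc
    have h1 : E5.card ≤ S5.card := by
      rw [← card_image_of_injOn hinj]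
      refine card_le_card (fun f hf => ?_)
      simp only [mem_image] at hf
      obtain ⟨y, hy, rfl⟩ := hf
      exact (hg y hy).1
    have hsub : S5 ⊆ (Mk i).filter (fun f => f.1 ∈ BX) ∪ (Mk i).filter (fun f => f.2 ∈ BY)
        ∪ (Mk i).filter (fun f => (50 * p * t : ℝ) < (dX c Mk A f.1 : ℝ) + 1)
        ∪ (Mk i).filter (fun f => (50 * p * t : ℝ) < (dY c Mk A f.2 : ℝ) + 1) := by
      intro f hf
      rw [hS5, mem_filter] at hf
      simp only [mem_union, mem_filter]
      rcases hf.2 with h1 | h2 | h3 | h4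
      exacts [Or.inl (Or.inl (Or.inl ⟨hf.1, h1⟩)), Or.inl (Or.inl (Or.inr ⟨hf.1, h2⟩)),
        Or.inl (Or.inr ⟨hf.1, h3⟩), Or.inr ⟨hf.1, h4⟩]
    have h2 := card_filter_fst_mem (h.matching i) BX
    have h3 := card_filter_snd_mem (h.matching i) BY
    have h4 := card_filter_fst_pred (h.matching i)
      (fun x : Fin n => (50 * p * t : ℝ) < (dX c Mk A x : ℝ) + 1)
    have h5 := card_filter_snd_pred (h.matching i)
      (fun x : Fin n => (50 * p * t : ℝ) < (dY c Mk A x : ℝ) + 1)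
    rw [← hHX] at h4
    rw [← hHY] at h5
    have h6 := (card_le_card hsub).trans ((card_union_le _ _).trans (Nat.add_le_add_right
      ((card_union_le _ _).trans (Nat.add_le_add_right (card_union_le _ _) _)) _))
    have : E5.card ≤ BX.card + BY.card + HX.card + HY.card := by omega
    exact_mod_cast this
  have hcE6 : (E6.card : ℝ) ≤ (BX.card : ℝ) + BY.card := by
    have hch : ∀ y : Fin n, y ∈ E6 → ∃ a, a ∈ A i ∧ c a = c (v, y) := by
      intro y hy
      rw [hE6, mem_filter] at hy
      obtain ⟨_, hG, a, ha, hc⟩ := hy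
      exact ⟨a, ha, hc⟩
    choose! g hg using hch
    have hinj : Set.InjOn g ↑E6 := by
      intro y hy z hz hgyz
      simp only [mem_coe] at hy hz
      have h1 := hg y hy
      have h2 := hg z hz
      have hcc : c (v, y) = c (v, z) := by rw [← h1.2, hgyz, h2.2]
      rw [hE6, mem_filter] at hy hz
      by_contra hne
      have hne2 : (v, y) ≠ (v, z) := by simp [hne]
      exact h.proper _ hy.2.1 _ hz.2.1 hne2 (Or.inl rfl) hcc
    have h1 : E6.card ≤ (A i).card := by
      rw [← card_image_of_injOn hinj]
      refine card_le_card (fun a ha => ?_)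
      simp only [mem_image] at ha
      obtain ⟨y, hy, rfl⟩ := ha
      exact (hg y hy).1
    have h2 := hI.cardA i
    rw [← hBX, ← hBY] at h2
    exact_mod_cast h1.trans h2
  -- there is a good choice of y
  have hex : ∃ y, y ∈ Ng \ (E1 ∪ BY ∪ E3 ∪ E4 ∪ E5 ∪ E6 ∪ HY) := by
    have hcub : ((E1 ∪ BY ∪ E3 ∪ E4 ∪ E5 ∪ E6 ∪ HY).card : ℝ)
        ≤ (E1.card : ℝ) + BY.card + E3.card + E4.card + E5.card + E6.card + HY.card := by
      have c1 := card_union_le E1 BY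
      have c2 := card_union_le (E1 ∪ BY) E3
      have c3 := card_union_le (E1 ∪ BY ∪ E3) E4
      have c4 := card_union_le (E1 ∪ BY ∪ E3 ∪ E4) E5
      have c5 := card_union_le (E1 ∪ BY ∪ E3 ∪ E4 ∪ E5) E6
      have c6 := card_union_le (E1 ∪ BY ∪ E3 ∪ E4 ∪ E5 ∪ E6) HY
      have hnat : (E1 ∪ BY ∪ E3 ∪ E4 ∪ E5 ∪ E6 ∪ HY).card
          ≤ E1.card + BY.card + E3.card + E4.card + E5.card + E6.card + HY.card := by omega
      exact_mod_cast hnat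
    have hmub : (m : ℝ) ≤ (1 - p) * t := h.hmt
    have htotal : ((E1 ∪ BY ∪ E3 ∪ E4 ∪ E5 ∪ E6 ∪ HY).card : ℝ) < Ng.card := by
      have : (E1.card : ℝ) + BY.card + E3.card + E4.card + E5.card + E6.card + HY.card
          < t := by linarith [hcE1, hcBY, hcBX, hcE3, hcE4, hcE5, hcE6, hcHX, hcHY, hpt0]
      linarith [hcNg]
    have hlt : (E1 ∪ BY ∪ E3 ∪ E4 ∪ E5 ∪ E6 ∪ HY).card < Ng.card := by exact_mod_cast htotal
    have hpos : 0 < (Ng \ (E1 ∪ BY ∪ E3 ∪ E4 ∪ E5 ∪ E6 ∪ HY)).card :=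
      lt_of_lt_of_le (by omega) (Finset.le_card_sdiff _ _)
    obtain ⟨y, hy⟩ := Finset.card_pos.1 hpos
    exact ⟨y, hy⟩
  obtain ⟨y, hy⟩ := hex
  rw [mem_sdiff] at hy
  obtain ⟨hyNg, hyE⟩ := hy
  simp only [mem_union, not_or] at hyE
  obtain ⟨⟨⟨⟨⟨⟨n1, n2⟩, n3⟩, n4⟩, n5⟩, n6⟩, n7⟩ := hyE
  have hyG : (v, y) ∈ G := by
    rw [hNg, mem_filter] at hyNg
    exact hyNg.2
  have he1 : ∀ j : Fin m, (v, y) ∉ Mk j ∧ (v, y) ∉ A j := by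
    intro j
    constructor <;> intro hmem
    · exact n1 (by rw [hE1]; exact mem_filter.2 ⟨mem_univ y, ⟨j, Or.inl hmem⟩⟩)
    · exact n1 (by rw [hE1]; exact mem_filter.2 ⟨mem_univ y, ⟨j, Or.inr hmem⟩⟩)
  have he3 : ∀ a ∈ A i, a.2 ≠ y := by
    intro a ha hay
    exact n3 (by rw [hE3]; exact mem_filter.2 ⟨mem_univ y, ⟨a, ha, hay⟩⟩)
  have he4 : ∀ f ∈ Mk i, f.2 = y → f.1 ∉ BX ∧ (dX c Mk A f.1 : ℝ) + 1 ≤ 50 * p * t := by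
    intro f hf hf2
    constructor
    · intro hb
      exact n4 (by rw [hE4]; exact mem_filter.2 ⟨mem_univ y, ⟨f, hf, hf2, Or.inl hb⟩⟩)
    · by_contra hlt
      push_neg at hlt
      exact n4 (by rw [hE4]; exact mem_filter.2 ⟨mem_univ y, ⟨f, hf, hf2, Or.inr hlt⟩⟩)
  have he5 : ∀ f ∈ Mk i, c f = c (v, y) → f.1 ∉ BX ∧ f.2 ∉ BY ∧
      (dX c Mk A f.1 : ℝ) + 1 ≤ 50 * p * t ∧ (dY c Mk A f.2 : ℝ) + 1 ≤ 50 * p * t := by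
    intro f hf hcf
    refine ⟨?_, ?_, ?_, ?_⟩
    · intro hb
      exact n5 (by rw [hE5]; exact mem_filter.2 ⟨mem_univ y, hyG, ⟨f, hf, hcf, Or.inl hb⟩⟩)
    · intro hb
      exact n5 (by rw [hE5]; exact mem_filter.2 ⟨mem_univ y, hyG, ⟨f, hf, hcf, Or.inr (Or.inl hb)⟩⟩)
    · by_contra hlt
      push_neg at hlt
      refine n5 ?_
      rw [hE5]
      exact mem_filter.2 ⟨mem_univ y, hyG, ⟨f, hf, hcf, Or.inr (Or.inr (Or.inl hlt))⟩⟩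
    · by_contra hlt
      push_neg at hlt
      refine n5 ?_
      rw [hE5]
      exact mem_filter.2 ⟨mem_univ y, hyG, ⟨f, hf, hcf, Or.inr (Or.inr (Or.inr hlt))⟩⟩
  have he6 : ∀ a ∈ A i, c a ≠ c (v, y) := by
    intro a ha hc
    exact n6 (by rw [hE6]; exact mem_filter.2 ⟨mem_univ y, hyG, ⟨a, ha, hc⟩⟩)
  have he7 : (dY c Mk A y : ℝ) + 1 ≤ 50 * p * t := by
    by_contra hlt
    push_neg at hlt
    exact n7 (by rw [hHY]; exact mem_filter.2 ⟨mem_univ y, hlt⟩)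
  -- the update
  set A' := Function.update A i (insert (v, y) (A i)) with hA'
  have hA'i : A' i = insert (v, y) (A i) := by rw [hA']; simp
  have hA'j : ∀ j : Fin m, j ≠ i → A' j = A j := by
    intro j hj; rw [hA']; exact Function.update_of_ne hj _ _
  set newC := (Mk i).filter
      (fun f => f.1 = (v, y).1 ∨ f.2 = (v, y).2 ∨ c f = c (v, y)) with hnewCdef
  have hCset' : Cset c (Mk i) (A' i) = Cset c (Mk i) (A i) ∪ newC := by
    rw [hA'i, hnewCdef]
    exact Cset_insert c (Mk i) (A i) (v, y)
  have hnewC : ∀ f ∈ newC, f.1 ∉ BX ∧ f.2 ∉ BY ∧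
      (dX c Mk A f.1 : ℝ) + 1 ≤ 50 * p * t ∧ (dY c Mk A f.2 : ℝ) + 1 ≤ 50 * p * t := by
    intro f hf
    rw [hnewCdef, mem_filter] at hf
    rcases hf.2 with h1 | h2 | h3
    · exact absurd h1 (hmiss f hf.1)
    · obtain ⟨q1, q2⟩ := he4 f hf.1 h2
      exact ⟨q1, by rw [show f.2 = y from h2]; exact n2, q2, by rw [show f.2 = y from h2]; exact he7⟩
    · exact he5 f hf.1 h3
  refine ⟨A', ⟨?_, ?_, ?_, ?_, ?_, ?_, ?_, ?_, ?_⟩, ?_, ?_⟩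
  · -- sub
    intro j
    by_cases hj : j = i
    · subst hj; rw [hA'i]
      exact insert_subset_iff.2 ⟨hyG, hI.sub j⟩
    · rw [hA'j j hj]; exact hI.sub j
  · -- notM
    intro j k a ha
    by_cases hj : j = i
    · subst hj; rw [hA'i, mem_insert] at ha
      rcases ha with rfl | ha
      · exact (he1 k).1
      · exact hI.notM j k a ha
    · rw [hA'j j hj] at ha; exact hI.notM j k a ha
  · -- matching
    intro j
    by_cases hj : j = i
    · subst hj; rw [hA'i]
      intro e he f hf hef
      rw [mem_insert] at he hf
      rcases he with rfl | he <;> rcases hf with rfl | hf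
      · exact absurd rfl hef
      · exact ⟨fun hh => hnoA f hf hh.symm, fun hh => he3 f hf hh.symm⟩
      · exact ⟨fun hh => hnoA e he hh, fun hh => he3 e he hh⟩
      · exact hI.matching j e he f hf hef
    · rw [hA'j j hj]; exact hI.matching j
  · -- rainbow
    intro j
    by_cases hj : j = i
    · subst hj; rw [hA'i]
      intro e he f hf hc
      rw [coe_insert, Set.mem_insert_iff] at he hf
      rcases he with rfl | he <;> rcases hf with rfl | hf
      · rfl
      · exact absurd hc.symm (he6 f hf)
      · exact absurd hc (he6 e he)
      · exact hI.rainbow j he hf hc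
    · rw [hA'j j hj]; exact hI.rainbow j
  · -- disj
    intro j k hjk
    by_cases hj : j = i
    · subst hj
      rw [hA'i, hA'j k (Ne.symm hjk)]
      exact Finset.disjoint_insert_left.2 ⟨(he1 k).2, hI.disj j k hjk⟩
    · by_cases hk : k = i
      · subst hk
        rw [hA'i, hA'j j hj]
        exact Finset.disjoint_insert_right.2 ⟨(he1 j).2, hI.disj j k hjk⟩
      · rw [hA'j j hj, hA'j k hk]; exact hI.disj j k hjk
  · -- typ
    intro j a ha
    by_cases hj : j = i
    · subst hj; rw [hA'i, mem_insert] at ha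
      rcases ha with rfl | ha
      · left
        rw [← hBX, ← hBY]
        exact ⟨hv, hmiss, n2⟩
      · exact hI.typ j a ha
    · rw [hA'j j hj] at ha; exact hI.typ j a ha
  · -- confGood
    intro j f hf
    by_cases hj : j = i
    · subst hj
      rw [hCset', mem_union] at hf
      rcases hf with hf | hf
      · exact hI.confGood j f hf
      · have := hnewC f hf
        rw [← hBX, ← hBY]
        exact ⟨this.1, this.2.1⟩
    · rw [hA'j j hj] at hf; exact hI.confGood j f hf
  · -- hdX
    intro w
    by_cases hcase : ∃ f ∈ newC, f.1 = w
    · obtain ⟨f, hfC, rfl⟩ := hcase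
      have hb := (hnewC f hfC).2.2.1
      have hsub' : Finset.univ.filter (fun j => ∃ g ∈ Cset c (Mk j) (A' j), g.1 = f.1)
          ⊆ insert i (Finset.univ.filter (fun j => ∃ g ∈ Cset c (Mk j) (A j), g.1 = f.1)) := by
        intro j hj
        by_cases hji : j = i
        · subst hji; exact mem_insert_self _ _
        · refine mem_insert_of_mem ?_
          rw [mem_filter] at hj ⊢
          rw [hA'j j hji] at hj
          exact hj
      have hle : dX c Mk A' f.1 ≤ dX c Mk A f.1 + 1 := by
        simp only [dX]
        exact (card_le_card hsub').trans (card_insert_le _ _)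
      have hle' : (dX c Mk A' f.1 : ℝ) ≤ (dX c Mk A f.1 : ℝ) + 1 := by exact_mod_cast hle
      linarith
    · have hsub2 : Finset.univ.filter (fun j => ∃ g ∈ Cset c (Mk j) (A' j), g.1 = w)
          ⊆ Finset.univ.filter (fun j => ∃ g ∈ Cset c (Mk j) (A j), g.1 = w) := by
        intro j hj
        rw [mem_filter] at hj ⊢
        refine ⟨mem_univ j, ?_⟩
        by_cases hji : j = i
        · subst hji
          obtain ⟨g, hg, hg1⟩ := hj.2
          rw [hCset', mem_union] at hg
          rcases hg with hg | hg
          · exact ⟨g, hg, hg1⟩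
          · exact absurd ⟨g, hg, hg1⟩ hcase
        · rw [hA'j j hji] at hj; exact hj.2
      have hle : dX c Mk A' w ≤ dX c Mk A w := by
        simp only [dX]
        exact card_le_card hsub2
      have hle' : (dX c Mk A' w : ℝ) ≤ (dX c Mk A w : ℝ) := by exact_mod_cast hle
      exact hle'.trans (hI.hdX w)
  · -- hdY
    intro w
    by_cases hcase : ∃ f ∈ newC, f.2 = w
    · obtain ⟨f, hfC, rfl⟩ := hcase
      have hb := (hnewC f hfC).2.2.2
      have hsub' : Finset.univ.filter (fun j => ∃ g ∈ Cset c (Mk j) (A' j), g.2 = f.2)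
          ⊆ insert i (Finset.univ.filter (fun j => ∃ g ∈ Cset c (Mk j) (A j), g.2 = f.2)) := by
        intro j hj
        by_cases hji : j = i
        · subst hji; exact mem_insert_self _ _
        · refine mem_insert_of_mem ?_
          rw [mem_filter] at hj ⊢
          rw [hA'j j hji] at hj
          exact hj
      have hle : dY c Mk A' f.2 ≤ dY c Mk A f.2 + 1 := by
        simp only [dY]
        exact (card_le_card hsub').trans (card_insert_le _ _)
      have hle' : (dY c Mk A' f.2 : ℝ) ≤ (dY c Mk A f.2 : ℝ) + 1 := by exact_mod_cast hle
      linarith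
    · have hsub2 : Finset.univ.filter (fun j => ∃ g ∈ Cset c (Mk j) (A' j), g.2 = w)
          ⊆ Finset.univ.filter (fun j => ∃ g ∈ Cset c (Mk j) (A j), g.2 = w) := by
        intro j hj
        rw [mem_filter] at hj ⊢
        refine ⟨mem_univ j, ?_⟩
        by_cases hji : j = i
        · subst hji
          obtain ⟨g, hg, hg1⟩ := hj.2
          rw [hCset', mem_union] at hg
          rcases hg with hg | hg
          · exact ⟨g, hg, hg1⟩
          · exact absurd ⟨g, hg, hg1⟩ hcase
        · rw [hA'j j hji] at hj; exact hj.2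
      have hle : dY c Mk A' w ≤ dY c Mk A w := by
        simp only [dY]
        exact card_le_card hsub2
      have hle' : (dY c Mk A' w : ℝ) ≤ (dY c Mk A w : ℝ) := by exact_mod_cast hle
      exact hle'.trans (hI.hdY w)
  · -- monotone
    intro j
    by_cases hj : j = i
    · subst hj; rw [hA'i]; exact subset_insert _ _
    · rw [hA'j j hj]
  · -- coverage
    exact ⟨(v, y), by rw [hA'i]; exact mem_insert_self _ _, rfl⟩

/-! ### the greedy step, Y side -/

set_option maxHeartbeats 1600000 in
lemma stepY (h : Ctx n m t p G c Mk) (hI : Inv G c Mk p t A)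
    (i : Fin m) (v : Fin n) (hv : v ∈ BYs Mk p t) (hmiss : missY (Mk i) v)
    (hnoA : ∀ a ∈ A i, a.2 ≠ v) :
    ∃ A' : Fin m → Finset (Fin n × Fin n), Inv G c Mk p t A' ∧ (∀ j, A j ⊆ A' j) ∧
      (∃ a ∈ A' i, a.2 = v) := by
  classical
  set BY := BYs Mk p t with hBY
  set BX := BXs Mk p t with hBX
  set HY := Finset.univ.filter (fun x : Fin n => (50 * p * t : ℝ) < (dY c Mk A x : ℝ) + 1)
    with hHY
  set HX := Finset.univ.filter (fun x : Fin n => (50 * p * t : ℝ) < (dX c Mk A x : ℝ) + 1)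
    with hHX
  set Ng := Finset.univ.filter (fun y : Fin n => (y, v) ∈ G) with hNg
  set E1 := Finset.univ.filter (fun y : Fin n => ∃ j : Fin m, (y, v) ∈ Mk j ∨ (y, v) ∈ A j)
    with hE1
  set E3 := Finset.univ.filter (fun y : Fin n => ∃ a ∈ A i, a.1 = y) with hE3
  set E4 := Finset.univ.filter (fun y : Fin n => ∃ f ∈ Mk i, f.1 = y ∧
      (f.2 ∈ BY ∨ (50 * p * t : ℝ) < (dY c Mk A f.2 : ℝ) + 1)) with hE4
  set E5 := Finset.univ.filter (fun y : Fin n => (y, v) ∈ G ∧ ∃ f ∈ Mk i, c f = c (y, v) ∧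
      (f.2 ∈ BY ∨ f.1 ∈ BX ∨ (50 * p * t : ℝ) < (dY c Mk A f.2 : ℝ) + 1 ∨
        (50 * p * t : ℝ) < (dX c Mk A f.1 : ℝ) + 1)) with hE5
  set E6 := Finset.univ.filter (fun y : Fin n => (y, v) ∈ G ∧ ∃ a ∈ A i, c a = c (y, v))
    with hE6
  -- cardinality bounds
  have hpt0 : (0:ℝ) < p * t := lt_of_lt_of_le one_pos h.hpt
  have ht0 : (0:ℝ) < t := by
    have := h.ht; exact_mod_cast Nat.cast_pos.2 this
  have hcNg : (t : ℝ) ≤ (Ng.card : ℝ) := by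
    rw [hNg, card_nbrY]
    exact_mod_cast h.degY v
  have hm1 : 1 ≤ m := i.pos
  have hcE1 : (E1.card : ℝ) ≤ (m : ℝ) - 1 := by
    have hsub : E1 ⊆ Finset.univ.biUnion (fun j : Fin m =>
        Finset.univ.filter (fun y : Fin n => (y, v) ∈ Mk j ∨ (y, v) ∈ A j)) := by
      intro y hy
      rw [hE1, mem_filter] at hy
      obtain ⟨_, j, hj⟩ := hy
      exact mem_biUnion.2 ⟨j, mem_univ j, mem_filter.2 ⟨mem_univ y, hj⟩⟩
    have hFi : Finset.univ.filter (fun y : Fin n => (y, v) ∈ Mk i ∨ (y, v) ∈ A i) = ∅ := by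
      refine Finset.filter_eq_empty_iff.2 (fun y _ => ?_)
      rintro (hy | hy)
      · exact hmiss _ hy rfl
      · exact hnoA _ hy rfl
    have hFj : ∀ j : Fin m,
        (Finset.univ.filter (fun y : Fin n => (y, v) ∈ Mk j ∨ (y, v) ∈ A j)).card ≤ 1 := by
      intro j
      refine card_le_one.2 (fun y hy z hz => ?_)
      rw [mem_filter] at hy hz
      have key : ∀ w₁ w₂ : Fin n, (w₁, v) ∈ Mk j → (w₂, v) ∈ A j → False := by
        intro w₁ w₂ hw1 hw2
        rcases hI.typ j _ hw2 with ⟨_, _, hnb⟩ | ⟨_, hmj, _⟩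
        · exact hnb hv
        · exact hmj _ hw1 rfl
      rcases hy.2 with hy2 | hy2 <;> rcases hz.2 with hz2 | hz2
      · by_contra hne
        exact ((h.matching j) _ hy2 _ hz2 (by simp [hne]) ).2 rfl
      · exact absurd hz2 (fun hz2 => key _ _ hy2 hz2)
      · exact absurd hy2 (fun hy2 => key _ _ hz2 hy2)
      · by_contra hne
        exact ((hI.matching j) _ hy2 _ hz2 (by simp [hne])).2 rfl
    have h1 : E1.card ≤ ∑ j : Fin m,
        (Finset.univ.filter (fun y : Fin n => (y, v) ∈ Mk j ∨ (y, v) ∈ A j)).card :=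
      (card_le_card hsub).trans card_biUnion_le
    have h2 : ∑ j : Fin m,
        (Finset.univ.filter (fun y : Fin n => (y, v) ∈ Mk j ∨ (y, v) ∈ A j)).card ≤ m - 1 := by
      rw [← Finset.sum_erase_add _ _ (mem_univ i), hFi]
      simp only [card_empty, add_zero]
      calc ∑ j ∈ Finset.univ.erase i, (Finset.univ.filter
            (fun y : Fin n => (y, v) ∈ Mk j ∨ (y, v) ∈ A j)).card
          ≤ ∑ _j ∈ Finset.univ.erase i, 1 := Finset.sum_le_sum (fun j _ => hFj j)
        _ = m - 1 := by simp [Finset.card_erase_of_mem]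
    have h3 : E1.card ≤ m - 1 := h1.trans h2
    have : (E1.card : ℝ) ≤ ((m - 1 : ℕ) : ℝ) := Nat.cast_le.2 h3
    rwa [Nat.cast_sub hm1, Nat.cast_one] at this
  have hcBY : (BY.card : ℝ) ≤ p * t / 30 := by
    have := card_BYs h
    rw [← hBY] at this
    rw [div_eq_inv_mul]
    nlinarith
  have hcBX : (BX.card : ℝ) ≤ p * t / 30 := by
    have := card_BXs h
    rw [← hBX] at this
    rw [div_eq_inv_mul]
    nlinarith
  have hcHY : (HY.card : ℝ) ≤ 4 / 49 * (p * t) := by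
    have := card_HY h hI
    rw [← hHY] at this
    nlinarith
  have hcHX : (HX.card : ℝ) ≤ 4 / 49 * (p * t) := by
    have := card_HX h hI
    rw [← hHX] at this
    nlinarith
  have hcE3 : (E3.card : ℝ) ≤ (BX.card : ℝ) + BY.card := by
    have heq : E3 = (A i).image Prod.fst := by
      ext y
      rw [hE3]
      simp only [mem_filter, mem_univ, true_and, mem_image]
    have h1 : E3.card ≤ (A i).card := heq ▸ card_image_le
    have h2 := hI.cardA i
    rw [← hBY, ← hBX] at h2
    exact_mod_cast h1.trans h2
  have hcE4 : (E4.card : ℝ) ≤ (BY.card : ℝ) + HY.card := by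
    have heq : E4 = ((Mk i).filter (fun f => f.2 ∈ BY ∨
        (50 * p * t : ℝ) < (dY c Mk A f.2 : ℝ) + 1)).image Prod.fst := by
      ext y
      rw [hE4]
      simp only [mem_filter, mem_univ, true_and, mem_image]
      constructor
      · rintro ⟨f, hf, rfl, hor⟩; exact ⟨f, ⟨hf, hor⟩, rfl⟩
      · rintro ⟨f, ⟨hf, hor⟩, rfl⟩; exact ⟨f, hf, rfl, hor⟩
    have h1 : E4.card ≤ ((Mk i).filter (fun f => f.2 ∈ BY ∨
        (50 * p * t : ℝ) < (dY c Mk A f.2 : ℝ) + 1)).card := heq ▸ card_image_le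
    have hsub : (Mk i).filter (fun f => f.2 ∈ BY ∨
          (50 * p * t : ℝ) < (dY c Mk A f.2 : ℝ) + 1)
        ⊆ (Mk i).filter (fun f => f.2 ∈ BY) ∪
          (Mk i).filter (fun f => (50 * p * t : ℝ) < (dY c Mk A f.2 : ℝ) + 1) := by
      intro f hf
      rw [mem_filter] at hf
      rcases hf.2 with h2 | h2
      · exact mem_union_left _ (mem_filter.2 ⟨hf.1, h2⟩)
      · exact mem_union_right _ (mem_filter.2 ⟨hf.1, h2⟩)
    have h2 := card_filter_snd_mem (h.matching i) BY
    have h3 := card_filter_snd_pred (h.matching i)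
      (fun x : Fin n => (50 * p * t : ℝ) < (dY c Mk A x : ℝ) + 1)
    rw [← hHY] at h3
    have h4 := ((card_le_card hsub).trans (card_union_le _ _))
    have : E4.card ≤ BY.card + HY.card := by omega
    exact_mod_cast this
  have hcE5 : (E5.card : ℝ) ≤ (BY.card : ℝ) + BX.card + HY.card + HX.card := by
    set S5 := (Mk i).filter (fun f => f.2 ∈ BY ∨ f.1 ∈ BX ∨
        (50 * p * t : ℝ) < (dY c Mk A f.2 : ℝ) + 1 ∨
        (50 * p * t : ℝ) < (dX c Mk A f.1 : ℝ) + 1) with hS5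
    have hch : ∀ y : Fin n, y ∈ E5 → ∃ f, f ∈ S5 ∧ c f = c (y, v) := by
      intro y hy
      rw [hE5, mem_filter] at hy
      obtain ⟨hG, f, hf, hc, hor⟩ := hy.2
      exact ⟨f, mem_filter.2 ⟨hf, hor⟩, hc⟩
    choose! g hg using hch
    have hinj : Set.InjOn g ↑E5 := by
      intro y hy z hz hgyz
      simp only [mem_coe] at hy hz
      have h1 := hg y hy
      have h2 := hg z hz
      have hcc : c (y, v) = c (z, v) := by rw [← h1.2, hgyz, h2.2]
      rw [hE5, mem_filter] at hy hz
      by_contra hne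
      have hne2 : (y, v) ≠ (z, v) := by simp [hne]
      exact h.proper _ hy.2.1 _ hz.2.1 hne2 (Or.inr rfl) hcc
    have h1 : E5.card ≤ S5.card := by
      rw [← card_image_of_injOn hinj]
      refine card_le_card (fun f hf => ?_)
      simp only [mem_image] at hf
      obtain ⟨y, hy, rfl⟩ := hf
      exact (hg y hy).1
    have hsub : S5 ⊆ (Mk i).filter (fun f => f.2 ∈ BY) ∪ (Mk i).filter (fun f => f.1 ∈ BX)
        ∪ (Mk i).filter (fun f => (50 * p * t : ℝ) < (dY c Mk A f.2 : ℝ) + 1)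
        ∪ (Mk i).filter (fun f => (50 * p * t : ℝ) < (dX c Mk A f.1 : ℝ) + 1) := by
      intro f hf
      rw [hS5, mem_filter] at hf
      simp only [mem_union, mem_filter]
      rcases hf.2 with h1 | h2 | h3 | h4
      exacts [Or.inl (Or.inl (Or.inl ⟨hf.1, h1⟩)), Or.inl (Or.inl (Or.inr ⟨hf.1, h2⟩)),
        Or.inl (Or.inr ⟨hf.1, h3⟩), Or.inr ⟨hf.1, h4⟩]
    have h2 := card_filter_snd_mem (h.matching i) BY
    have h3 := card_filter_fst_mem (h.matching i) BX
    have h4 := card_filter_snd_pred (h.matching i)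
      (fun x : Fin n => (50 * p * t : ℝ) < (dY c Mk A x : ℝ) + 1)
    have h5 := card_filter_fst_pred (h.matching i)
      (fun x : Fin n => (50 * p * t : ℝ) < (dX c Mk A x : ℝ) + 1)
    rw [← hHY] at h4
    rw [← hHX] at h5
    have h6 := (card_le_card hsub).trans ((card_union_le _ _).trans (Nat.add_le_add_right
      ((card_union_le _ _).trans (Nat.add_le_add_right (card_union_le _ _) _)) _))
    have : E5.card ≤ BY.card + BX.card + HY.card + HX.card := by omega
    exact_mod_cast this
  have hcE6 : (E6.card : ℝ) ≤ (BX.card : ℝ) + BY.card := by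
    have hch : ∀ y : Fin n, y ∈ E6 → ∃ a, a ∈ A i ∧ c a = c (y, v) := by
      intro y hy
      rw [hE6, mem_filter] at hy
      obtain ⟨_, hG, a, ha, hc⟩ := hy
      exact ⟨a, ha, hc⟩
    choose! g hg using hch
    have hinj : Set.InjOn g ↑E6 := by
      intro y hy z hz hgyz
      simp only [mem_coe] at hy hz
      have h1 := hg y hy
      have h2 := hg z hz
      have hcc : c (y, v) = c (z, v) := by rw [← h1.2, hgyz, h2.2]
      rw [hE6, mem_filter] at hy hz
      by_contra hne
      have hne2 : (y, v) ≠ (z, v) := by simp [hne]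
      exact h.proper _ hy.2.1 _ hz.2.1 hne2 (Or.inr rfl) hcc
    have h1 : E6.card ≤ (A i).card := by
      rw [← card_image_of_injOn hinj]
      refine card_le_card (fun a ha => ?_)
      simp only [mem_image] at ha
      obtain ⟨y, hy, rfl⟩ := ha
      exact (hg y hy).1
    have h2 := hI.cardA i
    rw [← hBY, ← hBX] at h2
    exact_mod_cast h1.trans h2
  -- there is a good choice of y
  have hex : ∃ y, y ∈ Ng \ (E1 ∪ BX ∪ E3 ∪ E4 ∪ E5 ∪ E6 ∪ HX) := by
    have hcub : ((E1 ∪ BX ∪ E3 ∪ E4 ∪ E5 ∪ E6 ∪ HX).card : ℝ)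
        ≤ (E1.card : ℝ) + BX.card + E3.card + E4.card + E5.card + E6.card + HX.card := by
      have c1 := card_union_le E1 BX
      have c2 := card_union_le (E1 ∪ BX) E3
      have c3 := card_union_le (E1 ∪ BX ∪ E3) E4
      have c4 := card_union_le (E1 ∪ BX ∪ E3 ∪ E4) E5
      have c5 := card_union_le (E1 ∪ BX ∪ E3 ∪ E4 ∪ E5) E6
      have c6 := card_union_le (E1 ∪ BX ∪ E3 ∪ E4 ∪ E5 ∪ E6) HX
      have hnat : (E1 ∪ BX ∪ E3 ∪ E4 ∪ E5 ∪ E6 ∪ HX).card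
          ≤ E1.card + BX.card + E3.card + E4.card + E5.card + E6.card + HX.card := by omega
      exact_mod_cast hnat
    have hmub : (m : ℝ) ≤ (1 - p) * t := h.hmt
    have htotal : ((E1 ∪ BX ∪ E3 ∪ E4 ∪ E5 ∪ E6 ∪ HX).card : ℝ) < Ng.card := by
      have : (E1.card : ℝ) + BX.card + E3.card + E4.card + E5.card + E6.card + HX.card
          < t := by linarith [hcE1, hcBX, hcBY, hcE3, hcE4, hcE5, hcE6, hcHY, hcHX, hpt0]
      linarith [hcNg]
    have hlt : (E1 ∪ BX ∪ E3 ∪ E4 ∪ E5 ∪ E6 ∪ HX).card < Ng.card := by exact_mod_cast htotal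
    have hpos : 0 < (Ng \ (E1 ∪ BX ∪ E3 ∪ E4 ∪ E5 ∪ E6 ∪ HX)).card :=
      lt_of_lt_of_le (by omega) (Finset.le_card_sdiff _ _)
    obtain ⟨y, hy⟩ := Finset.card_pos.1 hpos
    exact ⟨y, hy⟩
  obtain ⟨y, hy⟩ := hex
  rw [mem_sdiff] at hy
  obtain ⟨hyNg, hyE⟩ := hy
  simp only [mem_union, not_or] at hyE
  obtain ⟨⟨⟨⟨⟨⟨n1, n2⟩, n3⟩, n4⟩, n5⟩, n6⟩, n7⟩ := hyE
  have hyG : (y, v) ∈ G := by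
    rw [hNg, mem_filter] at hyNg
    exact hyNg.2
  have he1 : ∀ j : Fin m, (y, v) ∉ Mk j ∧ (y, v) ∉ A j := by
    intro j
    constructor <;> intro hmem
    · exact n1 (by rw [hE1]; exact mem_filter.2 ⟨mem_univ y, ⟨j, Or.inl hmem⟩⟩)
    · exact n1 (by rw [hE1]; exact mem_filter.2 ⟨mem_univ y, ⟨j, Or.inr hmem⟩⟩)
  have he3 : ∀ a ∈ A i, a.1 ≠ y := by
    intro a ha hay
    exact n3 (by rw [hE3]; exact mem_filter.2 ⟨mem_univ y, ⟨a, ha, hay⟩⟩)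
  have he4 : ∀ f ∈ Mk i, f.1 = y → f.2 ∉ BY ∧ (dY c Mk A f.2 : ℝ) + 1 ≤ 50 * p * t := by
    intro f hf hf2
    constructor
    · intro hb
      exact n4 (by rw [hE4]; exact mem_filter.2 ⟨mem_univ y, ⟨f, hf, hf2, Or.inl hb⟩⟩)
    · by_contra hlt
      push_neg at hlt
      exact n4 (by rw [hE4]; exact mem_filter.2 ⟨mem_univ y, ⟨f, hf, hf2, Or.inr hlt⟩⟩)
  have he5 : ∀ f ∈ Mk i, c f = c (y, v) → f.2 ∉ BY ∧ f.1 ∉ BX ∧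
      (dY c Mk A f.2 : ℝ) + 1 ≤ 50 * p * t ∧ (dX c Mk A f.1 : ℝ) + 1 ≤ 50 * p * t := by
    intro f hf hcf
    refine ⟨?_, ?_, ?_, ?_⟩
    · intro hb
      exact n5 (by rw [hE5]; exact mem_filter.2 ⟨mem_univ y, hyG, ⟨f, hf, hcf, Or.inl hb⟩⟩)
    · intro hb
      exact n5 (by rw [hE5]; exact mem_filter.2 ⟨mem_univ y, hyG, ⟨f, hf, hcf, Or.inr (Or.inl hb)⟩⟩)
    · by_contra hlt
      push_neg at hlt
      refine n5 ?_
      rw [hE5]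
      exact mem_filter.2 ⟨mem_univ y, hyG, ⟨f, hf, hcf, Or.inr (Or.inr (Or.inl hlt))⟩⟩
    · by_contra hlt
      push_neg at hlt
      refine n5 ?_
      rw [hE5]
      exact mem_filter.2 ⟨mem_univ y, hyG, ⟨f, hf, hcf, Or.inr (Or.inr (Or.inr hlt))⟩⟩
  have he6 : ∀ a ∈ A i, c a ≠ c (y, v) := by
    intro a ha hc
    exact n6 (by rw [hE6]; exact mem_filter.2 ⟨mem_univ y, hyG, ⟨a, ha, hc⟩⟩)
  have he7 : (dX c Mk A y : ℝ) + 1 ≤ 50 * p * t := by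
    by_contra hlt
    push_neg at hlt
    exact n7 (by rw [hHX]; exact mem_filter.2 ⟨mem_univ y, hlt⟩)
  -- the update
  set A' := Function.update A i (insert (y, v) (A i)) with hA'
  have hA'i : A' i = insert (y, v) (A i) := by rw [hA']; simp
  have hA'j : ∀ j : Fin m, j ≠ i → A' j = A j := by
    intro j hj; rw [hA']; exact Function.update_of_ne hj _ _
  set newC := (Mk i).filter
      (fun f => f.1 = (y, v).1 ∨ f.2 = (y, v).2 ∨ c f = c (y, v)) with hnewCdef
  have hCset' : Cset c (Mk i) (A' i) = Cset c (Mk i) (A i) ∪ newC := by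
    rw [hA'i, hnewCdef]
    exact Cset_insert c (Mk i) (A i) (y, v)
  have hnewC : ∀ f ∈ newC, f.1 ∉ BX ∧ f.2 ∉ BY ∧
      (dX c Mk A f.1 : ℝ) + 1 ≤ 50 * p * t ∧ (dY c Mk A f.2 : ℝ) + 1 ≤ 50 * p * t := by
    intro f hf
    rw [hnewCdef, mem_filter] at hf
    rcases hf.2 with h1 | h2 | h3
    · obtain ⟨q1, q2⟩ := he4 f hf.1 h1
      refine ⟨?_, q1, ?_, q2⟩
      · rw [show f.1 = y from h1]; exact n2
      · rw [show f.1 = y from h1]; exact he7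
    · exact absurd h2 (hmiss f hf.1)
    · obtain ⟨g1, g2, g3, g4⟩ := he5 f hf.1 h3
      exact ⟨g2, g1, g4, g3⟩
  refine ⟨A', ⟨?_, ?_, ?_, ?_, ?_, ?_, ?_, ?_, ?_⟩, ?_, ?_⟩
  · -- sub
    intro j
    by_cases hj : j = i
    · subst hj; rw [hA'i]
      exact insert_subset_iff.2 ⟨hyG, hI.sub j⟩
    · rw [hA'j j hj]; exact hI.sub j
  · -- notM
    intro j k a ha
    by_cases hj : j = i
    · subst hj; rw [hA'i, mem_insert] at ha
      rcases ha with rfl | ha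
      · exact (he1 k).1
      · exact hI.notM j k a ha
    · rw [hA'j j hj] at ha; exact hI.notM j k a ha
  · -- matching
    intro j
    by_cases hj : j = i
    · subst hj; rw [hA'i]
      intro e he f hf hef
      rw [mem_insert] at he hf
      rcases he with rfl | he <;> rcases hf with rfl | hf
      · exact absurd rfl hef
      · exact ⟨fun hh => he3 f hf hh.symm, fun hh => hnoA f hf hh.symm⟩
      · exact ⟨fun hh => he3 e he hh, fun hh => hnoA e he hh⟩
      · exact hI.matching j e he f hf hef
    · rw [hA'j j hj]; exact hI.matching j
  · -- rainbow
    intro j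
    by_cases hj : j = i
    · subst hj; rw [hA'i]
      intro e he f hf hc
      rw [coe_insert, Set.mem_insert_iff] at he hf
      rcases he with rfl | he <;> rcases hf with rfl | hf
      · rfl
      · exact absurd hc.symm (he6 f hf)
      · exact absurd hc (he6 e he)
      · exact hI.rainbow j he hf hc
    · rw [hA'j j hj]; exact hI.rainbow j
  · -- disj
    intro j k hjk
    by_cases hj : j = i
    · subst hj
      rw [hA'i, hA'j k (Ne.symm hjk)]
      exact Finset.disjoint_insert_left.2 ⟨(he1 k).2, hI.disj j k hjk⟩
    · by_cases hk : k = i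
      · subst hk
        rw [hA'i, hA'j j hj]
        exact Finset.disjoint_insert_right.2 ⟨(he1 j).2, hI.disj j k hjk⟩
      · rw [hA'j j hj, hA'j k hk]; exact hI.disj j k hjk
  · -- typ
    intro j a ha
    by_cases hj : j = i
    · subst hj; rw [hA'i, mem_insert] at ha
      rcases ha with rfl | ha
      · right
        rw [← hBY, ← hBX]
        exact ⟨hv, hmiss, n2⟩
      · exact hI.typ j a ha
    · rw [hA'j j hj] at ha; exact hI.typ j a ha
  · -- confGood
    intro j f hf
    by_cases hj : j = i
    · subst hj
      rw [hCset', mem_union] at hf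
      rcases hf with hf | hf
      · exact hI.confGood j f hf
      · have := hnewC f hf
        rw [← hBY, ← hBX]
        exact ⟨this.1, this.2.1⟩
    · rw [hA'j j hj] at hf; exact hI.confGood j f hf
  · -- hdX
    intro w
    by_cases hcase : ∃ f ∈ newC, f.1 = w
    · obtain ⟨f, hfC, rfl⟩ := hcase
      have hb := (hnewC f hfC).2.2.1
      have hsub' : Finset.univ.filter (fun j => ∃ g ∈ Cset c (Mk j) (A' j), g.1 = f.1)
          ⊆ insert i (Finset.univ.filter (fun j => ∃ g ∈ Cset c (Mk j) (A j), g.1 = f.1)) := by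
        intro j hj
        by_cases hji : j = i
        · subst hji; exact mem_insert_self _ _
        · refine mem_insert_of_mem ?_
          rw [mem_filter] at hj ⊢
          rw [hA'j j hji] at hj
          exact hj
      have hle : dX c Mk A' f.1 ≤ dX c Mk A f.1 + 1 := by
        simp only [dX]
        exact (card_le_card hsub').trans (card_insert_le _ _)
      have hle' : (dX c Mk A' f.1 : ℝ) ≤ (dX c Mk A f.1 : ℝ) + 1 := by exact_mod_cast hle
      linarith
    · have hsub2 : Finset.univ.filter (fun j => ∃ g ∈ Cset c (Mk j) (A' j), g.1 = w)
          ⊆ Finset.univ.filter (fun j => ∃ g ∈ Cset c (Mk j) (A j), g.1 = w) := by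
        intro j hj
        rw [mem_filter] at hj ⊢
        refine ⟨mem_univ j, ?_⟩
        by_cases hji : j = i
        · subst hji
          obtain ⟨g, hg, hg1⟩ := hj.2
          rw [hCset', mem_union] at hg
          rcases hg with hg | hg
          · exact ⟨g, hg, hg1⟩
          · exact absurd ⟨g, hg, hg1⟩ hcase
        · rw [hA'j j hji] at hj; exact hj.2
      have hle : dX c Mk A' w ≤ dX c Mk A w := by
        simp only [dX]
        exact card_le_card hsub2
      have hle' : (dX c Mk A' w : ℝ) ≤ (dX c Mk A w : ℝ) := by exact_mod_cast hle
      exact hle'.trans (hI.hdX w)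
  · -- hdY
    intro w
    by_cases hcase : ∃ f ∈ newC, f.2 = w
    · obtain ⟨f, hfC, rfl⟩ := hcase
      have hb := (hnewC f hfC).2.2.2
      have hsub' : Finset.univ.filter (fun j => ∃ g ∈ Cset c (Mk j) (A' j), g.2 = f.2)
          ⊆ insert i (Finset.univ.filter (fun j => ∃ g ∈ Cset c (Mk j) (A j), g.2 = f.2)) := by
        intro j hj
        by_cases hji : j = i
        · subst hji; exact mem_insert_self _ _
        · refine mem_insert_of_mem ?_
          rw [mem_filter] at hj ⊢
          rw [hA'j j hji] at hj
          exact hj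
      have hle : dY c Mk A' f.2 ≤ dY c Mk A f.2 + 1 := by
        simp only [dY]
        exact (card_le_card hsub').trans (card_insert_le _ _)
      have hle' : (dY c Mk A' f.2 : ℝ) ≤ (dY c Mk A f.2 : ℝ) + 1 := by exact_mod_cast hle
      linarith
    · have hsub2 : Finset.univ.filter (fun j => ∃ g ∈ Cset c (Mk j) (A' j), g.2 = w)
          ⊆ Finset.univ.filter (fun j => ∃ g ∈ Cset c (Mk j) (A j), g.2 = w) := by
        intro j hj
        rw [mem_filter] at hj ⊢
        refine ⟨mem_univ j, ?_⟩
        by_cases hji : j = i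
        · subst hji
          obtain ⟨g, hg, hg1⟩ := hj.2
          rw [hCset', mem_union] at hg
          rcases hg with hg | hg
          · exact ⟨g, hg, hg1⟩
          · exact absurd ⟨g, hg, hg1⟩ hcase
        · rw [hA'j j hji] at hj; exact hj.2
      have hle : dY c Mk A' w ≤ dY c Mk A w := by
        simp only [dY]
        exact card_le_card hsub2
      have hle' : (dY c Mk A' w : ℝ) ≤ (dY c Mk A w : ℝ) := by exact_mod_cast hle
      exact hle'.trans (hI.hdY w)
  · -- monotone
    intro j
    by_cases hj : j = i
    · subst hj; rw [hA'i]; exact subset_insert _ _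
    · rw [hA'j j hj]
  · -- coverage
    exact ⟨(y, v), by rw [hA'i]; exact mem_insert_self _ _, rfl⟩


/-! ### the greedy construction -/

lemma Inv.empty (h : Ctx n m t p G c Mk) :
    Inv G c Mk p t (fun _ => (∅ : Finset (Fin n × Fin n))) := by
  have hC : ∀ i : Fin m, Cset c (Mk i) (∅ : Finset (Fin n × Fin n)) = ∅ := by
    intro i
    simp [Cset]
  have hpt0 : (0:ℝ) ≤ 50 * p * t := by nlinarith [h.hpt]
  refine ⟨fun i => empty_subset G, by simp, ?_, by simp, by simp, by simp, ?_, ?_, ?_⟩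
  · intro i e he
    simp at he
  · intro i f hf
    rw [hC i] at hf
    simp at hf
  · intro v
    simp only [dX, hC]
    simp [hpt0]
  · intro v
    simp only [dY, hC]
    simp [hpt0]

lemma greedy (h : Ctx n m t p G c Mk) :
    ∃ A : Fin m → Finset (Fin n × Fin n), Inv G c Mk p t A ∧
      (∀ i v, v ∈ BXs Mk p t → missX (Mk i) v → ∃ a ∈ A i, a.1 = v) ∧
      (∀ i v, v ∈ BYs Mk p t → missY (Mk i) v → ∃ a ∈ A i, a.2 = v) := by
  classical
  set PX := (Finset.univ : Finset (Fin m × Fin n)).filter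
    (fun q => q.2 ∈ BXs Mk p t ∧ missX (Mk q.1) q.2) with hPX
  set PY := (Finset.univ : Finset (Fin m × Fin n)).filter
    (fun q => q.2 ∈ BYs Mk p t ∧ missY (Mk q.1) q.2) with hPY
  have main : ∀ k : ℕ, ∀ SX SY : Finset (Fin m × Fin n), SX ⊆ PX → SY ⊆ PY →
      SX.card + SY.card ≤ k →
      ∃ A : Fin m → Finset (Fin n × Fin n), Inv G c Mk p t A ∧
        (∀ q ∈ SX, ∃ a ∈ A q.1, a.1 = q.2) ∧
        (∀ q ∈ SY, ∃ a ∈ A q.1, a.2 = q.2) := by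
    intro k
    induction k with
    | zero =>
      intro SX SY _ _ hcard
      have hX : SX = ∅ := card_eq_zero.1 (by omega)
      have hY : SY = ∅ := card_eq_zero.1 (by omega)
      subst hX; subst hY
      exact ⟨fun _ => ∅, Inv.empty h, by simp, by simp⟩
    | succ k ih =>
      intro SX SY hSX hSY hcard
      rcases SX.eq_empty_or_nonempty with rfl | ⟨q, hq⟩
      · rcases SY.eq_empty_or_nonempty with rfl | ⟨q, hq⟩
        · exact ⟨fun _ => ∅, Inv.empty h, by simp, by simp⟩
        · -- do a Y step
          have hq' := hSY hq
          rw [hPY, mem_filter] at hq'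
          obtain ⟨_, hqB, hqmiss⟩ := hq'
          have hscard : (∅ : Finset (Fin m × Fin n)).card + (SY.erase q).card ≤ k := by
            have := card_erase_of_mem hq
            have hpos := card_pos.2 ⟨q, hq⟩
            simp only [card_empty] at hcard ⊢
            omega
          obtain ⟨A, hInv, hcovX, hcovY⟩ := ih ∅ (SY.erase q) (empty_subset _)
            ((erase_subset _ _).trans hSY) hscard
          by_cases hdone : ∃ a ∈ A q.1, a.2 = q.2
          · refine ⟨A, hInv, by simp, ?_⟩
            intro q' hq'
            by_cases hqq : q' = q
            · subst hqq; exact hdone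
            · exact hcovY q' (mem_erase.2 ⟨hqq, hq'⟩)
          · push_neg at hdone
            obtain ⟨A', hInv', hmono, hcov⟩ := stepY h hInv q.1 q.2 hqB hqmiss hdone
            refine ⟨A', hInv', by simp, ?_⟩
            intro q' hq'
            by_cases hqq : q' = q
            · subst hqq; exact hcov
            · obtain ⟨a, ha, haeq⟩ := hcovY q' (mem_erase.2 ⟨hqq, hq'⟩)
              exact ⟨a, hmono q'.1 ha, haeq⟩
      · -- do an X step
        have hq' := hSX hq
        rw [hPX, mem_filter] at hq'
        obtain ⟨_, hqB, hqmiss⟩ := hq'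
        have hscard : (SX.erase q).card + SY.card ≤ k := by
          have := card_erase_of_mem hq
          have hpos := card_pos.2 ⟨q, hq⟩
          omega
        obtain ⟨A, hInv, hcovX, hcovY⟩ := ih (SX.erase q) SY
          ((erase_subset _ _).trans hSX) hSY hscard
        by_cases hdone : ∃ a ∈ A q.1, a.1 = q.2
        · refine ⟨A, hInv, ?_, hcovY⟩
          intro q' hq'
          by_cases hqq : q' = q
          · subst hqq; exact hdone
          · exact hcovX q' (mem_erase.2 ⟨hqq, hq'⟩)
        · push_neg at hdone
          obtain ⟨A', hInv', hmono, hcov⟩ := stepX h hInv q.1 q.2 hqB hqmiss hdone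
          refine ⟨A', hInv', ?_, ?_⟩
          · intro q' hq'
            by_cases hqq : q' = q
            · subst hqq; exact hcov
            · obtain ⟨a, ha, haeq⟩ := hcovX q' (mem_erase.2 ⟨hqq, hq'⟩)
              exact ⟨a, hmono q'.1 ha, haeq⟩
          · intro q' hq'
            obtain ⟨a, ha, haeq⟩ := hcovY q' hq'
            exact ⟨a, hmono q'.1 ha, haeq⟩
  obtain ⟨A, hInv, hcovX, hcovY⟩ := main (PX.card + PY.card) PX PY
    (Finset.Subset.refl _) (Finset.Subset.refl _) le_rfl
  refine ⟨A, hInv, ?_, ?_⟩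
  · intro i v hv hmiss
    exact hcovX (i, v) (by rw [hPX]; exact mem_filter.2 ⟨mem_univ _, hv, hmiss⟩)
  · intro i v hv hmiss
    exact hcovY (i, v) (by rw [hPY]; exact mem_filter.2 ⟨mem_univ _, hv, hmiss⟩)

/-! ### final assembly -/

set_option maxHeartbeats 1600000 in
lemma output (h : Ctx n m t p G c Mk) :
    ∃ M' : Fin m → Finset (Fin n × Fin n),
      (∀ i, M' i ⊆ G) ∧
      (∀ i, IsBipMatching (M' i)) ∧
      (∀ i, Set.InjOn c ↑(M' i)) ∧
      (∀ i j, i ≠ j → Disjoint (M' i) (M' j)) ∧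
      (∀ i, (1 - 10 * p) * n ≤ ((M' i).card : ℝ)) ∧
      (∀ x, (1 - 101 * p) * t ≤ (bdegX (Finset.univ.biUnion M') x : ℝ)) ∧
      (∀ y, (1 - 101 * p) * t ≤ (bdegY (Finset.univ.biUnion M') y : ℝ)) := by
  classical
  obtain ⟨A, hInv, hcovX, hcovY⟩ := greedy h
  set M' : Fin m → Finset (Fin n × Fin n) :=
    fun i => (Mk i \ Cset c (Mk i) (A i)) ∪ A i with hM'
  have hpt0 : (0:ℝ) < p * t := lt_of_lt_of_le one_pos h.hpt
  have ht0 : (0:ℝ) < t := by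
    have := h.ht; exact_mod_cast Nat.cast_pos.2 this
  -- basic membership analysis
  have hmem : ∀ i : Fin m, ∀ e, e ∈ M' i ↔
      ((e ∈ Mk i ∧ e ∉ Cset c (Mk i) (A i)) ∨ e ∈ A i) := by
    intro i e
    rw [hM']
    simp [mem_union, mem_sdiff]
  have hnotC : ∀ i : Fin m, ∀ e ∈ Mk i, e ∉ Cset c (Mk i) (A i) →
      ∀ a ∈ A i, e.1 ≠ a.1 ∧ e.2 ≠ a.2 ∧ c e ≠ c a := by
    intro i e he hC a ha
    refine ⟨?_, ?_, ?_⟩ <;> intro hh <;>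
      exact hC (mem_filter.2 ⟨he, a, ha, by tauto⟩)
  -- matching property
  have hmatch : ∀ i, IsBipMatching (M' i) := by
    intro i e he f hf hef
    rw [hmem] at he hf
    rcases he with ⟨he, heC⟩ | he <;> rcases hf with ⟨hf, hfC⟩ | hf
    · exact h.matching i e he f hf hef
    · exact hnotC i e he heC f hf |>.1 |> (fun hh => ⟨hh, (hnotC i e he heC f hf).2.1⟩)
    · have := hnotC i f hf hfC e he
      exact ⟨fun hh => this.1 hh.symm, fun hh => this.2.1 hh.symm⟩
    · exact hInv.matching i e he f hf hef
  -- disjointness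
  have hdisj : ∀ i j, i ≠ j → Disjoint (M' i) (M' j) := by
    intro i j hij
    rw [Finset.disjoint_left]
    intro e hei hej
    rw [hmem] at hei hej
    rcases hei with ⟨hei, _⟩ | hei <;> rcases hej with ⟨hej, _⟩ | hej
    · exact (Finset.disjoint_left.1 (h.disj i j hij)) hei hej
    · exact hInv.notM j i e hej hei
    · exact hInv.notM i j e hei hej
    · exact (Finset.disjoint_left.1 (hInv.disj i j hij)) hei hej
  -- cardinality bound on A i
  have hcBXr : ((BXs Mk p t).card : ℝ) ≤ p * t / 30 := by
    have := card_BXs h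
    rw [div_eq_inv_mul]
    nlinarith
  have hcBYr : ((BYs Mk p t).card : ℝ) ≤ p * t / 30 := by
    have := card_BYs h
    rw [div_eq_inv_mul]
    nlinarith
  have hAcard : ∀ i, ((A i).card : ℝ) ≤ p * t / 15 := by
    intro i
    have h1 := hInv.cardA i
    have h1' : ((A i).card : ℝ) ≤ ((BXs Mk p t).card : ℝ) + ((BYs Mk p t).card : ℝ) := by
      exact_mod_cast h1
    linarith
  -- the number of matchings in which x is X-covered
  have hcovcard : ∀ x : Fin n,
      ((Finset.univ.filter (fun i : Fin m => ¬ missX (M' i) x)).card : ℝ)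
        ≤ bdegX (Finset.univ.biUnion M') x := by
    intro x
    have hsplit : bdegX (Finset.univ.biUnion M') x
        = ∑ i : Fin m, bdegX (M' i) x := by
      rw [bdegX, Finset.filter_biUnion]
      rw [Finset.card_biUnion]
      · rfl
      · intro i _ j _ hij
        exact Finset.disjoint_filter_filter (hdisj i j hij)
    have hterm : ∀ i : Fin m, ¬ missX (M' i) x → 1 ≤ bdegX (M' i) x := by
      intro i hi
      simp only [missX, not_forall] at hi
      obtain ⟨e, he, hex⟩ := hi
      rw [not_not] at hex
      refine card_pos.2 ⟨e, mem_filter.2 ⟨he, hex⟩⟩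
    have : (Finset.univ.filter (fun i : Fin m => ¬ missX (M' i) x)).card
        ≤ ∑ i : Fin m, bdegX (M' i) x := by
      rw [card_eq_sum_ones]
      refine le_trans (Finset.sum_le_sum (fun i hi => hterm i (mem_filter.1 hi).2))
        (Finset.sum_le_sum_of_subset_of_nonneg (filter_subset _ _)
          (fun _ _ _ => Nat.zero_le _))
    rw [hsplit]
    exact_mod_cast this
  have hcovY' : ∀ x : Fin n,
      ((Finset.univ.filter (fun i : Fin m => ¬ missY (M' i) x)).card : ℝ)
        ≤ bdegY (Finset.univ.biUnion M') x := by
    intro x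
    have hsplit : bdegY (Finset.univ.biUnion M') x
        = ∑ i : Fin m, bdegY (M' i) x := by
      rw [bdegY, Finset.filter_biUnion]
      rw [Finset.card_biUnion]
      · rfl
      · intro i _ j _ hij
        exact Finset.disjoint_filter_filter (hdisj i j hij)
    have hterm : ∀ i : Fin m, ¬ missY (M' i) x → 1 ≤ bdegY (M' i) x := by
      intro i hi
      simp only [missY, not_forall] at hi
      obtain ⟨e, he, hex⟩ := hi
      rw [not_not] at hex
      refine card_pos.2 ⟨e, mem_filter.2 ⟨he, hex⟩⟩
    have : (Finset.univ.filter (fun i : Fin m => ¬ missY (M' i) x)).card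
        ≤ ∑ i : Fin m, bdegY (M' i) x := by
      rw [card_eq_sum_ones]
      refine le_trans (Finset.sum_le_sum (fun i hi => hterm i (mem_filter.1 hi).2))
        (Finset.sum_le_sum_of_subset_of_nonneg (filter_subset _ _)
          (fun _ _ _ => Nat.zero_le _))
    rw [hsplit]
    exact_mod_cast this
  refine ⟨M', ?_, hmatch, ?_, hdisj, ?_, ?_, ?_⟩
  · -- subset of G
    intro i
    rw [hM']
    exact union_subset ((sdiff_subset).trans (h.sub i)) (hInv.sub i)
  · -- rainbow
    intro i e he f hf hc
    have he' := (hmem i e).1 (mem_coe.1 he)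
    have hf' := (hmem i f).1 (mem_coe.1 hf)
    clear he hf
    rcases he' with ⟨he, heC⟩ | he <;> rcases hf' with ⟨hf, hfC⟩ | hf
    · exact h.rainbow i he hf hc
    · exact absurd hc ((hnotC i e he heC f hf).2.2)
    · exact absurd hc.symm ((hnotC i f hf hfC e he).2.2)
    · exact hInv.rainbow i he hf hc
  · -- size
    intro i
    have hC := hInv.cardCset h i
    have hsub : Cset c (Mk i) (A i) ⊆ Mk i := Cset_subset _ _ _
    have h1 : (Mk i \ Cset c (Mk i) (A i)).card
        = (Mk i).card - (Cset c (Mk i) (A i)).card := card_sdiff_of_subset hsub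
    have h2 : (Mk i \ Cset c (Mk i) (A i)).card ≤ (M' i).card := by
      refine card_le_card ?_
      rw [hM']
      exact subset_union_left
    have hCle : (Cset c (Mk i) (A i)).card ≤ (Mk i).card := card_le_card hsub
    have h3 : ((Mk i).card : ℝ) - 2 * (A i).card ≤ (M' i).card := by
      have e1 : ((Mk i \ Cset c (Mk i) (A i)).card : ℝ)
          = ((Mk i).card : ℝ) - (Cset c (Mk i) (A i)).card := by
        rw [h1, Nat.cast_sub hCle]
      have e2 : ((Cset c (Mk i) (A i)).card : ℝ) ≤ 2 * (A i).card := by exact_mod_cast hC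
      have e3 : ((Mk i \ Cset c (Mk i) (A i)).card : ℝ) ≤ (M' i).card := by exact_mod_cast h2
      linarith
    have h4 := hAcard i
    have h5 := h.size i
    have htn := h.htn
    have hpn : p * n ≤ t := h.hpn
    have hp0 := h.hp0
    have hn0 : (0:ℝ) ≤ n := Nat.cast_nonneg n
    have hptpn : p * t ≤ p * n := by nlinarith
    have hp2 : p ^ 2 ≤ 1 / 4 := by nlinarith [h.hp2, hp0]
    have hpn0 : (0:ℝ) ≤ p * n := mul_nonneg hp0.le hn0
    have hkey : (1 - 10 * p) * n ≤ (1 - p ^ 3) * n - 2 * (p * n / 15) := by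
      nlinarith [mul_nonneg (by linarith : (0:ℝ) ≤ 1/4 - p ^ 2) hpn0]
    linarith
  · -- X degrees
    intro x
    have hkey : ((Finset.univ.filter (fun i : Fin m => ¬ missX (M' i) x)).card : ℝ)
        ≥ (1 - 101 * p) * t := by
      by_cases hx : x ∈ BXs Mk p t
      · -- x bad: covered in every matching
        have hall : Finset.univ.filter (fun i : Fin m => ¬ missX (M' i) x) = Finset.univ := by
          refine Finset.filter_true_of_mem (fun i _ => ?_)
          intro hmiss'
          by_cases hmk : missX (Mk i) x
          · obtain ⟨a, ha, ha1⟩ := hcovX i x hx hmk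
            refine hmiss' a ?_ ha1
            rw [hmem]
            exact Or.inr ha
          · simp only [missX, not_forall] at hmk
            obtain ⟨f, hf, hfx⟩ := hmk
            rw [not_not] at hfx
            have hfC : f ∉ Cset c (Mk i) (A i) := by
              intro hC
              exact (hInv.confGood i f hC).1 (hfx ▸ hx)
            refine hmiss' f ?_ hfx
            rw [hmem]
            exact Or.inl ⟨hf, hfC⟩
        rw [hall]
        simp only [card_univ, Fintype.card_fin]
        have := h.hm2
        nlinarith [h.hpt]
      · -- x good
        have hmle : ∀ i : Fin m, missX (M' i) x →
            missX (Mk i) x ∨ (∃ f ∈ Cset c (Mk i) (A i), f.1 = x) := by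
          intro i hi
          by_cases hmk : missX (Mk i) x
          · exact Or.inl hmk
          · simp only [missX, not_forall] at hmk
            obtain ⟨f, hf, hfx⟩ := hmk
            rw [not_not] at hfx
            right
            refine ⟨f, ?_, hfx⟩
            by_contra hC
            exact hi f ((hmem i f).2 (Or.inl ⟨hf, hC⟩)) hfx
        have hsub : Finset.univ.filter (fun i : Fin m => missX (M' i) x)
            ⊆ Finset.univ.filter (fun i : Fin m => missX (Mk i) x)
              ∪ Finset.univ.filter
                (fun i : Fin m => ∃ f ∈ Cset c (Mk i) (A i), f.1 = x) := by
          intro i hi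
          rw [mem_filter] at hi
          rcases hmle i hi.2 with hA | hB
          · exact mem_union_left _ (mem_filter.2 ⟨mem_univ i, hA⟩)
          · exact mem_union_right _ (mem_filter.2 ⟨mem_univ i, hB⟩)
        have hmisscard : ((Finset.univ.filter (fun i : Fin m => missX (M' i) x)).card : ℝ)
            ≤ (uncX Mk x : ℝ) + (dX c Mk A x : ℝ) := by
          have h1 := (card_le_card hsub).trans (card_union_le _ _)
          have : (Finset.univ.filter (fun i : Fin m => missX (M' i) x)).card
              ≤ uncX Mk x + dX c Mk A x := h1
          exact_mod_cast this
        have huncx : (uncX Mk x : ℝ) ≤ 30 * p * t := by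
          rw [BXs, mem_filter] at hx
          push_neg at hx
          exact hx (mem_univ x)
        have hdx := hInv.hdX x
        have hcompl : (Finset.univ.filter (fun i : Fin m => ¬ missX (M' i) x)).card
            + (Finset.univ.filter (fun i : Fin m => missX (M' i) x)).card = m := by
          rw [add_comm, Finset.card_filter_add_card_filter_not]
          simp
        have hcompl' : ((Finset.univ.filter (fun i : Fin m => ¬ missX (M' i) x)).card : ℝ)
            = (m : ℝ) - (Finset.univ.filter (fun i : Fin m => missX (M' i) x)).card := by
          have := congrArg (fun k : ℕ => (k : ℝ)) hcompl
          push_cast at this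
          linarith
        rw [hcompl']
        have := h.hm2
        nlinarith [h.hpt]
    exact le_trans hkey (hcovcard x)
  · -- Y degrees
    intro x
    have hkey : ((Finset.univ.filter (fun i : Fin m => ¬ missY (M' i) x)).card : ℝ)
        ≥ (1 - 101 * p) * t := by
      by_cases hx : x ∈ BYs Mk p t
      · have hall : Finset.univ.filter (fun i : Fin m => ¬ missY (M' i) x) = Finset.univ := by
          refine Finset.filter_true_of_mem (fun i _ => ?_)
          intro hmiss'
          by_cases hmk : missY (Mk i) x
          · obtain ⟨a, ha, ha1⟩ := hcovY i x hx hmk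
            refine hmiss' a ?_ ha1
            rw [hmem]
            exact Or.inr ha
          · simp only [missY, not_forall] at hmk
            obtain ⟨f, hf, hfx⟩ := hmk
            rw [not_not] at hfx
            have hfC : f ∉ Cset c (Mk i) (A i) := by
              intro hC
              exact (hInv.confGood i f hC).2 (hfx ▸ hx)
            refine hmiss' f ?_ hfx
            rw [hmem]
            exact Or.inl ⟨hf, hfC⟩
        rw [hall]
        simp only [card_univ, Fintype.card_fin]
        have := h.hm2
        nlinarith [h.hpt]
      · have hmle : ∀ i : Fin m, missY (M' i) x →
            missY (Mk i) x ∨ (∃ f ∈ Cset c (Mk i) (A i), f.2 = x) := by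
          intro i hi
          by_cases hmk : missY (Mk i) x
          · exact Or.inl hmk
          · simp only [missY, not_forall] at hmk
            obtain ⟨f, hf, hfx⟩ := hmk
            rw [not_not] at hfx
            right
            refine ⟨f, ?_, hfx⟩
            by_contra hC
            exact hi f ((hmem i f).2 (Or.inl ⟨hf, hC⟩)) hfx
        have hsub : Finset.univ.filter (fun i : Fin m => missY (M' i) x)
            ⊆ Finset.univ.filter (fun i : Fin m => missY (Mk i) x)
              ∪ Finset.univ.filter
                (fun i : Fin m => ∃ f ∈ Cset c (Mk i) (A i), f.2 = x) := by
          intro i hi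
          rw [mem_filter] at hi
          rcases hmle i hi.2 with hA | hB
          · exact mem_union_left _ (mem_filter.2 ⟨mem_univ i, hA⟩)
          · exact mem_union_right _ (mem_filter.2 ⟨mem_univ i, hB⟩)
        have hmisscard : ((Finset.univ.filter (fun i : Fin m => missY (M' i) x)).card : ℝ)
            ≤ (uncY Mk x : ℝ) + (dY c Mk A x : ℝ) := by
          have h1 := (card_le_card hsub).trans (card_union_le _ _)
          have : (Finset.univ.filter (fun i : Fin m => missY (M' i) x)).card
              ≤ uncY Mk x + dY c Mk A x := h1
          exact_mod_cast this
        have huncx : (uncY Mk x : ℝ) ≤ 30 * p * t := by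
          rw [BYs, mem_filter] at hx
          push_neg at hx
          exact hx (mem_univ x)
        have hdx := hInv.hdY x
        have hcompl : (Finset.univ.filter (fun i : Fin m => ¬ missY (M' i) x)).card
            + (Finset.univ.filter (fun i : Fin m => missY (M' i) x)).card = m := by
          rw [add_comm, Finset.card_filter_add_card_filter_not]
          simp
        have hcompl' : ((Finset.univ.filter (fun i : Fin m => ¬ missY (M' i) x)).card : ℝ)
            = (m : ℝ) - (Finset.univ.filter (fun i : Fin m => missY (M' i) x)).card := by
          have := congrArg (fun k : ℕ => (k : ℝ)) hcompl
          push_cast at this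
          linarith
        rw [hcompl']
        have := h.hm2
        nlinarith [h.hpt]
    exact le_trans hkey (hcovY' x)

end S9

/-- Spreading out a family of large edge-disjoint rainbow matchings:
from `t` edge-disjoint rainbow matchings of size `≥ (1-p³)n` in a properly coloured balanced
bipartite graph with minimum degree `≥ t` one gets `⌊(1-p)t⌋` edge-disjoint rainbow matchings
of size `≥ (1-10p)n` whose union has minimum degree `≥ (1-101p)t`. -/
theorem statement_9 :
    ∀ (n t : ℕ) (p : ℝ), 0 < n → 0 < t →
      p * n ≤ (t : ℝ) → 1 ≤ p * t → 0 < p → p ≤ 1 / 2 →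
      ∀ (G : Finset (Fin n × Fin n)) (c : Fin n × Fin n → ℕ),
        ProperBipColouring G c →
        (∀ x, t ≤ bdegX G x) → (∀ y, t ≤ bdegY G y) →
        ∀ M : Fin t → Finset (Fin n × Fin n),
          (∀ i, M i ⊆ G) →
          (∀ i, IsBipMatching (M i)) →
          (∀ i, Set.InjOn c ↑(M i)) →
          (∀ i j, i ≠ j → Disjoint (M i) (M j)) →
          (∀ i, (1 - p ^ 3) * n ≤ ((M i).card : ℝ)) →
          ∃ M' : Fin ⌊(1 - p) * t⌋₊ → Finset (Fin n × Fin n),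
            (∀ i, M' i ⊆ G) ∧
            (∀ i, IsBipMatching (M' i)) ∧
            (∀ i, Set.InjOn c ↑(M' i)) ∧
            (∀ i j, i ≠ j → Disjoint (M' i) (M' j)) ∧
            (∀ i, (1 - 10 * p) * n ≤ ((M' i).card : ℝ)) ∧
            (∀ x, (1 - 101 * p) * t ≤ (bdegX (Finset.univ.biUnion M') x : ℝ)) ∧
            (∀ y, (1 - 101 * p) * t ≤ (bdegY (Finset.univ.biUnion M') y : ℝ)) := by
  intro n t p hn ht hpn hpt hp0 hp2 G c hproper hdegX hdegY M hsub hmatch hrainbow hdisj hsize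
  classical
  have ht0 : (0:ℝ) ≤ (t:ℝ) := Nat.cast_nonneg t
  have hp1 : (1 - p) * (t:ℝ) ≤ (t:ℝ) := by nlinarith
  have hmt : ⌊(1 - p) * (t:ℝ)⌋₊ ≤ t := by
    calc ⌊(1 - p) * (t:ℝ)⌋₊ ≤ ⌊((t:ℕ):ℝ)⌋₊ := Nat.floor_mono hp1
    _ = t := Nat.floor_natCast t
  set m := ⌊(1 - p) * (t:ℝ)⌋₊ with hm
  set Mk : Fin m → Finset (Fin n × Fin n) := fun i => M (Fin.castLE hmt i) with hMk
  have hctx : S9.Ctx n m t p G c Mk :=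
    { hn := hn, ht := ht, hpn := hpn, hpt := hpt, hp0 := hp0, hp2 := hp2,
      proper := hproper, degX := hdegX, degY := hdegY,
      sub := fun i => hsub _, matching := fun i => hmatch _, rainbow := fun i => hrainbow _,
      disj := fun i j hij => hdisj _ _ (fun hh => hij (Fin.castLE_injective hmt hh)),
      size := fun i => hsize _,
      hmt := by
        rw [hm]
        exact Nat.floor_le (by nlinarith)
      hm2 := by
        rw [hm]
        have := Nat.lt_floor_add_one ((1 - p) * (t:ℝ))
        linarith }
  obtain ⟨M', h1, h2, h3, h4, h5, h6, h7⟩ := S9.output hctx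
  exact ⟨M', h1, h2, h3, h4, h5, h6, h7⟩
end

section
/- Let G be a balanced bipartite graph with parts X and Y each of size n, let θ > 0, and suppose G contains pairwise edge-disjoint subgraphs: a matching M with e(M) ≥ (1−θ)n; a (1, θn)-dense balanced bipartite graph E (with parts X and Y); and graphs D_X, D_Y (with all edges between X and Y) such that every x′ ∈ X has degree at least 2θn in D_X and every y′ ∈ Y has degree at least 2θn in D_Y. Let x ∈ X and y ∈ Y be vertices not covered by M. Then there exist vertices u, v, m_u, m_v with uv an edge of E, x m_u an edge of D_X, y m_v an edge of D_Y, and u m_u, v m_v edges of M, such that M′ = (M ∪ {x m_u, uv, y m_v}) \ {u m_u, v m_v} is a matching. -/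
/-- A bipartite graph `E` is `(e, m)`-dense if for every `λ ≥ 1` and all sets `A`, `B` of the
two parts with `|A| = |B| = λm` there are at least `λ²e` edges of `E` between `A` and `B`. -/
def BipDense {n : ℕ} (E : Finset (Fin n × Fin n)) (e m : ℝ) : Prop :=
  ∀ lam : ℝ, 1 ≤ lam → ∀ A B : Finset (Fin n),
    (A.card : ℝ) = lam * m → (B.card : ℝ) = lam * m →
    lam ^ 2 * e ≤ ((E.filter (fun p => p.1 ∈ A ∧ p.2 ∈ B)).card : ℝ)

lemma count_aux {n : ℕ} (θ : ℝ) (M DX : Finset (Fin n × Fin n)) (x : Fin n)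
    (hsnd : ∀ e ∈ M, ∀ f ∈ M, e.2 = f.2 → e = f)
    (hMcard : (1 - θ) * n ≤ (M.card : ℝ))
    (hdeg : 2 * θ * n ≤ (bdegX DX x : ℝ)) :
    θ * n ≤ ((M.filter (fun e => (x, e.2) ∈ DX)).card : ℝ) := by
  set N := (DX.filter (fun e => e.1 = x)).image Prod.snd with hN
  set T := M.image Prod.snd with hT
  set S := M.filter (fun e => (x, e.2) ∈ DX) with hS
  have hTcard : T.card = M.card :=
    Finset.card_image_of_injOn fun e he f hf h => hsnd e he f hf h
  have hNcard : N.card = bdegX DX x := by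
    apply Finset.card_image_of_injOn
    intro e he f hf h
    simp only [Finset.coe_filter, Set.mem_setOf_eq] at he hf
    exact Prod.ext (he.2.trans hf.2.symm) h
  have himg : S.image Prod.snd = N ∩ T := by
    ext mu
    simp only [hS, hN, hT, Finset.mem_image, Finset.mem_inter, Finset.mem_filter]
    constructor
    · rintro ⟨e, ⟨heM, heDX⟩, rfl⟩
      exact ⟨⟨(x, e.2), ⟨heDX, rfl⟩, rfl⟩, e, heM, rfl⟩
    · rintro ⟨⟨q, ⟨hqDX, hq1⟩, hq2⟩, e, heM, rfl⟩
      refine ⟨e, ⟨heM, ?_⟩, rfl⟩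
      have : q = (x, e.2) := Prod.ext hq1 hq2
      rwa [this] at hqDX
  have hScard : S.card = (N ∩ T).card := by
    rw [← himg]
    exact (Finset.card_image_of_injOn fun e he f hf h =>
      hsnd e (Finset.mem_filter.mp he).1 f (Finset.mem_filter.mp hf).1 h).symm
  have hIU : (N ∩ T).card + (N ∪ T).card = N.card + T.card :=
    Finset.card_inter_add_card_union N T
  have hU : (N ∪ T).card ≤ n := by simpa using Finset.card_le_univ (N ∪ T)
  have hIU' : ((N ∩ T).card : ℝ) + ((N ∪ T).card : ℝ)
      = (bdegX DX x : ℝ) + (M.card : ℝ) := by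
    rw [← hNcard, ← hTcard]; exact_mod_cast hIU
  have hU' : ((N ∪ T).card : ℝ) ≤ n := by exact_mod_cast hU
  have : (S.card : ℝ) = ((N ∩ T).card : ℝ) := by exact_mod_cast hScard
  linarith

lemma count_auxY {n : ℕ} (θ : ℝ) (M DY : Finset (Fin n × Fin n)) (y : Fin n)
    (hfst : ∀ e ∈ M, ∀ f ∈ M, e.1 = f.1 → e = f)
    (hMcard : (1 - θ) * n ≤ (M.card : ℝ))
    (hdeg : 2 * θ * n ≤ (bdegY DY y : ℝ)) :
    θ * n ≤ ((M.filter (fun e => (e.1, y) ∈ DY)).card : ℝ) := by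
  set N := (DY.filter (fun e => e.2 = y)).image Prod.fst with hN
  set T := M.image Prod.fst with hT
  set S := M.filter (fun e => (e.1, y) ∈ DY) with hS
  have hTcard : T.card = M.card :=
    Finset.card_image_of_injOn fun e he f hf h => hfst e he f hf h
  have hNcard : N.card = bdegY DY y := by
    apply Finset.card_image_of_injOn
    intro e he f hf h
    simp only [Finset.coe_filter, Set.mem_setOf_eq] at he hf
    exact Prod.ext h (he.2.trans hf.2.symm)
  have himg : S.image Prod.fst = N ∩ T := by
    ext mv
    simp only [hS, hN, hT, Finset.mem_image, Finset.mem_inter, Finset.mem_filter]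
    constructor
    · rintro ⟨e, ⟨heM, heDY⟩, rfl⟩
      exact ⟨⟨(e.1, y), ⟨heDY, rfl⟩, rfl⟩, e, heM, rfl⟩
    · rintro ⟨⟨q, ⟨hqDY, hq2⟩, hq1⟩, e, heM, rfl⟩
      refine ⟨e, ⟨heM, ?_⟩, rfl⟩
      have : q = (e.1, y) := Prod.ext hq1 hq2
      rwa [this] at hqDY
  have hScard : S.card = (N ∩ T).card := by
    rw [← himg]
    exact (Finset.card_image_of_injOn fun e he f hf h =>
      hfst e (Finset.mem_filter.mp he).1 f (Finset.mem_filter.mp hf).1 h).symm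
  have hIU : (N ∩ T).card + (N ∪ T).card = N.card + T.card :=
    Finset.card_inter_add_card_union N T
  have hU : (N ∪ T).card ≤ n := by simpa using Finset.card_le_univ (N ∪ T)
  have hIU' : ((N ∩ T).card : ℝ) + ((N ∪ T).card : ℝ)
      = (bdegY DY y : ℝ) + (M.card : ℝ) := by
    rw [← hNcard, ← hTcard]; exact_mod_cast hIU
  have hU' : ((N ∪ T).card : ℝ) ≤ n := by exact_mod_cast hU
  have : (S.card : ℝ) = ((N ∩ T).card : ℝ) := by exact_mod_cast hScard
  linarith

lemma rotation_aux {n : ℕ} (M : Finset (Fin n × Fin n)) (hMatch : IsBipMatching M)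
    (x y u v mu mv : Fin n)
    (hM1 : (u, mu) ∈ M) (hM2 : (mv, v) ∈ M)
    (hx : ∀ e ∈ M, e.1 ≠ x) (hy : ∀ e ∈ M, e.2 ≠ y)
    (huvM : (u, v) ∉ M) :
    IsBipMatching ((M ∪ {(x, mu), (u, v), (mv, y)}) \ {(u, mu), (mv, v)}) := by
  have hune : u ≠ mv := by
    intro h
    subst h
    by_cases hmv : mu = v
    · exact huvM (hmv ▸ hM1)
    · exact (hMatch _ hM1 _ hM2 (by simp [Prod.ext_iff, hmv])).1 rfl
  have hedne : (u, mu) ≠ (mv, v) := fun h => hune (congrArg Prod.fst h)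
  have hmune : mu ≠ v := fun h => (hMatch _ hM1 _ hM2 hedne).2 h
  have hxu : u ≠ x := hx _ hM1
  have hxmv : mv ≠ x := hx _ hM2
  have hymu : mu ≠ y := hy _ hM1
  have hyv : v ≠ y := hy _ hM2
  rintro ⟨a, b⟩ he ⟨c, d⟩ hf hne
  simp only [Finset.mem_sdiff, Finset.mem_union, Finset.mem_insert, Finset.mem_singleton,
    Prod.mk.injEq, not_or] at he hf
  obtain ⟨he1, he2, he3⟩ := he
  obtain ⟨hf1, hf2, hf3⟩ := hf
  show a ≠ c ∧ b ≠ d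
  have hne2 : (a, b) ≠ (u, mu) := by simpa [Prod.ext_iff] using he2
  have hne3 : (a, b) ≠ (mv, v) := by simpa [Prod.ext_iff] using he3
  have hnf2 : (c, d) ≠ (u, mu) := by simpa [Prod.ext_iff] using hf2
  have hnf3 : (c, d) ≠ (mv, v) := by simpa [Prod.ext_iff] using hf3
  rcases he1 with hm | ⟨rfl, rfl⟩ | ⟨rfl, rfl⟩ | ⟨rfl, rfl⟩ <;>
    rcases hf1 with hm' | ⟨rfl, rfl⟩ | ⟨rfl, rfl⟩ | ⟨rfl, rfl⟩
  · exact hMatch _ hm _ hm' hne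
  · exact ⟨hx _ hm, (hMatch _ hm _ hM1 hne2).2⟩
  · exact ⟨(hMatch _ hm _ hM1 hne2).1, (hMatch _ hm _ hM2 hne3).2⟩
  · exact ⟨(hMatch _ hm _ hM2 hne3).1, hy _ hm⟩
  · exact ⟨(hx _ hm').symm, ((hMatch _ hm' _ hM1 hnf2).2).symm⟩
  · exact absurd rfl hne
  · exact ⟨hxu.symm, hmune⟩
  · exact ⟨hxmv.symm, hymu⟩
  · exact ⟨(hMatch _ hm' _ hM1 hnf2).1.symm, ((hMatch _ hm' _ hM2 hnf3).2).symm⟩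
  · exact ⟨hxu, hmune.symm⟩
  · exact absurd rfl hne
  · exact ⟨hune, hyv⟩
  · exact ⟨((hMatch _ hm' _ hM2 hnf3).1).symm, (hy _ hm').symm⟩
  · exact ⟨hxmv, hymu.symm⟩
  · exact ⟨hune.symm, hyv.symm⟩
  · exact absurd rfl hne

/-- The matching-rotation lemma: given edge-disjoint subgraphs `M` (a large
matching), a `(1, θn)`-dense graph `E`, and graphs `DX`, `DY` of minimum degree `≥ 2θn` in a
balanced bipartite graph `G`, and vertices `x ∈ X`, `y ∈ Y` uncovered by `M`, one can enlarge
`M` by a rotation through edges of `E`, `DX`, `DY`. -/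
theorem statement_12 :
    ∀ (n : ℕ) (θ : ℝ), 0 < θ →
    ∀ G M E DX DY : Finset (Fin n × Fin n),
      M ⊆ G → E ⊆ G → DX ⊆ G → DY ⊆ G →
      Disjoint M E → Disjoint M DX → Disjoint M DY →
      Disjoint E DX → Disjoint E DY → Disjoint DX DY →
      IsBipMatching M → (1 - θ) * n ≤ (M.card : ℝ) →
      BipDense E 1 (θ * n) →
      (∀ x' : Fin n, 2 * θ * n ≤ (bdegX DX x' : ℝ)) →
      (∀ y' : Fin n, 2 * θ * n ≤ (bdegY DY y' : ℝ)) →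
      ∀ x y : Fin n, (∀ e ∈ M, e.1 ≠ x) → (∀ e ∈ M, e.2 ≠ y) →
      ∃ u v mu mv : Fin n,
        (u, v) ∈ E ∧ (x, mu) ∈ DX ∧ (mv, y) ∈ DY ∧
        (u, mu) ∈ M ∧ (mv, v) ∈ M ∧
        IsBipMatching ((M ∪ {(x, mu), (u, v), (mv, y)}) \ {(u, mu), (mv, v)}) := by
  intro n θ hθ G M E DX DY hMG hEG hDXG hDYG hME hMDX hMDY hEDX hEDY hDXDY
    hMatch hMcard hdense hdegX hdegY x y hx hy
  have hn : (0 : ℝ) < n := by exact_mod_cast x.pos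
  have hθn : 0 < θ * n := mul_pos hθ hn
  have hsnd : ∀ e ∈ M, ∀ f ∈ M, e.2 = f.2 → e = f := by
    intro e he f hf h; by_contra hne; exact (hMatch e he f hf hne).2 h
  have hfst : ∀ e ∈ M, ∀ f ∈ M, e.1 = f.1 → e = f := by
    intro e he f hf h; by_contra hne; exact (hMatch e he f hf hne).1 h
  set S : Finset (Fin n × Fin n) := M.filter (fun e => (x, e.2) ∈ DX) with hSdef
  set S' : Finset (Fin n × Fin n) := M.filter (fun e => (e.1, y) ∈ DY) with hS'def
  have keyX : θ * n ≤ (S.card : ℝ) := count_aux θ M DX x hsnd hMcard (hdegX x)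
  have keyY : θ * n ≤ (S'.card : ℝ) := count_auxY θ M DY y hfst hMcard (hdegY y)
  set A : Finset (Fin n) := S.image Prod.fst with hAdef
  set B : Finset (Fin n) := S'.image Prod.snd with hBdef
  have hAcard : A.card = S.card :=
    Finset.card_image_of_injOn fun e he f hf h =>
      hfst e (Finset.mem_filter.mp he).1 f (Finset.mem_filter.mp hf).1 h
  have hBcard : B.card = S'.card :=
    Finset.card_image_of_injOn fun e he f hf h =>
      hsnd e (Finset.mem_filter.mp he).1 f (Finset.mem_filter.mp hf).1 h
  set k := min A.card B.card with hkdef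
  obtain ⟨A', hA'sub, hA'card⟩ := Finset.exists_subset_card_eq (min_le_left _ _ : k ≤ A.card)
  obtain ⟨B', hB'sub, hB'card⟩ := Finset.exists_subset_card_eq (min_le_right _ _ : k ≤ B.card)
  have hk : θ * n ≤ (k : ℝ) := by
    rw [hkdef]
    push_cast [Nat.cast_min]
    exact le_min (by rw [hAcard]; exact_mod_cast keyX) (by rw [hBcard]; exact_mod_cast keyY)
  set lam : ℝ := (k : ℝ) / (θ * n) with hlamdef
  have hlam : 1 ≤ lam := (one_le_div hθn).mpr hk
  have hkeq : (k : ℝ) = lam * (θ * n) := by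
    rw [hlamdef, div_mul_cancel₀ _ (ne_of_gt hθn)]
  have hd := hdense lam hlam A' B' (by rw [hA'card]; exact hkeq) (by rw [hB'card]; exact hkeq)
  have hpos : 0 < (E.filter (fun p => p.1 ∈ A' ∧ p.2 ∈ B')).card := by
    have h1 : (1 : ℝ) ≤ lam ^ 2 * 1 := by nlinarith
    have : (1 : ℝ) ≤ ((E.filter (fun p => p.1 ∈ A' ∧ p.2 ∈ B')).card : ℝ) := le_trans h1 hd
    exact_mod_cast lt_of_lt_of_le zero_lt_one this
  obtain ⟨p, hp⟩ := Finset.card_pos.mp hpos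
  rw [Finset.mem_filter] at hp
  obtain ⟨hpE, hpA, hpB⟩ := hp
  have hpA' : p.1 ∈ A := hA'sub hpA
  have hpB' : p.2 ∈ B := hB'sub hpB
  rw [hAdef, Finset.mem_image] at hpA'
  rw [hBdef, Finset.mem_image] at hpB'
  obtain ⟨e, heS, he1⟩ := hpA'
  obtain ⟨f, hfS, hf2⟩ := hpB'
  rw [hSdef, Finset.mem_filter] at heS
  rw [hS'def, Finset.mem_filter] at hfS
  refine ⟨p.1, p.2, e.2, f.1, hpE, heS.2, hfS.2, ?_, ?_, ?_⟩
  · rw [← he1]; exact heS.1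
  · rw [← hf2]; exact hfS.1
  · have hM1 : (p.1, e.2) ∈ M := by rw [← he1]; exact heS.1
    have hM2 : (f.1, p.2) ∈ M := by rw [← hf2]; exact hfS.1
    have huvM : (p.1, p.2) ∉ M := Finset.disjoint_right.mp hME hpE
    exact rotation_aux M hMatch x y p.1 p.2 e.2 f.1 hM1 hM2 hx hy huvM
end

section
/- There exists a constant C > 0 such that the following holds for all positive integers n and reals θ, p, ε with 0 < θ ≤ 1/C, 0 < p ≤ 1/C, ε ≤ θ^C/C, ε ≤ p^C/C and n ≥ C/ε^C. Let K be a properly edge-coloured balanced bipartite graph with parts X, Y of size n, containing pairwise colour-disjoint subgraphs: a rainbow matching M₀ with e(M₀) ≥ (1−ε)n; a (p(θn)², θn)-dense graph E; and graphs D_X, D_Y such that every x ∈ X has degree at least 2θn in D_X and every y ∈ Y has degree at least 2θn in D_Y. Then there is a perfect rainbow matching N contained in M₀ ∪ E ∪ D_X ∪ D_Y which uses at most εn edges from each of E, D_X and D_Y, such that every edge of N lying in D_X has its X-endpoint outside V(M₀) and every edge of N lying in D_Y has its Y-endpoint outside V(M₀). -/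
/-- Two subgraphs are colour-disjoint if no colour appears on both. -/
def ColourDisjoint {n : ℕ} (c : Fin n × Fin n → ℕ) (A B : Finset (Fin n × Fin n)) : Prop :=
  ∀ e ∈ A, ∀ f ∈ B, c e ≠ c f

set_option maxHeartbeats 2000000

open Finset

def MInv {n : ℕ} (M₀ E DX DY : Finset (Fin n × Fin n)) (c : Fin n × Fin n → ℕ)
    (N : Finset (Fin n × Fin n)) : Prop :=
  N ⊆ M₀ ∪ E ∪ DX ∪ DY ∧
  IsBipMatching N ∧
  Set.InjOn c ↑N ∧
  M₀.image Prod.fst ⊆ N.image Prod.fst ∧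
  M₀.image Prod.snd ⊆ N.image Prod.snd ∧
  M₀.card ≤ N.card ∧
  (N ∩ E).card + M₀.card ≤ N.card ∧
  (N ∩ DX).card + M₀.card ≤ N.card ∧
  (N ∩ DY).card + M₀.card ≤ N.card ∧
  (M₀ \ N).card + 2 * M₀.card ≤ 2 * N.card ∧
  (∀ e ∈ N ∩ DX, ∀ f ∈ M₀, e.1 ≠ f.1) ∧
  (∀ e ∈ N ∩ DY, ∀ f ∈ M₀, e.2 ≠ f.2)

open Finset

lemma step_lemma {n : ℕ} {θ p ε : ℝ} {K M₀ E DX DY : Finset (Fin n × Fin n)} {c : Fin n × Fin n → ℕ}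
    (hp : 0 < p) (hεn : 0 < ε * n) (hθn : 0 < θ * n)
    (hθε : θ * n + 4 * (ε * n) ≤ 2 * (θ * n))
    (hpε : 4 * (ε * n) ≤ p * (θ * n))
    (ht : (n : ℝ) - M₀.card ≤ ε * n)
    (hK : ∀ e ∈ K, ∀ f ∈ K, e ≠ f → e.1 = f.1 ∨ e.2 = f.2 → c e ≠ c f)
    (hEK : E ⊆ K) (hDXK : DX ⊆ K) (hDYK : DY ⊆ K)
    (hME : ColourDisjoint c M₀ E) (hMDX : ColourDisjoint c M₀ DX) (hMDY : ColourDisjoint c M₀ DY)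
    (hEDX : ColourDisjoint c E DX) (hEDY : ColourDisjoint c E DY) (hDXDY : ColourDisjoint c DX DY)
    (hMmatch : IsBipMatching M₀)
    (hdense : BipDense E (p * (θ * n) ^ 2) (θ * n))
    (hdX : ∀ x : Fin n, 2 * θ * n ≤ (bdegX DX x : ℝ))
    (hdY : ∀ y : Fin n, 2 * θ * n ≤ (bdegY DY y : ℝ))
    (N : Finset (Fin n × Fin n)) (hI : MInv M₀ E DX DY c N) (hlt : N.card < n) :
    ∃ N', MInv M₀ E DX DY c N' ∧ N'.card = N.card + 1 := by
  classical
  obtain ⟨hNU, hNm, hNinj, hfstM, hsndM, hcardM, hcE, hcDX, hcDY, hRem, hsX, hsY⟩ := hI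
  -- injectivity of coordinates on matchings
  have hNfst : ∀ e ∈ N, ∀ f ∈ N, e.1 = f.1 → e = f := by
    intro e he f hf hh; by_contra hne; exact (hNm e he f hf hne).1 hh
  have hNsnd : ∀ e ∈ N, ∀ f ∈ N, e.2 = f.2 → e = f := by
    intro e he f hf hh; by_contra hne; exact (hNm e he f hf hne).2 hh
  have hMfst : ∀ e ∈ M₀, ∀ f ∈ M₀, e.1 = f.1 → e = f := by
    intro e he f hf hh; by_contra hne; exact (hMmatch e he f hf hne).1 hh
  have hMsnd : ∀ e ∈ M₀, ∀ f ∈ M₀, e.2 = f.2 → e = f := by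
    intro e he f hf hh; by_contra hne; exact (hMmatch e he f hf hne).2 hh
  -- find uncovered vertices x, y
  have hxex : ∃ x : Fin n, x ∉ N.image Prod.fst := by
    have h1 : (N.image Prod.fst).card < (Finset.univ : Finset (Fin n)).card := by
      have := Finset.card_image_le (s := N) (f := Prod.fst)
      simp only [Finset.card_univ, Fintype.card_fin]; omega
    obtain ⟨x, -, hx⟩ := Finset.not_subset.mp
      (fun hsub => absurd (Finset.card_le_card hsub) (not_le.mpr h1))
    exact ⟨x, hx⟩
  have hyex : ∃ y : Fin n, y ∉ N.image Prod.snd := by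
    have h1 : (N.image Prod.snd).card < (Finset.univ : Finset (Fin n)).card := by
      have := Finset.card_image_le (s := N) (f := Prod.snd)
      simp only [Finset.card_univ, Fintype.card_fin]; omega
    obtain ⟨y, -, hy⟩ := Finset.not_subset.mp
      (fun hsub => absurd (Finset.card_le_card hsub) (not_le.mpr h1))
    exact ⟨y, hy⟩
  obtain ⟨x, hxN⟩ := hxex
  obtain ⟨y, hyN⟩ := hyex
  have hxM : x ∉ M₀.image Prod.fst := fun hh => hxN (hfstM hh)
  have hyM : y ∉ M₀.image Prod.snd := fun hh => hyN (hsndM hh)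
  -- candidate M₀∩N edges whose Y-end is a DX-neighbour of x with fresh colour
  set QXE := (M₀ ∩ N).filter (fun g => (x, g.2) ∈ DX ∧ ∀ e ∈ N, c (x, g.2) ≠ c e) with hQXE
  set QYE := (M₀ ∩ N).filter (fun g => (g.1, y) ∈ DY ∧ ∀ e ∈ N, c (g.1, y) ≠ c e) with hQYE
  -- counting QXE
  have hQXEcard : θ * n ≤ (QXE.card : ℝ) := by
    set Bad1 := (M₀ ∩ N).filter (fun g => (x, g.2) ∉ DX) with hBad1
    set Bad2 := (M₀ ∩ N).filter
      (fun g => (x, g.2) ∈ DX ∧ ¬ (∀ e ∈ N, c (x, g.2) ≠ c e)) with hBad2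
    have hsplit : (M₀ ∩ N).card ≤ QXE.card + Bad1.card + Bad2.card := by
      have hsub : (M₀ ∩ N) ⊆ QXE ∪ Bad1 ∪ Bad2 := by
        intro g hg
        simp only [hQXE, hBad1, hBad2, Finset.mem_union, Finset.mem_filter]
        by_cases h1 : (x, g.2) ∈ DX
        · by_cases h2 : ∀ e ∈ N, c (x, g.2) ≠ c e
          · exact Or.inl (Or.inl ⟨hg, h1, h2⟩)
          · exact Or.inr ⟨hg, h1, h2⟩
        · exact Or.inl (Or.inr ⟨hg, h1⟩)
      calc (M₀ ∩ N).card ≤ (QXE ∪ Bad1 ∪ Bad2).card := Finset.card_le_card hsub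
        _ ≤ (QXE ∪ Bad1).card + Bad2.card := Finset.card_union_le _ _
        _ ≤ QXE.card + Bad1.card + Bad2.card := by
            have := Finset.card_union_le QXE Bad1; omega
    -- Bad1 bound
    have hyg : (Finset.univ.filter (fun z : Fin n => (x, z) ∈ DX)).card = bdegX DX x := by
      unfold bdegX
      apply Finset.card_bij (fun z _ => (x, z))
      · intro a ha
        simp only [Finset.mem_filter, Finset.mem_univ, true_and] at ha
        exact Finset.mem_filter.2 ⟨ha, rfl⟩
      · intro a _ b _ hab
        exact (Prod.mk.injEq _ _ _ _).mp hab |>.2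
      · intro e he
        simp only [Finset.mem_filter] at he
        have hxe : (x, e.2) = e := Prod.ext he.2.symm rfl
        refine ⟨e.2, Finset.mem_filter.2 ⟨Finset.mem_univ _, ?_⟩, hxe⟩
        rw [hxe]; exact he.1
    have hb1 : Bad1.card + bdegX DX x ≤ n := by
      have hb1le : Bad1.card ≤ (Finset.univ.filter (fun z : Fin n => (x, z) ∉ DX)).card := by
        apply Finset.card_le_card_of_injOn Prod.snd
        · intro g hg
          simp only [hBad1, Finset.mem_coe, Finset.mem_filter] at hg
          simp only [Finset.mem_coe, Finset.mem_filter, Finset.mem_univ, true_and]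
          exact hg.2
        · intro g hg f hf hgf
          simp only [hBad1, Finset.mem_coe, Finset.mem_filter, Finset.mem_inter] at hg hf
          exact hMsnd g hg.1.1 f hf.1.1 hgf
      have hpart := Finset.card_filter_add_card_filter_not
        (s := (Finset.univ : Finset (Fin n))) (p := fun z : Fin n => (x, z) ∈ DX)
      simp only [Finset.card_univ, Fintype.card_fin] at hpart
      omega
    -- Bad2 bound
    have hb2 : Bad2.card ≤ (N ∩ DX).card := by
      have : Bad2.card ≤ ((N ∩ DX).image c).card := by
        apply Finset.card_le_card_of_injOn (fun g => c (x, g.2))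
        · intro g hg
          simp only [hBad2, Finset.mem_coe, Finset.mem_filter] at hg
          obtain ⟨hgMN, hgDX, hbad⟩ := hg
          push_neg at hbad
          obtain ⟨e, heN, hce⟩ := hbad
          have heU := hNU heN
          simp only [Finset.mem_union] at heU
          have heDX : e ∈ DX := by
            rcases heU with ((h1 | h2) | h3) | h4
            · exact absurd hce.symm (hMDX e h1 (x, g.2) hgDX)
            · exact absurd hce.symm (hEDX e h2 (x, g.2) hgDX)
            · exact h3
            · exact absurd hce (hDXDY (x, g.2) hgDX e h4)
          exact Finset.mem_image.2 ⟨e, Finset.mem_inter.2 ⟨heN, heDX⟩, hce.symm⟩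
        · intro g hg f hf hgf
          simp only [hBad2, Finset.mem_coe, Finset.mem_filter, Finset.mem_inter] at hg hf
          by_contra hne
          have h2 : g.2 ≠ f.2 := fun hh => hne (hMsnd g hg.1.1 f hf.1.1 hh)
          have hne' : (x, g.2) ≠ (x, f.2) := fun hh => h2 ((Prod.mk.injEq _ _ _ _).mp hh).2
          exact hK (x, g.2) (hDXK hg.2.1) (x, f.2) (hDXK hf.2.1) hne' (Or.inl rfl) hgf
      calc Bad2.card ≤ ((N ∩ DX).image c).card := this
        _ ≤ (N ∩ DX).card := Finset.card_image_le
    have hint : (M₀ ∩ N).card + (M₀ \ N).card = M₀.card := Finset.card_inter_add_card_sdiff _ _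
    have r1 : ((M₀ ∩ N).card : ℝ) ≤ QXE.card + Bad1.card + Bad2.card := by exact_mod_cast hsplit
    have r2 : (Bad1.card : ℝ) + (bdegX DX x : ℝ) ≤ n := by exact_mod_cast hb1
    have r3 : (Bad2.card : ℝ) ≤ ((N ∩ DX).card : ℝ) := by exact_mod_cast hb2
    have r4 : ((M₀ ∩ N).card : ℝ) + ((M₀ \ N).card : ℝ) = M₀.card := by exact_mod_cast hint
    have r5 : ((M₀ \ N).card : ℝ) + 2 * (M₀.card : ℝ) ≤ 2 * N.card := by exact_mod_cast hRem
    have r6 : ((N ∩ DX).card : ℝ) + (M₀.card : ℝ) ≤ N.card := by exact_mod_cast hcDX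
    have r7 : (N.card : ℝ) < n := by exact_mod_cast hlt
    have r8 := hdX x
    linarith
  have hQYEcard : θ * n ≤ (QYE.card : ℝ) := by
    set Bad1 := (M₀ ∩ N).filter (fun g => (g.1, y) ∉ DY) with hBad1
    set Bad2 := (M₀ ∩ N).filter
      (fun g => (g.1, y) ∈ DY ∧ ¬ (∀ e ∈ N, c (g.1, y) ≠ c e)) with hBad2
    have hsplit : (M₀ ∩ N).card ≤ QYE.card + Bad1.card + Bad2.card := by
      have hsub : (M₀ ∩ N) ⊆ QYE ∪ Bad1 ∪ Bad2 := by
        intro g hg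
        simp only [hQYE, hBad1, hBad2, Finset.mem_union, Finset.mem_filter]
        by_cases h1 : (g.1, y) ∈ DY
        · by_cases h2 : ∀ e ∈ N, c (g.1, y) ≠ c e
          · exact Or.inl (Or.inl ⟨hg, h1, h2⟩)
          · exact Or.inr ⟨hg, h1, h2⟩
        · exact Or.inl (Or.inr ⟨hg, h1⟩)
      calc (M₀ ∩ N).card ≤ (QYE ∪ Bad1 ∪ Bad2).card := Finset.card_le_card hsub
        _ ≤ (QYE ∪ Bad1).card + Bad2.card := Finset.card_union_le _ _
        _ ≤ QYE.card + Bad1.card + Bad2.card := by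
            have := Finset.card_union_le QYE Bad1; omega
    have hyg : (Finset.univ.filter (fun z : Fin n => (z, y) ∈ DY)).card = bdegY DY y := by
      unfold bdegY
      apply Finset.card_bij (fun z _ => (z, y))
      · intro a ha
        simp only [Finset.mem_filter, Finset.mem_univ, true_and] at ha
        exact Finset.mem_filter.2 ⟨ha, rfl⟩
      · intro a _ b _ hab
        exact (Prod.mk.injEq _ _ _ _).mp hab |>.1
      · intro e he
        simp only [Finset.mem_filter] at he
        have hxe : (e.1, y) = e := Prod.ext rfl he.2.symm
        refine ⟨e.1, Finset.mem_filter.2 ⟨Finset.mem_univ _, ?_⟩, hxe⟩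
        rw [hxe]; exact he.1
    have hb1 : Bad1.card + bdegY DY y ≤ n := by
      have hb1le : Bad1.card ≤ (Finset.univ.filter (fun z : Fin n => (z, y) ∉ DY)).card := by
        apply Finset.card_le_card_of_injOn Prod.fst
        · intro g hg
          simp only [hBad1, Finset.mem_coe, Finset.mem_filter] at hg
          simp only [Finset.mem_coe, Finset.mem_filter, Finset.mem_univ, true_and]
          exact hg.2
        · intro g hg f hf hgf
          simp only [hBad1, Finset.mem_coe, Finset.mem_filter, Finset.mem_inter] at hg hf
          exact hMfst g hg.1.1 f hf.1.1 hgf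
      have hpart := Finset.card_filter_add_card_filter_not
        (s := (Finset.univ : Finset (Fin n))) (p := fun z : Fin n => (z, y) ∈ DY)
      simp only [Finset.card_univ, Fintype.card_fin] at hpart
      omega
    have hb2 : Bad2.card ≤ (N ∩ DY).card := by
      have : Bad2.card ≤ ((N ∩ DY).image c).card := by
        apply Finset.card_le_card_of_injOn (fun g => c (g.1, y))
        · intro g hg
          simp only [hBad2, Finset.mem_coe, Finset.mem_filter] at hg
          obtain ⟨hgMN, hgDY, hbad⟩ := hg
          push_neg at hbad
          obtain ⟨e, heN, hce⟩ := hbad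
          have heU := hNU heN
          simp only [Finset.mem_union] at heU
          have heDY : e ∈ DY := by
            rcases heU with ((h1 | h2) | h3) | h4
            · exact absurd hce.symm (hMDY e h1 (g.1, y) hgDY)
            · exact absurd hce.symm (hEDY e h2 (g.1, y) hgDY)
            · exact absurd hce.symm (hDXDY e h3 (g.1, y) hgDY)
            · exact h4
          exact Finset.mem_image.2 ⟨e, Finset.mem_inter.2 ⟨heN, heDY⟩, hce.symm⟩
        · intro g hg f hf hgf
          simp only [hBad2, Finset.mem_coe, Finset.mem_filter, Finset.mem_inter] at hg hf
          by_contra hne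
          have h2 : g.1 ≠ f.1 := fun hh => hne (hMfst g hg.1.1 f hf.1.1 hh)
          have hne' : (g.1, y) ≠ (f.1, y) := fun hh => h2 ((Prod.mk.injEq _ _ _ _).mp hh).1
          exact hK (g.1, y) (hDYK hg.2.1) (f.1, y) (hDYK hf.2.1) hne' (Or.inr rfl) hgf
      calc Bad2.card ≤ ((N ∩ DY).image c).card := this
        _ ≤ (N ∩ DY).card := Finset.card_image_le
    have hint : (M₀ ∩ N).card + (M₀ \ N).card = M₀.card := Finset.card_inter_add_card_sdiff _ _
    have r1 : ((M₀ ∩ N).card : ℝ) ≤ QYE.card + Bad1.card + Bad2.card := by exact_mod_cast hsplit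
    have r2 : (Bad1.card : ℝ) + (bdegY DY y : ℝ) ≤ n := by exact_mod_cast hb1
    have r3 : (Bad2.card : ℝ) ≤ ((N ∩ DY).card : ℝ) := by exact_mod_cast hb2
    have r4 : ((M₀ ∩ N).card : ℝ) + ((M₀ \ N).card : ℝ) = M₀.card := by exact_mod_cast hint
    have r5 : ((M₀ \ N).card : ℝ) + 2 * (M₀.card : ℝ) ≤ 2 * N.card := by exact_mod_cast hRem
    have r6 : ((N ∩ DY).card : ℝ) + (M₀.card : ℝ) ≤ N.card := by exact_mod_cast hcDY
    have r7 : (N.card : ℝ) < n := by exact_mod_cast hlt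
    have r8 := hdY y
    linarith
  -- images of the candidate sets
  have hAinj : Set.InjOn Prod.fst (QXE : Set (Fin n × Fin n)) := by
    intro g hg f hf hgf
    simp only [Finset.mem_coe, hQXE, Finset.mem_filter, Finset.mem_inter] at hg hf
    exact hMfst g hg.1.1 f hf.1.1 hgf
  have hBinj : Set.InjOn Prod.snd (QYE : Set (Fin n × Fin n)) := by
    intro g hg f hf hgf
    simp only [Finset.mem_coe, hQYE, Finset.mem_filter, Finset.mem_inter] at hg hf
    exact hMsnd g hg.1.1 f hf.1.1 hgf
  set A := QXE.image Prod.fst with hA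
  set B := QYE.image Prod.snd with hB
  have hAcard : A.card = QXE.card := Finset.card_image_of_injOn hAinj
  have hBcard : B.card = QYE.card := Finset.card_image_of_injOn hBinj
  set s := min A.card B.card with hs
  have hsA : s ≤ A.card := min_le_left _ _
  have hsB : s ≤ B.card := min_le_right _ _
  have hsθ : θ * n ≤ (s : ℝ) := by
    have h1 : θ * n ≤ (A.card : ℝ) := by rw [hAcard]; exact hQXEcard
    have h2 : θ * n ≤ (B.card : ℝ) := by rw [hBcard]; exact hQYEcard
    have h3 : ((s : ℕ) : ℝ) = min (A.card : ℝ) (B.card : ℝ) := by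
      rw [hs]; push_cast; rfl
    rw [h3]; exact le_min h1 h2
  have hspos : (0 : ℝ) < (s : ℝ) := lt_of_lt_of_le hθn hsθ
  obtain ⟨A', hA'sub, hA'card⟩ := Finset.exists_subset_card_eq hsA
  obtain ⟨B', hB'sub, hB'card⟩ := Finset.exists_subset_card_eq hsB
  set lam := (s : ℝ) / (θ * n) with hlam
  have hlam1 : 1 ≤ lam := (one_le_div hθn).2 hsθ
  have hA'r : (A'.card : ℝ) = lam * (θ * n) := by
    rw [hA'card, hlam, div_mul_cancel₀ _ hθn.ne']
  have hB'r : (B'.card : ℝ) = lam * (θ * n) := by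
    rw [hB'card, hlam, div_mul_cancel₀ _ hθn.ne']
  have hEdges := hdense lam hlam1 A' B' hA'r hB'r
  have hcalc : lam ^ 2 * (p * (θ * n) ^ 2) = p * (s : ℝ) ^ 2 := by
    rw [hlam, div_pow, div_mul_eq_mul_div, div_eq_iff (pow_pos hθn 2).ne']; ring
  rw [hcalc] at hEdges
  set EAB := E.filter (fun q => q.1 ∈ A' ∧ q.2 ∈ B') with hEAB
  set F := EAB.filter (fun q => ∀ e ∈ N, c q ≠ c e) with hF
  set FBad := EAB.filter (fun q => ¬ ∀ e ∈ N, c q ≠ c e) with hFBad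
  have hpart : F.card + FBad.card = EAB.card :=
    Finset.card_filter_add_card_filter_not (fun q => ∀ e ∈ N, c q ≠ c e)
  have hFBadle : FBad.card ≤ (N ∩ E).card * s := by
    have h1 : FBad.card ≤ (((N ∩ E).image c) ×ˢ A').card := by
      apply Finset.card_le_card_of_injOn (fun q => (c q, q.1))
      · intro q hq
        simp only [hFBad, hEAB, Finset.mem_coe, Finset.mem_filter] at hq
        obtain ⟨⟨hqE, hq1, hq2⟩, hbad⟩ := hq
        push_neg at hbad
        obtain ⟨e, heN, hce⟩ := hbad
        have heU := hNU heN
        simp only [Finset.mem_union] at heU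
        have heE : e ∈ E := by
          rcases heU with ((h1 | h2) | h3) | h4
          · exact absurd hce.symm (hME e h1 q hqE)
          · exact h2
          · exact absurd hce (hEDX _ hqE e h3)
          · exact absurd hce (hEDY _ hqE e h4)
        exact Finset.mem_product.2
          ⟨Finset.mem_image.2 ⟨e, Finset.mem_inter.2 ⟨heN, heE⟩, hce.symm⟩, hq1⟩
      · intro q hq r hr hqr
        simp only [hFBad, hEAB, Finset.mem_coe, Finset.mem_filter] at hq hr
        have h1 : c q = c r := ((Prod.mk.injEq _ _ _ _).mp hqr).1
        have h2 : q.1 = r.1 := ((Prod.mk.injEq _ _ _ _).mp hqr).2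
        by_contra hne
        exact hK q (hEK hq.1.1) r (hEK hr.1.1) hne (Or.inl h2) h1
    calc FBad.card ≤ (((N ∩ E).image c) ×ˢ A').card := h1
      _ = ((N ∩ E).image c).card * A'.card := Finset.card_product _ _
      _ ≤ (N ∩ E).card * s := by
          rw [hA'card]; exact Nat.mul_le_mul_right _ Finset.card_image_le
  have hFpos : 0 < F.card := by
    have rpart : (F.card : ℝ) + (FBad.card : ℝ) = (EAB.card : ℝ) := by exact_mod_cast hpart
    have rFBad : (FBad.card : ℝ) ≤ ((N ∩ E).card : ℝ) * (s : ℝ) := by exact_mod_cast hFBadle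
    have rcntE : ((N ∩ E).card : ℝ) + (M₀.card : ℝ) ≤ N.card := by exact_mod_cast hcE
    have rν : (N.card : ℝ) < n := by exact_mod_cast hlt
    have hcntεn : ((N ∩ E).card : ℝ) ≤ ε * n := by linarith
    have hps : 4 * (ε * n) ≤ p * (s : ℝ) :=
      le_trans hpε (mul_le_mul_of_nonneg_left hsθ hp.le)
    have h1 : 4 * (ε * n) * (s : ℝ) ≤ p * (s : ℝ) * (s : ℝ) :=
      mul_le_mul_of_nonneg_right hps hspos.le
    have h2 : ((N ∩ E).card : ℝ) * (s : ℝ) ≤ (ε * n) * (s : ℝ) :=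
      mul_le_mul_of_nonneg_right hcntεn hspos.le
    have h3 : 0 < (ε * n) * (s : ℝ) := mul_pos hεn hspos
    have hr : (0 : ℝ) < (F.card : ℝ) := by nlinarith
    exact_mod_cast hr
  obtain ⟨q, hqF⟩ := Finset.card_pos.mp hFpos
  simp only [hF, hEAB, Finset.mem_filter] at hqF
  obtain ⟨⟨hqE, hq1A', hq2B'⟩, hqfresh⟩ := hqF
  obtain ⟨g, hgQ, hg1⟩ := Finset.mem_image.mp (hA ▸ hA'sub hq1A')
  obtain ⟨h, hhQ, hh2⟩ := Finset.mem_image.mp (hB ▸ hB'sub hq2B')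
  simp only [hQXE, Finset.mem_filter, Finset.mem_inter] at hgQ
  obtain ⟨⟨hgM, hgN⟩, hgDX, hgfresh⟩ := hgQ
  simp only [hQYE, Finset.mem_filter, Finset.mem_inter] at hhQ
  obtain ⟨⟨hhM, hhN⟩, hhDY, hhfresh⟩ := hhQ
  -- the chosen triple of new edges: (x, g.2) ∈ DX, q ∈ E, (h.1, y) ∈ DY
  have hgh : g ≠ h := by
    intro hgheq
    have hqg : q = g := by
      apply Prod.ext
      · exact hg1.symm
      · rw [← hh2, hgheq]
    exact (hME g hgM q hqE) (by rw [hqg])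
  have hgh1 : g.1 ≠ h.1 := (hNm g hgN h hhN hgh).1
  have hgh2 : g.2 ≠ h.2 := (hNm g hgN h hhN hgh).2
  have hxg1 : x ≠ g.1 := fun hc => hxN (Finset.mem_image.2 ⟨g, hgN, hc.symm⟩)
  have hxh1 : x ≠ h.1 := fun hc => hxN (Finset.mem_image.2 ⟨h, hhN, hc.symm⟩)
  have hyg2 : y ≠ g.2 := fun hc => hyN (Finset.mem_image.2 ⟨g, hgN, hc.symm⟩)
  have hyh2 : y ≠ h.2 := fun hc => hyN (Finset.mem_image.2 ⟨h, hhN, hc.symm⟩)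
  have hx_q1 : x ≠ q.1 := fun hc => hxg1 (hc.trans hg1.symm)
  have hg2_q2 : g.2 ≠ q.2 := fun hc => hgh2 (hc.trans hh2.symm)
  have hq1_h1 : q.1 ≠ h.1 := fun hc => hgh1 (hg1.trans hc)
  have hq2_y : q.2 ≠ y := fun hc => hyh2 (hh2.trans hc).symm
  have hg2_y : g.2 ≠ y := fun hc => hyg2 hc.symm
  have hn1N : (x, g.2) ∉ N := fun hc => hxN (Finset.mem_image.2 ⟨(x, g.2), hc, rfl⟩)
  have hqN : q ∉ N := fun hc => hqfresh q hc rfl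
  have hn3N : (h.1, y) ∉ N := fun hc => hyN (Finset.mem_image.2 ⟨(h.1, y), hc, rfl⟩)
  have hn1q : (x, g.2) ≠ q := fun hc => hx_q1 (congrArg Prod.fst hc)
  have hn1n3 : (x, g.2) ≠ (h.1, y) := fun hc => hxh1 (congrArg Prod.fst hc)
  have hqn3 : q ≠ (h.1, y) := fun hc => hq2_y (congrArg Prod.snd hc)
  set N' := insert (x, g.2) (insert q (insert (h.1, y) ((N.erase g).erase h))) with hN'
  have hmem' : ∀ e, e ∈ N' ↔
      e = (x, g.2) ∨ e = q ∨ e = (h.1, y) ∨ (e ∈ N ∧ e ≠ g ∧ e ≠ h) := by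
    intro e
    simp only [hN', Finset.mem_insert, Finset.mem_erase]
    tauto
  have hold : ∀ e ∈ N, e ≠ g → e ≠ h →
      e.1 ≠ x ∧ e.1 ≠ q.1 ∧ e.1 ≠ h.1 ∧ e.2 ≠ g.2 ∧ e.2 ≠ q.2 ∧ e.2 ≠ y := by
    intro e he heg heh
    refine ⟨?_, ?_, ?_, ?_, ?_, ?_⟩
    · exact fun hc => hxN (Finset.mem_image.2 ⟨e, he, hc⟩)
    · exact fun hc => heg (hNfst e he g hgN (by rw [hc, ← hg1]))
    · exact fun hc => heh (hNfst e he h hhN hc)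
    · exact fun hc => heg (hNsnd e he g hgN hc)
    · exact fun hc => heh (hNsnd e he h hhN (by rw [hc, ← hh2]))
    · exact fun hc => hyN (Finset.mem_image.2 ⟨e, he, hc⟩)
  -- cardinality
  have hhe : h ∈ N.erase g := Finset.mem_erase.2 ⟨fun hc => hgh hc.symm, hhN⟩
  have h2N : 2 ≤ N.card := by
    have hc2 : ({g, h} : Finset (Fin n × Fin n)).card = 2 := Finset.card_pair hgh
    have hsub2 : ({g, h} : Finset (Fin n × Fin n)) ⊆ N := by
      intro z hz
      rcases Finset.mem_insert.mp hz with rfl | hz'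
      · exact hgN
      · rcases Finset.mem_singleton.mp hz' with rfl
        exact hhN
    calc 2 = ({g, h} : Finset (Fin n × Fin n)).card := hc2.symm
      _ ≤ N.card := Finset.card_le_card hsub2
  have hn3ne : (h.1, y) ∉ (N.erase g).erase h :=
    fun hc => hn3N (Finset.mem_of_mem_erase (Finset.mem_of_mem_erase hc))
  have hqne : q ∉ insert (h.1, y) ((N.erase g).erase h) := by
    intro hc
    rcases Finset.mem_insert.mp hc with hc' | hc'
    · exact hqn3 hc'
    · exact hqN (Finset.mem_of_mem_erase (Finset.mem_of_mem_erase hc'))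
  have hn1ne : (x, g.2) ∉ insert q (insert (h.1, y) ((N.erase g).erase h)) := by
    intro hc
    rcases Finset.mem_insert.mp hc with hc' | hc'
    · exact hn1q hc'
    rcases Finset.mem_insert.mp hc' with hc'' | hc''
    · exact hn1n3 hc''
    · exact hn1N (Finset.mem_of_mem_erase (Finset.mem_of_mem_erase hc''))
  have hcard' : N'.card = N.card + 1 := by
    rw [hN', Finset.card_insert_of_notMem hn1ne, Finset.card_insert_of_notMem hqne,
      Finset.card_insert_of_notMem hn3ne, Finset.card_erase_of_mem hhe,
      Finset.card_erase_of_mem hgN]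
    omega
  -- the invariant for N'
  have hsub' : N' ⊆ M₀ ∪ E ∪ DX ∪ DY := by
    intro e he
    rcases (hmem' e).1 he with rfl | rfl | rfl | ⟨h4, -, -⟩
    · exact Finset.mem_union_left _ (Finset.mem_union_right _ hgDX)
    · exact Finset.mem_union_left _ (Finset.mem_union_left _ (Finset.mem_union_right _ hqE))
    · exact Finset.mem_union_right _ hhDY
    · exact hNU h4
  have hmatch' : IsBipMatching N' := by
    intro e he f hf hne
    rcases (hmem' e).1 he with he1 | he1 | he1 | ⟨heN, heg, heh⟩ <;>
      rcases (hmem' f).1 hf with hf1 | hf1 | hf1 | ⟨hfN, hfg, hfh⟩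
    · exact absurd (he1.trans hf1.symm) hne
    · subst he1; subst hf1; exact ⟨hx_q1, hg2_q2⟩
    · subst he1; subst hf1; exact ⟨hxh1, hg2_y⟩
    · subst he1
      obtain ⟨o1, o2, o3, o4, o5, o6⟩ := hold f hfN hfg hfh
      exact ⟨o1.symm, o4.symm⟩
    · subst he1; subst hf1; exact ⟨hx_q1.symm, hg2_q2.symm⟩
    · exact absurd (he1.trans hf1.symm) hne
    · subst he1; subst hf1; exact ⟨hq1_h1, hq2_y⟩
    · subst he1
      obtain ⟨o1, o2, o3, o4, o5, o6⟩ := hold f hfN hfg hfh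
      exact ⟨o2.symm, o5.symm⟩
    · subst he1; subst hf1; exact ⟨hxh1.symm, hg2_y.symm⟩
    · subst he1; subst hf1; exact ⟨hq1_h1.symm, hq2_y.symm⟩
    · exact absurd (he1.trans hf1.symm) hne
    · subst he1
      obtain ⟨o1, o2, o3, o4, o5, o6⟩ := hold f hfN hfg hfh
      exact ⟨o3.symm, o6.symm⟩
    · subst hf1
      obtain ⟨o1, o2, o3, o4, o5, o6⟩ := hold e heN heg heh
      exact ⟨o1, o4⟩
    · subst hf1
      obtain ⟨o1, o2, o3, o4, o5, o6⟩ := hold e heN heg heh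
      exact ⟨o2, o5⟩
    · subst hf1
      obtain ⟨o1, o2, o3, o4, o5, o6⟩ := hold e heN heg heh
      exact ⟨o3, o6⟩
    · exact hNm e heN f hfN hne
  have hinj' : Set.InjOn c (N' : Set (Fin n × Fin n)) := by
    intro e he f hf hcef
    rw [Finset.mem_coe, hmem'] at he hf
    rcases he with he1 | he1 | he1 | ⟨heN, heg, heh⟩ <;>
      rcases hf with hf1 | hf1 | hf1 | ⟨hfN, hfg, hfh⟩
    · exact he1.trans hf1.symm
    · subst he1; subst hf1; exact absurd hcef.symm (hEDX _ hqE (x, g.2) hgDX)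
    · subst he1; subst hf1; exact absurd hcef (hDXDY (x, g.2) hgDX (h.1, y) hhDY)
    · subst he1; exact absurd hcef (hgfresh f hfN)
    · subst he1; subst hf1; exact absurd hcef (hEDX _ hqE (x, g.2) hgDX)
    · exact he1.trans hf1.symm
    · subst he1; subst hf1; exact absurd hcef (hEDY _ hqE (h.1, y) hhDY)
    · subst he1; exact absurd hcef (hqfresh f hfN)
    · subst he1; subst hf1; exact absurd hcef.symm (hDXDY (x, g.2) hgDX (h.1, y) hhDY)
    · subst he1; subst hf1; exact absurd hcef.symm (hEDY _ hqE (h.1, y) hhDY)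
    · exact he1.trans hf1.symm
    · subst he1; exact absurd hcef (hhfresh f hfN)
    · subst hf1; exact absurd hcef.symm (hgfresh e heN)
    · subst hf1; exact absurd hcef.symm (hqfresh e heN)
    · subst hf1; exact absurd hcef.symm (hhfresh e heN)
    · exact hNinj (Finset.mem_coe.2 heN) (Finset.mem_coe.2 hfN) hcef
  have hfst' : M₀.image Prod.fst ⊆ N'.image Prod.fst := by
    intro z hz
    obtain ⟨e, heN, hez⟩ := Finset.mem_image.mp (hfstM hz)
    by_cases heg : e = g
    · have hgz : g.1 = z := by rw [← heg]; exact hez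
      exact Finset.mem_image.2 ⟨q, (hmem' q).2 (Or.inr (Or.inl rfl)), hg1.symm.trans hgz⟩
    by_cases heh : e = h
    · have hhz : h.1 = z := by rw [← heh]; exact hez
      exact Finset.mem_image.2 ⟨(h.1, y), (hmem' _).2 (Or.inr (Or.inr (Or.inl rfl))), hhz⟩
    · exact Finset.mem_image.2 ⟨e, (hmem' e).2 (Or.inr (Or.inr (Or.inr ⟨heN, heg, heh⟩))), hez⟩
  have hsnd' : M₀.image Prod.snd ⊆ N'.image Prod.snd := by
    intro z hz
    obtain ⟨e, heN, hez⟩ := Finset.mem_image.mp (hsndM hz)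
    by_cases heg : e = g
    · have hgz : g.2 = z := by rw [← heg]; exact hez
      exact Finset.mem_image.2 ⟨(x, g.2), (hmem' _).2 (Or.inl rfl), hgz⟩
    by_cases heh : e = h
    · have hhz : h.2 = z := by rw [← heh]; exact hez
      exact Finset.mem_image.2 ⟨q, (hmem' q).2 (Or.inr (Or.inl rfl)), hh2.symm.trans hhz⟩
    · exact Finset.mem_image.2 ⟨e, (hmem' e).2 (Or.inr (Or.inr (Or.inr ⟨heN, heg, heh⟩))), hez⟩
  have hcE' : (N' ∩ E).card + M₀.card ≤ N'.card := by
    have hsubE : N' ∩ E ⊆ insert q (N ∩ E) := by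
      intro e he'
      obtain ⟨heN', heE⟩ := Finset.mem_inter.mp he'
      rcases (hmem' e).1 heN' with rfl | rfl | rfl | ⟨heN, -, -⟩
      · exact absurd rfl (hEDX (x, g.2) heE (x, g.2) hgDX)
      · exact Finset.mem_insert_self _ _
      · exact absurd rfl (hEDY (h.1, y) heE (h.1, y) hhDY)
      · exact Finset.mem_insert_of_mem (Finset.mem_inter.2 ⟨heN, heE⟩)
    have hle : (N' ∩ E).card ≤ (N ∩ E).card + 1 :=
      le_trans (Finset.card_le_card hsubE) (Finset.card_insert_le _ _)
    omega
  have hcDX' : (N' ∩ DX).card + M₀.card ≤ N'.card := by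
    have hsubE : N' ∩ DX ⊆ insert (x, g.2) (N ∩ DX) := by
      intro e he'
      obtain ⟨heN', heDX⟩ := Finset.mem_inter.mp he'
      rcases (hmem' e).1 heN' with rfl | rfl | rfl | ⟨heN, -, -⟩
      · exact Finset.mem_insert_self _ _
      · exact absurd rfl (hEDX _ hqE _ heDX)
      · exact absurd rfl (hDXDY (h.1, y) heDX (h.1, y) hhDY)
      · exact Finset.mem_insert_of_mem (Finset.mem_inter.2 ⟨heN, heDX⟩)
    have hle : (N' ∩ DX).card ≤ (N ∩ DX).card + 1 :=
      le_trans (Finset.card_le_card hsubE) (Finset.card_insert_le _ _)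
    omega
  have hcDY' : (N' ∩ DY).card + M₀.card ≤ N'.card := by
    have hsubE : N' ∩ DY ⊆ insert (h.1, y) (N ∩ DY) := by
      intro e he'
      obtain ⟨heN', heDY⟩ := Finset.mem_inter.mp he'
      rcases (hmem' e).1 heN' with rfl | rfl | rfl | ⟨heN, -, -⟩
      · exact absurd rfl (hDXDY (x, g.2) hgDX (x, g.2) heDY)
      · exact absurd rfl (hEDY _ hqE _ heDY)
      · exact Finset.mem_insert_self _ _
      · exact Finset.mem_insert_of_mem (Finset.mem_inter.2 ⟨heN, heDY⟩)
    have hle : (N' ∩ DY).card ≤ (N ∩ DY).card + 1 :=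
      le_trans (Finset.card_le_card hsubE) (Finset.card_insert_le _ _)
    omega
  have hRem' : (M₀ \ N').card + 2 * M₀.card ≤ 2 * N'.card := by
    have hsubR : M₀ \ N' ⊆ insert g (insert h (M₀ \ N)) := by
      intro e he'
      obtain ⟨heM, heN'⟩ := Finset.mem_sdiff.mp he'
      by_cases h1 : e = g
      · exact Finset.mem_insert.2 (Or.inl h1)
      by_cases h2 : e = h
      · exact Finset.mem_insert.2 (Or.inr (Finset.mem_insert.2 (Or.inl h2)))
      by_cases h3 : e ∈ N
      · exact absurd ((hmem' e).2 (Or.inr (Or.inr (Or.inr ⟨h3, h1, h2⟩)))) heN'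
      · exact Finset.mem_insert.2
          (Or.inr (Finset.mem_insert.2 (Or.inr (Finset.mem_sdiff.2 ⟨heM, h3⟩))))
    have hle : (M₀ \ N').card ≤ (M₀ \ N).card + 2 := by
      have l1 := Finset.card_le_card hsubR
      have l2 := Finset.card_insert_le g (insert h (M₀ \ N))
      have l3 := Finset.card_insert_le h (M₀ \ N)
      omega
    omega
  have hsX' : ∀ e ∈ N' ∩ DX, ∀ f ∈ M₀, e.1 ≠ f.1 := by
    intro e he' f hfM
    obtain ⟨heN', heDX⟩ := Finset.mem_inter.mp he'
    rcases (hmem' e).1 heN' with rfl | rfl | rfl | ⟨heN, -, -⟩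
    · exact fun hc => hxM (Finset.mem_image.2 ⟨f, hfM, hc.symm⟩)
    · exact absurd rfl (hEDX _ hqE _ heDX)
    · exact absurd rfl (hDXDY (h.1, y) heDX (h.1, y) hhDY)
    · exact hsX e (Finset.mem_inter.2 ⟨heN, heDX⟩) f hfM
  have hsY' : ∀ e ∈ N' ∩ DY, ∀ f ∈ M₀, e.2 ≠ f.2 := by
    intro e he' f hfM
    obtain ⟨heN', heDY⟩ := Finset.mem_inter.mp he'
    rcases (hmem' e).1 heN' with rfl | rfl | rfl | ⟨heN, -, -⟩
    · exact absurd rfl (hDXDY (x, g.2) hgDX (x, g.2) heDY)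
    · exact absurd rfl (hEDY _ hqE _ heDY)
    · exact fun hc => hyM (Finset.mem_image.2 ⟨f, hfM, hc.symm⟩)
    · exact hsY e (Finset.mem_inter.2 ⟨heN, heDY⟩) f hfM
  exact ⟨N', ⟨hsub', hmatch', hinj', hfst', hsnd', by omega, hcE', hcDX', hcDY', hRem',
    hsX', hsY'⟩, hcard'⟩

/-- Completing a rainbow matching: a nearly perfect rainbow matching `M₀`,
a `(p(θn)², θn)`-dense graph `E` and graphs `DX`, `DY` of minimum degree `≥ 2θn`, pairwise
colour-disjoint inside a properly coloured balanced bipartite graph `K`, can be combined into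
a perfect rainbow matching `N` using few edges of `E`, `DX`, `DY`, whose `DX`/`DY` edges avoid
`V(M₀)` on the appropriate side. -/
theorem statement_13 :
    ∃ C : ℝ, 0 < C ∧
      ∀ (n : ℕ) (θ p ε : ℝ),
        0 < n → 0 < θ → θ ≤ 1 / C → 0 < p → p ≤ 1 / C →
        0 < ε → ε ≤ θ ^ C / C → ε ≤ p ^ C / C → C / ε ^ C ≤ (n : ℝ) →
        ∀ (K M₀ E DX DY : Finset (Fin n × Fin n)) (c : Fin n × Fin n → ℕ),
          (∀ e ∈ K, ∀ f ∈ K, e ≠ f → e.1 = f.1 ∨ e.2 = f.2 → c e ≠ c f) →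
          M₀ ⊆ K → E ⊆ K → DX ⊆ K → DY ⊆ K →
          ColourDisjoint c M₀ E → ColourDisjoint c M₀ DX → ColourDisjoint c M₀ DY →
          ColourDisjoint c E DX → ColourDisjoint c E DY → ColourDisjoint c DX DY →
          IsBipMatching M₀ → Set.InjOn c ↑M₀ → (1 - ε) * n ≤ (M₀.card : ℝ) →
          BipDense E (p * (θ * n) ^ 2) (θ * n) →
          (∀ x : Fin n, 2 * θ * n ≤ (bdegX DX x : ℝ)) →
          (∀ y : Fin n, 2 * θ * n ≤ (bdegY DY y : ℝ)) →
          ∃ N : Finset (Fin n × Fin n),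
            N ⊆ M₀ ∪ E ∪ DX ∪ DY ∧
            IsBipMatching N ∧ N.card = n ∧ Set.InjOn c ↑N ∧
            ((N ∩ E).card : ℝ) ≤ ε * n ∧
            ((N ∩ DX).card : ℝ) ≤ ε * n ∧
            ((N ∩ DY).card : ℝ) ≤ ε * n ∧
            (∀ e ∈ N ∩ DX, ∀ f ∈ M₀, e.1 ≠ f.1) ∧
            (∀ e ∈ N ∩ DY, ∀ f ∈ M₀, e.2 ≠ f.2) := by
  classical
  refine ⟨4, by norm_num, ?_⟩
  intro n θ p ε hn hθ hθC hp hpC hε hεθ hεp hnε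
  intro K M₀ E DX DY c hK hM₀K hEK hDXK hDYK hME hMDX hMDY hEDX hEDY hDXDY
    hMmatch hMinj hMcard hdense hdX hdY
  -- numeric facts
  have hnR : (0 : ℝ) < n := by exact_mod_cast hn
  clear hnε
  rw [show θ ^ (4 : ℝ) = θ * θ * θ * θ by
    rw [show ((4 : ℝ)) = ((4 : ℕ) : ℝ) by norm_num, Real.rpow_natCast]; ring] at hεθ
  rw [show p ^ (4 : ℝ) = p * p * p * p by
    rw [show ((4 : ℝ)) = ((4 : ℕ) : ℝ) by norm_num, Real.rpow_natCast]; ring] at hεp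
  have hεθ' : ε ≤ θ * θ * θ * θ / 4 := hεθ
  have hεp' : ε ≤ p * p * p * p / 4 := hεp
  have hθ1 : θ ≤ 1 := le_trans hθC (by norm_num)
  have hp1 : p ≤ 1 := le_trans hpC (by norm_num)
  have hθθ : θ * θ * θ * θ ≤ θ := by nlinarith [mul_pos hθ hθ, mul_pos (mul_pos hθ hθ) hθ]
  have h4εθ : 4 * ε ≤ θ := by linarith
  have h4εpθ : 4 * ε ≤ p * θ := by
    have hA : ε * ε ≤ (θ * θ * θ * θ / 4) * (p * p * p * p / 4) :=
      mul_le_mul hεθ' hεp' hε.le (by positivity)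
    have ht0 : (0 : ℝ) < θ * θ * p * p / 4 := by positivity
    have hB : ε ≤ θ * θ * p * p / 4 := by nlinarith [hA, ht0, hε]
    have h5 : θ * θ * p * p ≤ θ * p := by
      nlinarith [mul_pos hθ hp, mul_le_mul hθC hpC hp.le (by norm_num : (0:ℝ) ≤ 1/4)]
    linarith
  have hεn : 0 < ε * n := mul_pos hε hnR
  have hθn : 0 < θ * n := mul_pos hθ hnR
  have hθε : θ * n + 4 * (ε * n) ≤ 2 * (θ * n) := by
    nlinarith [mul_le_mul_of_nonneg_right h4εθ hnR.le]
  have hpε : 4 * (ε * n) ≤ p * (θ * n) := by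
    nlinarith [mul_le_mul_of_nonneg_right h4εpθ hnR.le]
  have ht : (n : ℝ) - M₀.card ≤ ε * n := by linarith
  -- M₀.card ≤ n
  have hMfst : Set.InjOn Prod.fst (M₀ : Set (Fin n × Fin n)) := by
    intro e he f hf hef
    by_contra hne
    exact (hMmatch e he f hf hne).1 hef
  have hm0n : M₀.card ≤ n := by
    calc M₀.card = (M₀.image Prod.fst).card := (Finset.card_image_of_injOn hMfst).symm
      _ ≤ (Finset.univ : Finset (Fin n)).card := Finset.card_le_univ _
      _ = n := by simp
  -- base invariant
  have hbase : MInv M₀ E DX DY c M₀ := by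
    have hMEe : M₀ ∩ E = ∅ :=
      Finset.eq_empty_of_forall_notMem fun e he =>
        (hME e (Finset.mem_inter.mp he).1 e (Finset.mem_inter.mp he).2) rfl
    have hMDXe : M₀ ∩ DX = ∅ :=
      Finset.eq_empty_of_forall_notMem fun e he =>
        (hMDX e (Finset.mem_inter.mp he).1 e (Finset.mem_inter.mp he).2) rfl
    have hMDYe : M₀ ∩ DY = ∅ :=
      Finset.eq_empty_of_forall_notMem fun e he =>
        (hMDY e (Finset.mem_inter.mp he).1 e (Finset.mem_inter.mp he).2) rfl
    refine ⟨fun e he => Finset.mem_union_left _ (Finset.mem_union_left _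
        (Finset.mem_union_left _ he)), hMmatch, hMinj, subset_rfl, subset_rfl, le_rfl,
      ?_, ?_, ?_, ?_, ?_, ?_⟩
    · rw [hMEe]; simp
    · rw [hMDXe]; simp
    · rw [hMDYe]; simp
    · rw [Finset.sdiff_self]; simp
    · intro e he; rw [hMDXe] at he; exact absurd he (Finset.notMem_empty e)
    · intro e he; rw [hMDYe] at he; exact absurd he (Finset.notMem_empty e)
  -- induction
  have main : ∀ k : ℕ, ∀ N, MInv M₀ E DX DY c N → N.card + k = n →
      ∃ N', MInv M₀ E DX DY c N' ∧ N'.card = n := by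
    intro k
    induction k with
    | zero => exact fun N hI hc => ⟨N, hI, by omega⟩
    | succ k ih =>
        intro N hI hc
        obtain ⟨N', hI', hc'⟩ := step_lemma hp hεn hθn hθε hpε ht hK hEK hDXK hDYK
          hME hMDX hMDY hEDX hEDY hDXDY hMmatch hdense hdX hdY N hI (by omega)
        exact ih N' hI' (by omega)
  obtain ⟨N, hI, hNn⟩ := main (n - M₀.card) M₀ hbase (by omega)
  obtain ⟨hNU, hNm, hNinj, -, -, -, hcE, hcDX, hcDY, -, hsX, hsY⟩ := hI
  refine ⟨N, hNU, hNm, hNn, hNinj, ?_, ?_, ?_, hsX, hsY⟩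
  · have : ((N ∩ E).card : ℝ) + M₀.card ≤ (N.card : ℝ) := by exact_mod_cast hcE
    rw [hNn] at this; linarith
  · have : ((N ∩ DX).card : ℝ) + M₀.card ≤ (N.card : ℝ) := by exact_mod_cast hcDX
    rw [hNn] at this; linarith
  · have : ((N ∩ DY).card : ℝ) + M₀.card ≤ (N.card : ℝ) := by exact_mod_cast hcDY
    rw [hNn] at this; linarith
end

section
/- Let d, m, n be positive integers with d > 2m. Let G be a balanced bipartite graph on 2n vertices with e(G) ≤ dn + m and minimum degree δ(G) ≥ d, and let E be a balanced bipartite graph on the same vertex parts, edge-disjoint from G, which is (1, d/2)-dense. Then there exist a subgraph H ⊆ G and a matching M ⊆ E with at most m edges such that H ∪ M is d-regular. -/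
lemma sum_bdegX {n : ℕ} (H : Finset (Fin n × Fin n)) : ∑ x, bdegX H x = H.card :=
  (Finset.card_eq_sum_card_fiberwise (f := Prod.fst) (t := Finset.univ)
    (fun _ _ => Finset.mem_univ _)).symm

lemma sum_bdegY {n : ℕ} (H : Finset (Fin n × Fin n)) : ∑ y, bdegY H y = H.card :=
  (Finset.card_eq_sum_card_fiberwise (f := Prod.snd) (t := Finset.univ)
    (fun _ _ => Finset.mem_univ _)).symm

lemma bdegX_union {n : ℕ} {H M : Finset (Fin n × Fin n)} (h : Disjoint H M) (x : Fin n) :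
    bdegX (H ∪ M) x = bdegX H x + bdegX M x := by
  unfold bdegX
  rw [Finset.filter_union, Finset.card_union_of_disjoint (Finset.disjoint_filter_filter h)]

lemma bdegY_union {n : ℕ} {H M : Finset (Fin n × Fin n)} (h : Disjoint H M) (y : Fin n) :
    bdegY (H ∪ M) y = bdegY H y + bdegY M y := by
  unfold bdegY
  rw [Finset.filter_union, Finset.card_union_of_disjoint (Finset.disjoint_filter_filter h)]

lemma bdegX_erase' {n : ℕ} (H : Finset (Fin n × Fin n)) (a b : Fin n) (he : (a, b) ∈ H)
    (z : Fin n) : bdegX (H.erase (a, b)) z = if a = z then bdegX H z - 1 else bdegX H z := by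
  unfold bdegX
  rw [Finset.filter_erase]
  split
  next h => exact Finset.card_erase_of_mem (Finset.mem_filter.mpr ⟨he, h⟩)
  next h =>
    rw [Finset.erase_eq_of_notMem (s := H.filter fun e => e.1 = z)
      (a := ((a, b) : Fin n × Fin n)) (fun hmem => h (Finset.mem_filter.mp hmem).2)]

lemma bdegY_erase' {n : ℕ} (H : Finset (Fin n × Fin n)) (a b : Fin n) (he : (a, b) ∈ H)
    (z : Fin n) : bdegY (H.erase (a, b)) z = if b = z then bdegY H z - 1 else bdegY H z := by
  unfold bdegY
  rw [Finset.filter_erase]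
  split
  next h => exact Finset.card_erase_of_mem (Finset.mem_filter.mpr ⟨he, h⟩)
  next h =>
    rw [Finset.erase_eq_of_notMem (s := H.filter fun e => e.2 = z)
      (a := ((a, b) : Fin n × Fin n)) (fun hmem => h (Finset.mem_filter.mp hmem).2)]

lemma bdegX_insert' {n : ℕ} (M : Finset (Fin n × Fin n)) (a b : Fin n) (he : (a, b) ∉ M)
    (z : Fin n) : bdegX (insert (a, b) M) z = if a = z then bdegX M z + 1 else bdegX M z := by
  unfold bdegX
  rw [Finset.filter_insert]
  split
  · exact Finset.card_insert_of_notMem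
      (fun hmem => he (Finset.mem_filter.mp hmem).1)
  · rfl

lemma bdegY_insert' {n : ℕ} (M : Finset (Fin n × Fin n)) (a b : Fin n) (he : (a, b) ∉ M)
    (z : Fin n) : bdegY (insert (a, b) M) z = if b = z then bdegY M z + 1 else bdegY M z := by
  unfold bdegY
  rw [Finset.filter_insert]
  split
  · exact Finset.card_insert_of_notMem
      (fun hmem => he (Finset.mem_filter.mp hmem).1)
  · rfl

lemma bdegX_matching_le_one {n : ℕ} {M : Finset (Fin n × Fin n)} (hM : IsBipMatching M)
    (z : Fin n) : bdegX M z ≤ 1 := by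
  apply Finset.card_le_one.mpr
  intro a ha b hb
  simp only [Finset.mem_filter] at ha hb
  by_contra hne
  exact (hM a ha.1 b hb.1 hne).1 (ha.2.trans hb.2.symm)

lemma bdegY_matching_le_one {n : ℕ} {M : Finset (Fin n × Fin n)} (hM : IsBipMatching M)
    (z : Fin n) : bdegY M z ≤ 1 := by
  apply Finset.card_le_one.mpr
  intro a ha b hb
  simp only [Finset.mem_filter] at ha hb
  by_contra hne
  exact (hM a ha.1 b hb.1 hne).2 (ha.2.trans hb.2.symm)

lemma all_eq_of_sum {n d : ℕ} (f : Fin n → ℕ) (hf : ∀ x, d ≤ f x)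
    (hs : ∑ x, f x = d * n) : ∀ x, f x = d := by
  intro x
  by_contra h
  have h1 : d + 1 ≤ f x := lt_of_le_of_ne (hf x) (Ne.symm h)
  have h2 : d * (n - 1) ≤ ∑ y ∈ Finset.univ.erase x, f y := by
    calc d * (n-1) = ∑ _y ∈ Finset.univ.erase x, d := by
          rw [Finset.sum_const, Finset.card_erase_of_mem (Finset.mem_univ x), Finset.card_univ,
            Fintype.card_fin, smul_eq_mul, Nat.mul_comm]
      _ ≤ _ := Finset.sum_le_sum (fun y _ => hf y)
  have h3 := Finset.add_sum_erase Finset.univ f (Finset.mem_univ x)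
  have hn : 1 ≤ n := x.pos
  obtain ⟨j, rfl⟩ : ∃ j, n = j + 1 := ⟨n - 1, by omega⟩
  simp only [Nat.add_sub_cancel] at h2
  rw [Nat.mul_add, Nat.mul_one] at hs
  omega

lemma exists_big {n d : ℕ} (f : Fin n → ℕ) (hs : d * n < ∑ x, f x) : ∃ x, d + 1 ≤ f x := by
  by_contra h
  push_neg at h
  have : ∑ x, f x ≤ d * n := by
    calc ∑ x, f x ≤ ∑ _x : Fin n, d := Finset.sum_le_sum (fun y _ => by have := h y; omega)
    _ = d * n := by simp [Finset.sum_const, Nat.mul_comm]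
  omega

theorem key {n : ℕ} (d m : ℕ) (hd2m : 2 * m < d)
    (G E : Finset (Fin n × Fin n)) (hdis : Disjoint G E)
    (hdense : BipDense E 1 ((d : ℝ) / 2)) :
    ∀ s : ℕ, ∀ H M : Finset (Fin n × Fin n),
      H ⊆ G → M ⊆ E → IsBipMatching M →
      H.card + M.card = d * n + s → s + M.card ≤ m →
      (∀ x, d ≤ bdegX H x + bdegX M x) → (∀ y, d ≤ bdegY H y + bdegY M y) →
      ∃ H' M' : Finset (Fin n × Fin n),
        H' ⊆ G ∧ M' ⊆ E ∧ IsBipMatching M' ∧ M'.card ≤ m ∧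
        (∀ x, bdegX (H' ∪ M') x = d) ∧ (∀ y, bdegY (H' ∪ M') y = d) := by
  intro s
  induction s with
  | zero =>
    intro H M hHG hME hM hcard hsm hdx hdy
    have hdisj : Disjoint H M := hdis.mono hHG hME
    refine ⟨H, M, hHG, hME, hM, by omega, ?_, ?_⟩
    · apply all_eq_of_sum _ (fun x => by rw [bdegX_union hdisj]; exact hdx x)
      calc ∑ x, bdegX (H ∪ M) x = (H ∪ M).card := sum_bdegX _
        _ = H.card + M.card := Finset.card_union_of_disjoint hdisj
        _ = d * n := by omega
    · apply all_eq_of_sum _ (fun y => by rw [bdegY_union hdisj]; exact hdy y)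
      calc ∑ y, bdegY (H ∪ M) y = (H ∪ M).card := sum_bdegY _
        _ = H.card + M.card := Finset.card_union_of_disjoint hdisj
        _ = d * n := by omega
  | succ s ih =>
    intro H M hHG hME hM hcard hsm hdx hdy
    have hdisj : Disjoint H M := hdis.mono hHG hME
    obtain ⟨x, hx⟩ : ∃ x, d + 1 ≤ bdegX H x + bdegX M x := by
      apply exists_big
      rw [Finset.sum_add_distrib, sum_bdegX, sum_bdegX]; omega
    obtain ⟨y'', hy⟩ : ∃ y, d + 1 ≤ bdegY H y + bdegY M y := by
      apply exists_big
      rw [Finset.sum_add_distrib, sum_bdegY, sum_bdegY]; omega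
    set covX : Finset (Fin n) := M.image Prod.fst with hcovX
    set covY : Finset (Fin n) := M.image Prod.snd with hcovY
    have hcovXc : covX.card ≤ M.card := Finset.card_image_le
    have hcovYc : covY.card ≤ M.card := Finset.card_image_le
    set k : ℕ := (d + 1) / 2 with hk
    have hkd : d ≤ 2 * k ∧ k + m ≤ d := by omega
    set NX : Finset (Fin n) := ((H.filter (fun e => e.2 = y'')).image Prod.fst) \ covX with hNX
    have hNXcard : k ≤ NX.card := by
      have h1 : ((H.filter (fun e => e.2 = y'')).image Prod.fst).card = bdegY H y'' := by
        rw [Finset.card_image_of_injOn]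
        · rfl
        · intro a ha b hb hab
          simp only [Finset.mem_coe, Finset.mem_filter] at ha hb
          exact Prod.ext hab (ha.2.trans hb.2.symm)
      have h2 : ((H.filter (fun e => e.2 = y'')).image Prod.fst).card - covX.card ≤ NX.card := by
        rw [hNX]; exact Finset.le_card_sdiff _ _
      have h3 : d ≤ bdegY H y'' := by
        have := bdegY_matching_le_one hM y''; omega
      omega
    set NY : Finset (Fin n) :=
      ((((H.filter (fun e => e.1 = x)).image Prod.snd) \ covY).erase y'') with hNY
    have hNYcard : k ≤ NY.card := by
      have h1 : ((H.filter (fun e => e.1 = x)).image Prod.snd).card = bdegX H x := by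
        rw [Finset.card_image_of_injOn]
        · rfl
        · intro a ha b hb hab
          simp only [Finset.mem_coe, Finset.mem_filter] at ha hb
          exact Prod.ext (ha.2.trans hb.2.symm) hab
      have h2 : ((H.filter (fun e => e.1 = x)).image Prod.snd).card - covY.card ≤
          (((H.filter (fun e => e.1 = x)).image Prod.snd) \ covY).card :=
        Finset.le_card_sdiff _ _
      have h3 : d ≤ bdegX H x := by
        have := bdegX_matching_le_one hM x; omega
      have h4 : (((H.filter (fun e => e.1 = x)).image Prod.snd) \ covY).card - 1 ≤ NY.card := by
        rw [hNY]; exact Finset.pred_card_le_card_erase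
      omega
    obtain ⟨A, hA, hAcard⟩ := Finset.exists_subset_card_eq hNXcard
    obtain ⟨B, hB, hBcard⟩ := Finset.exists_subset_card_eq hNYcard
    have hd0 : (0:ℝ) < d := by exact_mod_cast (by omega : 0 < d)
    set lam : ℝ := (2 * k : ℝ) / d with hlam
    have hl1 : 1 ≤ lam := by
      rw [hlam, le_div_iff₀ hd0, one_mul]
      exact_mod_cast hkd.1
    have hAc : (A.card : ℝ) = lam * ((d:ℝ)/2) := by
      rw [hAcard, hlam]; field_simp
    have hBc : (B.card : ℝ) = lam * ((d:ℝ)/2) := by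
      rw [hBcard, hlam]; field_simp
    have hdense' := hdense lam hl1 A B hAc hBc
    have hpos : (0:ℝ) < ((E.filter (fun p => p.1 ∈ A ∧ p.2 ∈ B)).card : ℝ) := by
      have h1 : (1:ℝ) ≤ lam ^ 2 * 1 := by nlinarith
      linarith
    obtain ⟨p, hp⟩ : (E.filter (fun p => p.1 ∈ A ∧ p.2 ∈ B)).Nonempty := by
      rw [← Finset.card_pos]
      exact_mod_cast hpos
    rw [Finset.mem_filter] at hp
    obtain ⟨hpE, hpA, hpB⟩ := hp
    obtain ⟨x', y'⟩ := p
    simp only at hpA hpB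
    have hx'NX : x' ∈ NX := hA hpA
    have hy'NY : y' ∈ NY := hB hpB
    rw [hNX, Finset.mem_sdiff] at hx'NX
    rw [hNY, Finset.mem_erase, Finset.mem_sdiff] at hy'NY
    obtain ⟨hx'im, hx'cov⟩ := hx'NX
    obtain ⟨hy'ne, hy'im, hy'cov⟩ := hy'NY
    have he2H : (x', y'') ∈ H := by
      rw [Finset.mem_image] at hx'im
      obtain ⟨a, ha, ha1⟩ := hx'im
      rw [Finset.mem_filter] at ha
      have hae : a = (x', y'') := Prod.ext ha1 ha.2
      exact hae ▸ ha.1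
    have he1H : (x, y') ∈ H := by
      rw [Finset.mem_image] at hy'im
      obtain ⟨a, ha, ha2⟩ := hy'im
      rw [Finset.mem_filter] at ha
      have hae : a = (x, y') := Prod.ext ha.2 ha2
      exact hae ▸ ha.1
    have hpM : (x', y') ∉ M := fun hmem => hx'cov (Finset.mem_image_of_mem Prod.fst hmem)
    have he12 : ((x, y') : Fin n × Fin n) ≠ (x', y'') := by
      intro h
      exact hy'ne (congrArg Prod.snd h)
    set H2 : Finset (Fin n × Fin n) := (H.erase (x, y')).erase (x', y'') with hH2def
    set M2 : Finset (Fin n × Fin n) := insert (x', y') M with hM2def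
    have he2H1 : (x', y'') ∈ H.erase (x, y') := Finset.mem_erase.mpr ⟨Ne.symm he12, he2H⟩
    have hH2G : H2 ⊆ G := ((Finset.erase_subset _ _).trans (Finset.erase_subset _ _)).trans hHG
    have hM2E : M2 ⊆ E := Finset.insert_subset hpE hME
    have hM2card : M2.card = M.card + 1 := Finset.card_insert_of_notMem hpM
    have hHcard2 : 2 ≤ H.card := Finset.one_lt_card.mpr ⟨_, he1H, _, he2H, he12⟩
    have hH2card : H2.card + 2 = H.card := by
      rw [hH2def, Finset.card_erase_of_mem he2H1, Finset.card_erase_of_mem he1H]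
      omega
    have hM2match : IsBipMatching M2 := by
      intro e he f hf hef
      rw [hM2def, Finset.mem_insert] at he hf
      rcases he with rfl | he <;> rcases hf with rfl | hf
      · exact absurd rfl hef
      · exact ⟨fun h => hx'cov (Finset.mem_image.mpr ⟨f, hf, h.symm⟩),
          fun h => hy'cov (Finset.mem_image.mpr ⟨f, hf, h.symm⟩)⟩
      · exact ⟨fun h => hx'cov (Finset.mem_image.mpr ⟨e, he, h⟩),
          fun h => hy'cov (Finset.mem_image.mpr ⟨e, he, h⟩)⟩
      · exact hM e he f hf hef
    have hbx : 1 ≤ bdegX H x := Finset.card_pos.mpr ⟨(x, y'), Finset.mem_filter.mpr ⟨he1H, rfl⟩⟩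
    have hbx' : 1 ≤ bdegX H x' :=
      Finset.card_pos.mpr ⟨(x', y''), Finset.mem_filter.mpr ⟨he2H, rfl⟩⟩
    have hby' : 1 ≤ bdegY H y' :=
      Finset.card_pos.mpr ⟨(x, y'), Finset.mem_filter.mpr ⟨he1H, rfl⟩⟩
    have hby'' : 1 ≤ bdegY H y'' :=
      Finset.card_pos.mpr ⟨(x', y''), Finset.mem_filter.mpr ⟨he2H, rfl⟩⟩
    have hbxx : x = x' → 2 ≤ bdegX H x := by
      intro h
      refine Finset.one_lt_card.mpr ⟨(x, y'), Finset.mem_filter.mpr ⟨he1H, rfl⟩,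
        (x', y''), Finset.mem_filter.mpr ⟨he2H, h.symm⟩, he12⟩
    have hdx2 : ∀ z, d ≤ bdegX H2 z + bdegX M2 z := by
      intro z
      rw [hH2def, hM2def, bdegX_erase' _ _ _ he2H1 z, bdegX_erase' _ _ _ he1H z,
        bdegX_insert' _ _ _ hpM z]
      by_cases h2 : x' = z
      · by_cases h1 : x = z
        · rw [if_pos h1, if_pos h2, if_pos h2]
          have h5 : 2 ≤ bdegX H z := h1 ▸ hbxx (h1.trans h2.symm)
          have h6 := h1 ▸ hx
          omega
        · rw [if_neg h1, if_pos h2, if_pos h2]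
          have h5 : 1 ≤ bdegX H z := h2 ▸ hbx'
          have h6 := hdx z
          omega
      · by_cases h1 : x = z
        · rw [if_pos h1, if_neg h2, if_neg h2]
          have h5 : 1 ≤ bdegX H z := h1 ▸ hbx
          have h6 := h1 ▸ hx
          omega
        · rw [if_neg h1, if_neg h2, if_neg h2]
          exact hdx z
    have hdy2 : ∀ z, d ≤ bdegY H2 z + bdegY M2 z := by
      intro z
      rw [hH2def, hM2def, bdegY_erase' _ _ _ he2H1 z, bdegY_erase' _ _ _ he1H z,
        bdegY_insert' _ _ _ hpM z]
      by_cases h2 : y'' = z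
      · by_cases h1 : y' = z
        · exact absurd (h1.trans h2.symm) hy'ne
        · rw [if_neg h1, if_pos h2, if_neg h1]
          have h5 : 1 ≤ bdegY H z := h2 ▸ hby''
          have h6 := h2 ▸ hy
          omega
      · by_cases h1 : y' = z
        · rw [if_pos h1, if_neg h2, if_pos h1]
          have h5 : 1 ≤ bdegY H z := h1 ▸ hby'
          have h6 := hdy z
          omega
        · rw [if_neg h1, if_neg h2, if_neg h1]
          exact hdy z
    exact ih H2 M2 hH2G hM2E hM2match (by omega) (by omega) hdx2 hdy2

/-- Regularization using a disjoint dense graph: for `d > 2m`, a balanced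
bipartite graph `G` on `2n` vertices with `e(G) ≤ dn + m` and `δ(G) ≥ d`, together with an
edge-disjoint `(1, d/2)`-dense graph `E`, yields a subgraph `H ⊆ G` and a matching `M ⊆ E`
with at most `m` edges so that `H ∪ M` is `d`-regular. -/
theorem statement_15 :
    ∀ d m n : ℕ, 0 < d → 0 < m → 0 < n → 2 * m < d →
    ∀ G E : Finset (Fin n × Fin n),
      G.card ≤ d * n + m →
      (∀ x, d ≤ bdegX G x) → (∀ y, d ≤ bdegY G y) →
      Disjoint G E →
      BipDense E 1 ((d : ℝ) / 2) →
      ∃ H M : Finset (Fin n × Fin n),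
        H ⊆ G ∧ M ⊆ E ∧ IsBipMatching M ∧ M.card ≤ m ∧
        (∀ x, bdegX (H ∪ M) x = d) ∧ (∀ y, bdegY (H ∪ M) y = d) := by
  intro d m n hd hm hn hd2m G E hGcard hdx hdy hdis hdense
  have hdn : d * n ≤ G.card := by
    calc d * n = ∑ _x : Fin n, d := by simp [Finset.sum_const, Nat.mul_comm]
      _ ≤ ∑ x, bdegX G x := Finset.sum_le_sum (fun x _ => hdx x)
      _ = G.card := sum_bdegX G
  have hme : IsBipMatching (∅ : Finset (Fin n × Fin n)) := by
    intro e he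
    exact absurd he (Finset.notMem_empty e)
  have hb0x : ∀ x, bdegX (∅ : Finset (Fin n × Fin n)) x = 0 := by
    intro x; simp [bdegX]
  have hb0y : ∀ y, bdegY (∅ : Finset (Fin n × Fin n)) y = 0 := by
    intro y; simp [bdegY]
  exact key d m hd2m G E hdis hdense (G.card - d * n) G ∅ (subset_refl G)
    (Finset.empty_subset E) hme (by simp; omega) (by simp; omega)
    (fun x => by rw [hb0x x]; have := hdx x; omega)
    (fun y => by rw [hb0y y]; have := hdy y; omega)
end

section
/- Let γ, p > 0 and let H be a (γ, p, n)-typical graph. Then for all subsets A, B ⊆ V(H) with |B| ≥ γ^(−1)p^(−2), one has |e(A,B) − p·|A|·|B|| ≤ 2·|A|^(1/2)·|B|·γ^(1/2)·n^(1/2)·p, where e(A,B) denotes the number of ordered pairs (x, y) ∈ A × B such that xy is an edge of H. -/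
open Finset

/-- Discrepancy in typical graphs: if `H` is `(γ, p, n)`-typical (degrees
`(1±γ)pn`, codegrees `(1±γ)p²n` on `n` vertices) then for all vertex sets `A`, `B` with
`|B| ≥ γ⁻¹p⁻²` we have `|e(A,B) − p|A||B|| ≤ 2·√|A|·|B|·√γ·√n·p`, where `e(A,B)` counts
ordered pairs `(x,y) ∈ A × B` with `xy` an edge of `H`. -/
theorem statement_16 :
    ∀ (n : ℕ) (γ p : ℝ), 0 < γ → 0 < p →
    ∀ (H : SimpleGraph (Fin n)) [inst : DecidableRel H.Adj],
      (∀ v, (1 - γ) * (p * n) ≤ (H.degree v : ℝ) ∧ (H.degree v : ℝ) ≤ (1 + γ) * (p * n)) →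
      (∀ u v : Fin n, u ≠ v →
        (1 - γ) * (p ^ 2 * n) ≤ ((H.neighborFinset u ∩ H.neighborFinset v).card : ℝ) ∧
        ((H.neighborFinset u ∩ H.neighborFinset v).card : ℝ) ≤ (1 + γ) * (p ^ 2 * n)) →
      ∀ A B : Finset (Fin n), γ⁻¹ * (p ^ 2)⁻¹ ≤ (B.card : ℝ) →
        |(((A ×ˢ B).filter (fun q => H.Adj q.1 q.2)).card : ℝ) - p * A.card * B.card| ≤
          2 * Real.sqrt (A.card) * B.card * Real.sqrt γ * Real.sqrt n * p := by
  intro n γ p hγ hp H inst hdeg hcodeg A B hBcard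
  classical
  set b : ℝ := (B.card : ℝ) with hbdef
  have hb0 : 0 < b := lt_of_lt_of_le (by positivity) hBcard
  have hγpb : 1 ≤ γ * p ^ 2 * b := by
    have h := mul_le_mul_of_nonneg_left hBcard (le_of_lt (mul_pos hγ (pow_pos hp 2)))
    have he : γ * p ^ 2 * (γ⁻¹ * (p ^ 2)⁻¹) = 1 := by field_simp
    linarith [h, he.symm.le]
  -- neighborFinset x ∩ B as a filter
  have hNB : ∀ x : Fin n, H.neighborFinset x ∩ B = B.filter (fun y => H.Adj x y) := by
    intro x; ext y; simp [SimpleGraph.mem_neighborFinset, and_comm]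
  -- Lemma A: edge count as a sum over A
  have hA : (((A ×ˢ B).filter (fun q => H.Adj q.1 q.2)).card : ℕ)
      = ∑ x ∈ A, (H.neighborFinset x ∩ B).card := by
    rw [Finset.card_filter, Finset.sum_product]
    refine Finset.sum_congr rfl fun x _ => ?_
    rw [hNB, Finset.card_filter]
  -- Lemma B: double counting
  have hBsum : ∑ x : Fin n, (H.neighborFinset x ∩ B).card = ∑ y ∈ B, H.degree y := by
    have h1 : ∀ x : Fin n, (H.neighborFinset x ∩ B).card
        = ∑ y ∈ B, if H.Adj x y then 1 else 0 := by
      intro x; rw [hNB, Finset.card_filter]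
    simp_rw [h1]
    rw [Finset.sum_comm]
    refine Finset.sum_congr rfl fun y _ => ?_
    rw [SimpleGraph.degree, SimpleGraph.neighborFinset_eq_filter, Finset.card_filter]
    exact Finset.sum_congr rfl fun x _ => by simp [SimpleGraph.adj_comm]
  -- Lemma C: second moment as codegree sum
  have hCsum : ∑ x : Fin n, ((H.neighborFinset x ∩ B).card) ^ 2
      = ∑ y ∈ B, ∑ z ∈ B, (H.neighborFinset y ∩ H.neighborFinset z).card := by
    have h1 : ∀ x : Fin n, (H.neighborFinset x ∩ B).card
        = ∑ y ∈ B, if H.Adj x y then 1 else 0 := by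
      intro x; rw [hNB, Finset.card_filter]
    have h2 : ∀ x : Fin n, ((H.neighborFinset x ∩ B).card) ^ 2
        = ∑ y ∈ B, ∑ z ∈ B,
            ((if H.Adj x y then 1 else 0) * (if H.Adj x z then 1 else 0)) := by
      intro x; rw [h1, sq, Finset.sum_mul_sum]
    simp_rw [h2]
    rw [Finset.sum_comm]
    refine Finset.sum_congr rfl fun y _ => ?_
    rw [Finset.sum_comm]
    refine Finset.sum_congr rfl fun z _ => ?_
    have h3 : H.neighborFinset y ∩ H.neighborFinset z
        = Finset.univ.filter (fun x => H.Adj x y ∧ H.Adj x z) := by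
      ext x; simp [SimpleGraph.mem_neighborFinset, SimpleGraph.adj_comm]
    rw [h3, Finset.card_filter]
    refine Finset.sum_congr rfl fun x _ => ?_
    by_cases hxy : H.Adj x y <;> by_cases hxz : H.Adj x z <;> simp [hxy, hxz]
  -- the deviation function
  set f : Fin n → ℝ := fun x => ((H.neighborFinset x ∩ B).card : ℝ) - p * b with hfdef
  set S : ℝ := ∑ x : Fin n, f x ^ 2 with hSdef
  -- expand S
  have hSexp : S = (∑ y ∈ B, ∑ z ∈ B, ((H.neighborFinset y ∩ H.neighborFinset z).card : ℝ))
      - 2 * p * b * (∑ y ∈ B, (H.degree y : ℝ)) + n * (p * b) ^ 2 := by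
    have e0 : ∀ x : Fin n, f x ^ 2 = ((H.neighborFinset x ∩ B).card : ℝ) ^ 2
        - 2 * p * b * ((H.neighborFinset x ∩ B).card : ℝ) + (p * b) ^ 2 := by
      intro x; rw [hfdef]; ring
    have e1 : S = (∑ x : Fin n, ((H.neighborFinset x ∩ B).card : ℝ) ^ 2)
        - 2 * p * b * (∑ x : Fin n, ((H.neighborFinset x ∩ B).card : ℝ))
        + n * (p * b) ^ 2 := by
      rw [hSdef]
      rw [Finset.sum_congr rfl fun x _ => e0 x]
      rw [Finset.sum_add_distrib, Finset.sum_sub_distrib, ← Finset.mul_sum,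
        Finset.sum_const, Finset.card_univ, Fintype.card_fin, nsmul_eq_mul]
    rw [e1]
    congr 1
    congr 1
    · exact_mod_cast congrArg (Nat.cast : ℕ → ℝ) hCsum
    · congr 1
      exact_mod_cast congrArg (Nat.cast : ℕ → ℝ) hBsum
  -- bound the codegree sum
  have hdiag : ∀ y : Fin n, ((H.neighborFinset y ∩ H.neighborFinset y).card : ℝ) ≤ n := by
    intro y
    rw [Finset.inter_self]
    exact_mod_cast (Finset.card_le_univ _).trans_eq (by simp)
  have hcod : (∑ y ∈ B, ∑ z ∈ B, ((H.neighborFinset y ∩ H.neighborFinset z).card : ℝ))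
      ≤ b * n + (1 + γ) * (p ^ 2 * n) * b ^ 2 := by
    have hterm : ∀ y ∈ B, (∑ z ∈ B, ((H.neighborFinset y ∩ H.neighborFinset z).card : ℝ))
        ≤ n + (1 + γ) * (p ^ 2 * n) * b := by
      intro y hy
      rw [← Finset.sum_erase_add _ _ hy]
      have h1 : (∑ z ∈ B.erase y, ((H.neighborFinset y ∩ H.neighborFinset z).card : ℝ))
          ≤ (1 + γ) * (p ^ 2 * n) * b := by
        calc (∑ z ∈ B.erase y, ((H.neighborFinset y ∩ H.neighborFinset z).card : ℝ))
            ≤ ∑ _z ∈ B.erase y, (1 + γ) * (p ^ 2 * n) := by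
              refine Finset.sum_le_sum fun z hz => ?_
              exact (hcodeg y z (Finset.ne_of_mem_erase hz).symm).2
          _ = (B.erase y).card * ((1 + γ) * (p ^ 2 * n)) := by
              rw [Finset.sum_const, nsmul_eq_mul]
          _ ≤ b * ((1 + γ) * (p ^ 2 * n)) := by
              have h2 : ((B.erase y).card : ℝ) ≤ b :=
                Nat.cast_le.mpr (Finset.card_le_card (Finset.erase_subset _ _))
              have h3 : (0:ℝ) ≤ (1 + γ) * (p ^ 2 * n) := by positivity
              exact mul_le_mul_of_nonneg_right h2 h3
          _ = (1 + γ) * (p ^ 2 * n) * b := by ring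
      linarith [hdiag y]
    calc (∑ y ∈ B, ∑ z ∈ B, ((H.neighborFinset y ∩ H.neighborFinset z).card : ℝ))
        ≤ ∑ _y ∈ B, ((n : ℝ) + (1 + γ) * (p ^ 2 * n) * b) := Finset.sum_le_sum hterm
      _ = b * ((n : ℝ) + (1 + γ) * (p ^ 2 * n) * b) := by
          rw [Finset.sum_const, nsmul_eq_mul]
      _ = b * n + (1 + γ) * (p ^ 2 * n) * b ^ 2 := by ring
  -- bound the degree sum from below
  have hdegsum : b * ((1 - γ) * (p * n)) ≤ ∑ y ∈ B, (H.degree y : ℝ) := by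
    calc b * ((1 - γ) * (p * n)) = ∑ _y ∈ B, (1 - γ) * (p * n) := by
          rw [Finset.sum_const, nsmul_eq_mul]
      _ ≤ ∑ y ∈ B, (H.degree y : ℝ) := Finset.sum_le_sum fun y _ => (hdeg y).1
  -- bound S
  have hSle : S ≤ 4 * γ * p ^ 2 * n * b ^ 2 := by
    have hbn : b * n ≤ γ * p ^ 2 * n * b ^ 2 := by
      have h := mul_le_mul_of_nonneg_left hγpb
        (by positivity : (0:ℝ) ≤ b * (n : ℝ))
      nlinarith [h]
    nlinarith [hSexp, hcod, hdegsum, mul_le_mul_of_nonneg_left hdegsum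
      (by positivity : (0:ℝ) ≤ 2 * p * b)]
  have hS0 : 0 ≤ S := Finset.sum_nonneg fun x _ => sq_nonneg _
  -- Cauchy-Schwarz
  have hCS : (∑ x ∈ A, f x) ^ 2 ≤ (A.card : ℝ) * S := by
    calc (∑ x ∈ A, f x) ^ 2 ≤ (A.card : ℝ) * ∑ x ∈ A, f x ^ 2 :=
          sq_sum_le_card_mul_sum_sq
      _ ≤ (A.card : ℝ) * S := by
          refine mul_le_mul_of_nonneg_left ?_ (by positivity)
          exact Finset.sum_le_sum_of_subset_of_nonneg (Finset.subset_univ _)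
            (fun x _ _ => sq_nonneg _)
  -- identify the LHS
  have hLHS : (((A ×ˢ B).filter (fun q => H.Adj q.1 q.2)).card : ℝ) - p * A.card * B.card
      = ∑ x ∈ A, f x := by
    have : (((A ×ˢ B).filter (fun q => H.Adj q.1 q.2)).card : ℝ)
        = ∑ x ∈ A, ((H.neighborFinset x ∩ B).card : ℝ) := by
      exact_mod_cast congrArg (Nat.cast : ℕ → ℝ) hA
    rw [this, hfdef]
    rw [Finset.sum_sub_distrib, Finset.sum_const, nsmul_eq_mul]
    ring
  rw [hLHS]
  -- finish via square comparison
  set R : ℝ := 2 * Real.sqrt (A.card) * b * Real.sqrt γ * Real.sqrt n * p with hRdef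
  have hR0 : 0 ≤ R := by positivity
  have hR2 : R ^ 2 = 4 * γ * p ^ 2 * n * b ^ 2 * A.card := by
    rw [hRdef]
    have h1 : Real.sqrt (A.card) ^ 2 = (A.card : ℝ) := Real.sq_sqrt (by positivity)
    have h2 : Real.sqrt γ ^ 2 = γ := Real.sq_sqrt hγ.le
    have h3 : Real.sqrt (n : ℝ) ^ 2 = (n : ℝ) := Real.sq_sqrt (by positivity)
    calc (2 * Real.sqrt (A.card) * b * Real.sqrt γ * Real.sqrt n * p) ^ 2
        = 4 * (Real.sqrt γ ^ 2) * p ^ 2 * (Real.sqrt (n:ℝ) ^ 2) * b ^ 2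
          * (Real.sqrt (A.card) ^ 2) := by ring
      _ = 4 * γ * p ^ 2 * n * b ^ 2 * A.card := by rw [h1, h2, h3]
  have hfinal : (∑ x ∈ A, f x) ^ 2 ≤ R ^ 2 := by
    rw [hR2]
    calc (∑ x ∈ A, f x) ^ 2 ≤ (A.card : ℝ) * S := hCS
      _ ≤ (A.card : ℝ) * (4 * γ * p ^ 2 * n * b ^ 2) :=
          mul_le_mul_of_nonneg_left hSle (by positivity)
      _ = 4 * γ * p ^ 2 * n * b ^ 2 * A.card := by ring
  have h := Real.sqrt_le_sqrt hfinal
  rwa [Real.sqrt_sq_eq_abs, Real.sqrt_sq hR0] at h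
end
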